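/- arXiv:1311.4759 — 12 statements merged into one kernel-verified Lean document; each statement's English description precedes it below -/
import Mathlib

section
/- For the single-sink capacitated k-facility location instance with zero opening costs and per-unit costs c_i = 1 - 1/s_i (where each s_i > 1), the optimal value Z satisfies Z ≤ d - k if and only if there exists a subset I ⊆ F with |I| = k and ∑_{i∈I} s_i = d. -/
open scoped Classical

/-- Single-sink CKFL with zero opening costs and c_i = 1 - 1/s_i (s_i > 1):
the optimal value is ≤ d - k iff there is a k-subset of facilities whose
capacities sum exactly to d. -/
theorem stmt_0 {ι : Type*} [Fintype ι] (s : ι → ℕ) (d k : ℕ)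
    (hs : ∀ i, 1 < s i) :
    (∃ (Y : Finset ι) (x : ι → ℝ),
        Y.card ≤ k ∧
        (∀ i, 0 ≤ x i) ∧
        (∀ i, x i ≤ if i ∈ Y then (s i : ℝ) else 0) ∧
        (∑ i, x i) = d ∧
        (∑ i, (1 - 1 / (s i : ℝ)) * x i) ≤ (d : ℝ) - k) ↔
      ∃ I : Finset ι, I.card = k ∧ (∑ i ∈ I, s i) = d := by
  have hs0 : ∀ i, (0:ℝ) < (s i : ℝ) := fun i => by
    exact_mod_cast Nat.lt_of_lt_of_le Nat.zero_lt_one (le_of_lt (hs i))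
  constructor
  · rintro ⟨Y, x, hcard, hx0, hxle, hsum, hcost⟩
    -- rewrite cost
    have hterm : ∀ i, (1 - 1 / (s i : ℝ)) * x i = x i - x i / (s i : ℝ) := by
      intro i; ring
    have hcost' : (∑ i, x i) - (∑ i, x i / (s i : ℝ)) ≤ (d:ℝ) - k := by
      rw [← Finset.sum_sub_distrib]
      simpa only [hterm] using hcost
    rw [hsum] at hcost'
    have hk : (k:ℝ) ≤ ∑ i, x i / (s i : ℝ) := by linarith
    have hxzero : ∀ i ∉ Y, x i = 0 := by
      intro i hi
      have := hxle i
      rw [if_neg hi] at this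
      exact le_antisymm this (hx0 i)
    have hub : ∀ i, x i / (s i : ℝ) ≤ (if i ∈ Y then (1:ℝ) else 0) := by
      intro i
      by_cases hi : i ∈ Y
      · rw [if_pos hi]
        rw [div_le_one (hs0 i)]
        have := hxle i; rwa [if_pos hi] at this
      · rw [if_neg hi, hxzero i hi, zero_div]
    have hsumub : (∑ i, x i / (s i : ℝ)) ≤ (Y.card : ℝ) := by
      calc (∑ i, x i / (s i : ℝ)) ≤ ∑ i, (if i ∈ Y then (1:ℝ) else 0) :=
            Finset.sum_le_sum (fun i _ => hub i)
        _ = (Y.card : ℝ) := by simp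
    have hYk : Y.card = k := by
      have h1 : (k:ℝ) ≤ (Y.card : ℝ) := le_trans hk hsumub
      have h2 : (Y.card : ℝ) ≤ (k : ℝ) := by exact_mod_cast hcard
      exact_mod_cast le_antisymm h2 h1
    -- equality in the sum
    have heq : (∑ i, ((if i ∈ Y then (1:ℝ) else 0) - x i / (s i : ℝ))) = 0 := by
      rw [Finset.sum_sub_distrib]
      have : (∑ i, (if i ∈ Y then (1:ℝ) else 0)) = (k:ℝ) := by
        simp [hYk]
      rw [this]
      have h2 : (∑ i, x i / (s i : ℝ)) ≤ (k:ℝ) := by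
        rw [← hYk] at *; exact_mod_cast hsumub
      linarith
    have hall : ∀ i ∈ Finset.univ (α := ι),
        ((if i ∈ Y then (1:ℝ) else 0) - x i / (s i : ℝ)) = 0 := by
      refine (Finset.sum_eq_zero_iff_of_nonneg ?_).mp heq
      intro i _
      have := hub i; linarith
    have hxe : ∀ i ∈ Y, x i = (s i : ℝ) := by
      intro i hi
      have h := hall i (Finset.mem_univ i)
      rw [if_pos hi] at h
      have h1 : x i / (s i : ℝ) = 1 := by linarith
      rwa [div_eq_one_iff_eq (ne_of_gt (hs0 i))] at h1
    refine ⟨Y, hYk, ?_⟩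
    have hcast : (∑ i ∈ Y, (s i : ℝ)) = (d : ℝ) := by
      calc (∑ i ∈ Y, (s i : ℝ)) = ∑ i, (if i ∈ Y then (s i : ℝ) else 0) := by
            rw [Finset.sum_ite_mem, Finset.univ_inter]
        _ = ∑ i, x i := Finset.sum_congr rfl (fun i _ => by
            by_cases hi : i ∈ Y
            · simp [hi, hxe i hi]
            · simp [hi, hxzero i hi])
        _ = (d : ℝ) := hsum
    exact_mod_cast hcast
  · rintro ⟨I, hIc, hIs⟩
    refine ⟨I, fun i => if i ∈ I then (s i : ℝ) else 0, le_of_eq hIc,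
      fun i => ?_, fun i => le_of_eq rfl, ?_, ?_⟩
    · dsimp only
      by_cases hi : i ∈ I
      · rw [if_pos hi]; exact le_of_lt (hs0 i)
      · rw [if_neg hi]
    · rw [Finset.sum_ite_mem, Finset.univ_inter]
      exact_mod_cast congrArg (Nat.cast (R := ℝ)) hIs
    · have hterm2 : ∀ i, (1 - 1 / (s i : ℝ)) * (if i ∈ I then (s i : ℝ) else 0)
          = (if i ∈ I then (s i : ℝ) - 1 else 0) := by
        intro i
        by_cases hi : i ∈ I
        · rw [if_pos hi, if_pos hi]
          have hne : (s i : ℝ) ≠ 0 := ne_of_gt (hs0 i)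
          field_simp
        · rw [if_neg hi, if_neg hi, mul_zero]
      have hIsℝ : (∑ i ∈ I, (s i : ℝ)) = (d : ℝ) := by exact_mod_cast hIs
      have : (∑ i, (1 - 1 / (s i : ℝ)) * (if i ∈ I then (s i : ℝ) else 0))
          = (d : ℝ) - k := by
        calc (∑ i, (1 - 1 / (s i : ℝ)) * (if i ∈ I then (s i : ℝ) else 0))
            = ∑ i, (if i ∈ I then (s i : ℝ) - 1 else 0) :=
              Finset.sum_congr rfl (fun i _ => hterm2 i)
          _ = ∑ i ∈ I, ((s i : ℝ) - 1) := by
              rw [Finset.sum_ite_mem, Finset.univ_inter]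
          _ = (d : ℝ) - k := by
              rw [Finset.sum_sub_distrib, hIsℝ]
              simp [hIc]
      exact le_of_eq this
end

section
/- In the instance with four facilities having capacities (s, s, M·s, s+1), zero opening costs, per-unit costs (0, 0, 100, 1), demand d = 2s+1, and k = 2, the optimal integer value equals s+1 while the optimal LP-relaxation value equals 100M/(M−1); hence the integrality gap exceeds (s+1)/200 and is unbounded over instances (for M ≫ s ≫ 100). -/
set_option maxHeartbeats 2000000 in
/-- The concrete 4-facility instance: capacities (s, s, Ms, s+1), zero opening
costs, unit costs (0,0,100,1), demand 2s+1, k = 2, with M > s > 100.  The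
integer optimum is s+1, the LP optimum is 100M/(M-1), hence the integrality
gap exceeds (s+1)/200 (and so is unbounded over instances). -/
theorem stmt_3 (s M : ℕ) (hs : 100 < s) (hM : s < M) :
    let cap : Fin 4 → ℝ := ![s, s, M * s, s + 1]
    let c : Fin 4 → ℝ := ![0, 0, 100, 1]
    let d : ℝ := 2 * s + 1
    IsLeast {v : ℝ | ∃ (x y : Fin 4 → ℝ),
        (∀ i, y i = 0 ∨ y i = 1) ∧ (∑ i, y i) ≤ 2 ∧
        (∀ i, 0 ≤ x i) ∧ (∀ i, x i ≤ cap i * y i) ∧ (∑ i, x i) = d ∧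
        v = ∑ i, c i * x i} ((s : ℝ) + 1) ∧
    IsLeast {v : ℝ | ∃ (x y : Fin 4 → ℝ),
        (∀ i, 0 ≤ y i ∧ y i ≤ 1) ∧ (∑ i, y i) ≤ 2 ∧
        (∀ i, 0 ≤ x i) ∧ (∀ i, x i ≤ cap i * y i) ∧ (∑ i, x i) = d ∧
        v = ∑ i, c i * x i} (100 * M / (M - 1)) ∧
    ((s : ℝ) + 1) / (100 * M / (M - 1)) > ((s : ℝ) + 1) / 200 := by
  intro cap c d
  have hs' : (101:ℝ) ≤ (s:ℝ) := by exact_mod_cast hs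
  have hM' : (s:ℝ) + 1 ≤ (M:ℝ) := by exact_mod_cast hM
  have hM1 : (0:ℝ) < (M:ℝ) - 1 := by linarith
  have hM1' : ((M:ℝ) - 1) ≠ 0 := ne_of_gt hM1
  have hspos : (0:ℝ) < (s:ℝ) := by linarith
  have hsne : (s:ℝ) ≠ 0 := ne_of_gt hspos
  refine ⟨⟨?_, ?_⟩, ⟨?_, ?_⟩, ?_⟩
  · -- integer membership
    refine ⟨![(s:ℝ), 0, 0, (s:ℝ)+1], ![1, 0, 0, 1], ?_, ?_, ?_, ?_, ?_, ?_⟩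
    · intro i; fin_cases i <;> simp
    · simp [Fin.sum_univ_four]; norm_num
    · intro i; fin_cases i <;> simp <;> linarith
    · intro i; fin_cases i <;> simp [cap]
    · simp [Fin.sum_univ_four, d]; ring
    · simp [Fin.sum_univ_four, c]
  · -- integer lower bound
    rintro v ⟨x, y, hy, hysum, hx0, hxc, hxd, hv⟩
    simp only [Fin.sum_univ_four] at hysum hxd hv
    simp only [c, Matrix.cons_val_zero, Matrix.cons_val_one, Matrix.head_cons,
      Matrix.cons_val_two, Matrix.tail_cons, Matrix.cons_val_three] at hv
    have hc0 := hxc 0; have hc1 := hxc 1; have hc2 := hxc 2; have hc3 := hxc 3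
    simp only [cap, Matrix.cons_val_zero, Matrix.cons_val_one, Matrix.head_cons,
      Matrix.cons_val_two, Matrix.tail_cons, Matrix.cons_val_three] at hc0 hc1 hc2 hc3
    have hd' : x 0 + x 1 + x 2 + x 3 = 2*(s:ℝ)+1 := hxd
    have h00 := hx0 0; have h01 := hx0 1; have h02 := hx0 2; have h03 := hx0 3
    rcases hy 0 with h0|h0 <;> rcases hy 1 with h1|h1 <;> rcases hy 2 with h2|h2 <;>
      rcases hy 3 with h3|h3 <;>
      rw [h0] at hc0 <;> rw [h1] at hc1 <;> rw [h2] at hc2 <;> rw [h3] at hc3 <;>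
      rw [h0, h1, h2, h3] at hysum <;>
      linarith [hc0, hc1, hc2, hc3, h00, h01, h02, h03, hd', hysum, hv, hs', hM']
  · -- LP membership
    have hi1 : ((M:ℝ)-1)⁻¹ ≤ 1 := by
      rw [inv_le_one_iff₀]; right; linarith
    have hi0 : (0:ℝ) ≤ ((M:ℝ)-1)⁻¹ := by positivity
    have hA : ((M:ℝ)-1)⁻¹ * (s:ℝ)⁻¹ ≤ 1 := by
      apply mul_le_one₀ hi1 (by positivity)
      rw [inv_le_one_iff₀]; right; linarith
    have hA0 : (0:ℝ) ≤ ((M:ℝ)-1)⁻¹ * (s:ℝ)⁻¹ := by positivity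
    have hss : (s:ℝ) * (((M:ℝ)-1)⁻¹ * (s:ℝ)⁻¹) = ((M:ℝ)-1)⁻¹ := by
      field_simp
    refine ⟨![(s:ℝ), (s:ℝ) - 1/((M:ℝ)-1), (M:ℝ)/((M:ℝ)-1), 0],
        ![1, 1 - 1/((s:ℝ)*((M:ℝ)-1)), 1/((s:ℝ)*((M:ℝ)-1)), 0], ?_, ?_, ?_, ?_, ?_, ?_⟩
    · intro i; fin_cases i <;> simp <;>
        exact ⟨by linarith, by linarith⟩
    · simp [Fin.sum_univ_four]
      linarith
    · intro i; fin_cases i <;> simp <;>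
        first
        | positivity
        | linarith
    · intro i; fin_cases i <;> simp [cap]
      · linarith [hss]
      · have h2 : (M:ℝ)*((s:ℝ) * (((M:ℝ)-1)⁻¹ * (s:ℝ)⁻¹)) = (M:ℝ)*((M:ℝ)-1)⁻¹ := by
          rw [hss]
        rw [div_eq_mul_inv]
        nlinarith [h2]
    · simp only [Fin.sum_univ_four, Matrix.cons_val_zero, Matrix.cons_val_one,
        Matrix.head_cons, Matrix.cons_val_two, Matrix.tail_cons, Matrix.cons_val_three, d]
      field_simp
      ring
    · simp only [Fin.sum_univ_four, Matrix.cons_val_zero, Matrix.cons_val_one,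
        Matrix.head_cons, Matrix.cons_val_two, Matrix.tail_cons, Matrix.cons_val_three, c]
      ring
  · -- LP lower bound
    rintro v ⟨x, y, hy, hysum, hx0, hxc, hxd, hv⟩
    simp only [Fin.sum_univ_four] at hysum hxd hv
    simp only [c, Matrix.cons_val_zero, Matrix.cons_val_one, Matrix.head_cons,
      Matrix.cons_val_two, Matrix.tail_cons, Matrix.cons_val_three] at hv
    have hc0 := hxc 0; have hc1 := hxc 1; have hc2 := hxc 2; have hc3 := hxc 3
    simp only [cap, Matrix.cons_val_zero, Matrix.cons_val_one, Matrix.head_cons,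
      Matrix.cons_val_two, Matrix.tail_cons, Matrix.cons_val_three] at hc0 hc1 hc2 hc3
    have hy0 := hy 0; have hy1 := hy 1; have hy2 := hy 2; have hy3 := hy 3
    -- scaled dual multipliers: α' = 100M, β' = (100M, 100M, 100, 99M+1), λ' = 100Ms
    have k1 : 100*(M:ℝ)*(x 0) ≤ 100*(M:ℝ)*((s:ℝ)*y 0) := by
      apply mul_le_mul_of_nonneg_left hc0; linarith
    have k2 : 100*(M:ℝ)*(x 1) ≤ 100*(M:ℝ)*((s:ℝ)*y 1) := by
      apply mul_le_mul_of_nonneg_left hc1; linarith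
    have k3 : 100*(x 2) ≤ 100*((M:ℝ)*(s:ℝ)*y 2) := by
      apply mul_le_mul_of_nonneg_left hc2; norm_num
    have k4 : (99*(M:ℝ)+1)*(x 3) ≤ (99*(M:ℝ)+1)*(((s:ℝ)+1)*y 3) := by
      apply mul_le_mul_of_nonneg_left hc3; linarith
    have hMs : (0:ℝ) ≤ (M:ℝ)*((s:ℝ)-101) :=
      mul_nonneg (by linarith) (by linarith)
    have kcap : (99*(M:ℝ)+1)*((s:ℝ)+1) ≤ 100*(M:ℝ)*(s:ℝ) := by nlinarith [hMs]
    have k5 : (99*(M:ℝ)+1)*(((s:ℝ)+1)*y 3) ≤ 100*(M:ℝ)*(s:ℝ)*y 3 := by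
      rw [← mul_assoc]
      exact mul_le_mul_of_nonneg_right kcap (hy3.1)
    have k6 : 100*(M:ℝ)*(s:ℝ)*(y 0 + y 1 + y 2 + y 3) ≤ 100*(M:ℝ)*(s:ℝ)*2 := by
      apply mul_le_mul_of_nonneg_left hysum; positivity
    have k7 : 100*(M:ℝ)*(x 0 + x 1 + x 2 + x 3) = 100*(M:ℝ)*(2*(s:ℝ)+1) := by
      rw [hxd]
    subst hv
    have key : 100*(M:ℝ) ≤ ((M:ℝ)-1)*(0 * x 0 + 0 * x 1 + 100 * x 2 + 1 * x 3) := by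
      linarith [k1, k2, k3, k4, k5, k6, k7]
    rw [div_le_iff₀ hM1]; linarith
  · -- gap
    have h1 : 100*(M:ℝ)/((M:ℝ)-1) < 200 := by
      rw [div_lt_iff₀ hM1]; linarith
    have h2 : (0:ℝ) < 100*(M:ℝ)/((M:ℝ)-1) := div_pos (by linarith) hM1
    exact div_lt_div_of_pos_left (by linarith) h2 h1
end

section
/- Let P be the polytope of points (x, y) ∈ ℝ^F × ℝ^F satisfying ∑_i x_i = d, ∑_i y_i = k, 0 ≤ x_i ≤ s_i y_i, and 0 ≤ y_i ≤ 1 for all i ∈ F, where k is an integer. Then at every vertex (x, y) of P, either y is integral, or y has exactly two non-integer components and for every i ∈ F one has x_i = 0 or x_i = s_i y_i. -/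
open scoped Classical

open Filter

lemma key_vertex {ι : Type*} [Fintype ι] (s : ι → ℝ) (d : ℝ) (k : ℤ)
    (P : Set ((ι → ℝ) × (ι → ℝ)))
    (hP : P = {p | (∑ i, p.1 i) = d ∧ (∑ i, p.2 i) = (k : ℝ) ∧
      (∀ i, 0 ≤ p.1 i ∧ p.1 i ≤ s i * p.2 i) ∧
      (∀ i, 0 ≤ p.2 i ∧ p.2 i ≤ 1)})
    (x y u v : ι → ℝ) (hvx : (x, y) ∈ P.extremePoints ℝ)
    (hu : (∑ i, u i) = 0) (hv : (∑ i, v i) = 0)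
    (K1 : ∀ i, u i = 0 ∨ 0 < x i)
    (K2 : ∀ i, u i = s i * v i ∨ x i < s i * y i)
    (K3 : ∀ i, v i = 0 ∨ (0 < y i ∧ y i < 1)) : v = 0 := by
  rw [mem_extremePoints] at hvx
  obtain ⟨hz, hext⟩ := hvx
  rw [hP] at hz
  obtain ⟨hx1', hy1', hxc', hyc'⟩ := hz
  have hx1 : (∑ i, x i) = d := hx1'
  have hy1 : (∑ i, y i) = (k:ℝ) := hy1'
  have hxc : ∀ i, 0 ≤ x i ∧ x i ≤ s i * y i := hxc'
  have hyc : ∀ i, 0 ≤ y i ∧ y i ≤ 1 := hyc'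
  -- eventual membership
  have hQ : ∀ᶠ t in nhds (0:ℝ),
      ((fun i => x i + t * u i, fun i => y i + t * v i) : (ι → ℝ) × (ι → ℝ)) ∈ P := by
    rw [hP]
    have h1 : ∀ᶠ t in nhds (0:ℝ), ∀ i,
        (0 ≤ x i + t * u i ∧ x i + t * u i ≤ s i * (y i + t * v i)) := by
      rw [eventually_all]
      intro i
      have e1 : ∀ᶠ t in nhds (0:ℝ), 0 ≤ x i + t * u i := by
        rcases K1 i with h | h
        · filter_upwards with t; simp [h]; exact (hxc i).1
        · have hc : Continuous fun t : ℝ => x i + t * u i :=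
            continuous_const.add (continuous_id.mul continuous_const)
          have := (hc.tendsto 0).eventually_const_lt (by simpa using h)
          filter_upwards [this] with t ht using ht.le
      have e2 : ∀ᶠ t in nhds (0:ℝ), x i + t * u i ≤ s i * (y i + t * v i) := by
        rcases K2 i with h | h
        · filter_upwards with t
          have h2 := (hxc i).2
          rw [h]; nlinarith [h2]
        · have hc : Continuous fun t : ℝ => s i * (y i + t * v i) - (x i + t * u i) :=
            (continuous_const.mul (continuous_const.add (continuous_id.mul continuous_const))).sub
              (continuous_const.add (continuous_id.mul continuous_const))
          have := (hc.tendsto 0).eventually_const_lt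
            (show (0:ℝ) < s i * (y i + 0 * v i) - (x i + 0 * u i) by push_cast; nlinarith)
          filter_upwards [this] with t ht; linarith
      filter_upwards [e1, e2] with t h1 h2 using ⟨h1, h2⟩
    have h2 : ∀ᶠ t in nhds (0:ℝ), ∀ i,
        (0 ≤ y i + t * v i ∧ y i + t * v i ≤ 1) := by
      rw [eventually_all]
      intro i
      rcases K3 i with h | h
      · filter_upwards with t; simp [h]; exact hyc i
      · have hc : Continuous fun t : ℝ => y i + t * v i :=
          continuous_const.add (continuous_id.mul continuous_const)
        have hlt := (hc.tendsto 0).eventually_const_lt (by simpa using h.1)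
        have hgt := (hc.tendsto 0).eventually_lt_const (by simpa using h.2)
        filter_upwards [hlt, hgt] with t h1 h2 using ⟨h1.le, h2.le⟩
    filter_upwards [h1, h2] with t ht1 ht2
    refine ⟨?_, ?_, ht1, ht2⟩
    · simp [Finset.sum_add_distrib, hx1, ← Finset.mul_sum, hu]
    · simp [Finset.sum_add_distrib, hy1, ← Finset.mul_sum, hv]
  have hQn : ∀ᶠ t in nhds (0:ℝ),
      ((fun i => x i + (-t) * u i, fun i => y i + (-t) * v i) : (ι → ℝ) × (ι → ℝ)) ∈ P := by
    have hneg : Filter.Tendsto (fun t : ℝ => -t) (nhds 0) (nhds 0) := by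
      simpa using (continuous_neg.tendsto (0:ℝ))
    exact hneg.eventually hQ
  have hboth : ∀ᶠ t in nhdsWithin (0:ℝ) {(0:ℝ)}ᶜ,
      (((fun i => x i + t * u i, fun i => y i + t * v i) : (ι → ℝ) × (ι → ℝ)) ∈ P ∧
       ((fun i => x i + (-t) * u i, fun i => y i + (-t) * v i) : (ι → ℝ) × (ι → ℝ)) ∈ P) :=
    (hQ.and hQn).filter_mono nhdsWithin_le_nhds
  obtain ⟨t, ⟨hQt, hQnt⟩, ht0⟩ := (hboth.and eventually_mem_nhdsWithin).exists
  have ht0 : t ≠ 0 := by simpa using ht0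
  -- midpoint argument
  set p : (ι → ℝ) × (ι → ℝ) := (fun i => x i + (-t) * u i, fun i => y i + (-t) * v i)
  set q : (ι → ℝ) × (ι → ℝ) := (fun i => x i + t * u i, fun i => y i + t * v i)
  have hseg : (x, y) ∈ openSegment ℝ p q := by
    refine ⟨1/2, 1/2, by norm_num, by norm_num, by norm_num, ?_⟩
    simp only [p, q, Prod.smul_mk, Prod.mk_add_mk, Prod.mk.injEq]
    constructor <;> funext i <;> simp [Pi.smul_apply, smul_eq_mul] <;> ring
  have := hext p hQnt q hQt hseg
  have hq := this.2
  funext i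
  have : q.2 i = y i := by rw [this.2]
  simp only [q] at this
  have : t * v i = 0 := by linarith
  simpa using (mul_eq_zero.mp this).resolve_left ht0

lemma exists_int_sum {ι : Type*} (F : Finset ι) (f : ι → ℝ)
    (h : ∀ i ∈ F, ∃ n : ℤ, f i = n) : ∃ N : ℤ, (∑ i ∈ F, f i) = (N : ℝ) := by
  classical
  choose g hg using h
  refine ⟨∑ i ∈ F.attach, g i.1 i.2, ?_⟩
  rw [← Finset.sum_attach F f]
  push_cast
  exact Finset.sum_congr rfl fun i _ => hg i.1 i.2

lemma aux_K {ι : Type*} (s x y u v : ι → ℝ) (hs : ∀ i, 0 ≤ s i)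
    (hxc : ∀ i, 0 ≤ x i ∧ x i ≤ s i * y i)
    (hsupp : ∀ m, v m ≠ 0 → 0 < y m)
    (E : Set ι)
    (hE : ∀ m ∈ E, 0 < x m ∧ x m < s m * y m)
    (hu : ∀ m, m ∉ E → u m = (if x m = s m * y m then s m else 0) * v m) :
    (∀ i, u i = 0 ∨ 0 < x i) ∧ (∀ i, u i = s i * v i ∨ x i < s i * y i) := by
  constructor
  · intro i
    by_cases hiE : i ∈ E
    · exact Or.inr (hE i hiE).1
    rw [hu i hiE]
    by_cases hc : x i = s i * y i
    · rw [if_pos hc]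
      by_cases h0 : s i * v i = 0
      · exact Or.inl h0
      · right
        have hsne : s i ≠ 0 := fun h => h0 (by simp [h])
        have hvne : v i ≠ 0 := fun h => h0 (by simp [h])
        have := hsupp i hvne
        rw [hc]
        exact mul_pos (lt_of_le_of_ne (hs i) (Ne.symm hsne)) this
    · rw [if_neg hc, zero_mul]; exact Or.inl rfl
  · intro i
    by_cases hiE : i ∈ E
    · exact Or.inr (hE i hiE).2
    rw [hu i hiE]
    by_cases hc : x i = s i * y i
    · rw [if_pos hc]; exact Or.inl rfl
    · exact Or.inr (lt_of_le_of_ne (hxc i).2 hc)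

/-- Structure of vertices of the single-sink LP polytope: at any extreme point,
either y is integral, or y has exactly two non-integer components and every
x_i is 0 or s_i y_i. -/
theorem stmt_4 {ι : Type*} [Fintype ι] (s : ι → ℝ) (d : ℝ) (k : ℤ)
    (hs : ∀ i, 0 ≤ s i) (hd : 0 ≤ d)
    (P : Set ((ι → ℝ) × (ι → ℝ)))
    (hP : P = {p | (∑ i, p.1 i) = d ∧ (∑ i, p.2 i) = (k : ℝ) ∧
      (∀ i, 0 ≤ p.1 i ∧ p.1 i ≤ s i * p.2 i) ∧
      (∀ i, 0 ≤ p.2 i ∧ p.2 i ≤ 1)})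
    (x y : ι → ℝ) (hvx : (x, y) ∈ P.extremePoints ℝ) :
    (∀ i, ∃ n : ℤ, y i = n) ∨
      ((Finset.univ.filter fun i => ¬∃ n : ℤ, y i = n).card = 2 ∧
        ∀ i, x i = 0 ∨ x i = s i * y i) := by
  by_cases hint : ∀ i, ∃ n : ℤ, y i = n
  · exact Or.inl hint
  right
  have hmem := (mem_extremePoints.mp hvx).1
  rw [hP] at hmem
  obtain ⟨hx1', hy1', hxc', hyc'⟩ := hmem
  have hy1 : (∑ i, y i) = (k : ℝ) := hy1'
  have hxc : ∀ i, 0 ≤ x i ∧ x i ≤ s i * y i := hxc'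
  have hyc : ∀ i, 0 ≤ y i ∧ y i ≤ 1 := hyc'
  set T : Finset ι := Finset.univ.filter fun i => ¬∃ n : ℤ, y i = n with hT
  have hfr : ∀ i ∈ T, ¬∃ n : ℤ, y i = n := fun i hi => (Finset.mem_filter.mp hi).2
  have hfr01 : ∀ i ∈ T, 0 < y i ∧ y i < 1 := by
    intro i hi
    have h := hfr i hi
    refine ⟨lt_of_le_of_ne (hyc i).1 (fun h0 => h ⟨0, by simp [← h0]⟩),
      lt_of_le_of_ne (hyc i).2 (fun h1 => h ⟨1, by simp [h1]⟩)⟩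
  have hT2 : 2 ≤ T.card := by
    by_contra hlt
    push_neg at hlt
    obtain ⟨i0, hi0⟩ := not_forall.mp hint
    have hi0T : i0 ∈ T := Finset.mem_filter.mpr ⟨Finset.mem_univ _, hi0⟩
    have hone : ∀ j ∈ T, j = i0 :=
      fun j hj => Finset.card_le_one.mp (by omega) j hj i0 hi0T
    have hrest : ∀ j ∈ Finset.univ.erase i0, ∃ n : ℤ, y j = n := by
      intro j hj
      by_contra hc
      exact (Finset.mem_erase.mp hj).1
        (hone j (Finset.mem_filter.mpr ⟨Finset.mem_univ _, hc⟩))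
    obtain ⟨N, hN⟩ := exists_int_sum _ y hrest
    have hsum := Finset.add_sum_erase Finset.univ y (Finset.mem_univ i0)
    exact hi0 ⟨k - N, by push_cast; linarith⟩
  set a : ι → ℝ := fun m => if x m = s m * y m then s m else 0 with ha
  by_cases hcard : T.card = 2
  · refine ⟨hcard, ?_⟩
    by_contra hslack
    push_neg at hslack
    obtain ⟨l, hl0, hlt⟩ := hslack
    obtain ⟨i, hiT, j, hjT, hij⟩ := Finset.one_lt_card.mp (by omega : 1 < T.card)
    set v : ι → ℝ := fun m => (if m = i then (1:ℝ) else 0) - (if m = j then 1 else 0)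
      with hvdef
    set u : ι → ℝ := fun m => a m * v m + (if m = l then a j - a i else 0) with hudef
    have hsupp : ∀ m, v m ≠ 0 → 0 < y m ∧ y m < 1 := by
      intro m hm
      have hmor : m = i ∨ m = j := by
        by_contra hc; push_neg at hc
        exact hm (by simp [hvdef, hc.1, hc.2])
      rcases hmor with h | h <;> subst h
      · exact hfr01 _ hiT
      · exact hfr01 _ hjT
    have hE : ∀ m ∈ ({l} : Set ι), 0 < x m ∧ x m < s m * y m := by
      intro m hm; rw [Set.mem_singleton_iff] at hm; rw [hm]
      exact ⟨lt_of_le_of_ne (hxc l).1 (Ne.symm hl0), lt_of_le_of_ne (hxc l).2 hlt⟩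
    have hu' : ∀ m, m ∉ ({l} : Set ι) →
        u m = (if x m = s m * y m then s m else 0) * v m := by
      intro m hm; rw [Set.mem_singleton_iff] at hm
      simp [hudef, ha, hm]
    obtain ⟨K1, K2⟩ := aux_K s x y u v hs hxc (fun m hm => (hsupp m hm).1) _ hE hu'
    have K3 : ∀ m, v m = 0 ∨ (0 < y m ∧ y m < 1) := by
      intro m
      by_cases h : v m = 0
      · exact Or.inl h
      · exact Or.inr (hsupp m h)
    have hsv : (∑ m, v m) = 0 := by
      simp [hvdef, Finset.sum_sub_distrib, Finset.sum_ite_eq']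
    have hsu : (∑ m, u m) = 0 := by
      simp [hudef, hvdef, Finset.sum_add_distrib, Finset.sum_sub_distrib, mul_sub,
        mul_ite, mul_one, mul_zero, Finset.sum_ite_eq']
    have hv0 := key_vertex s d k P hP x y u v hvx hsu hsv K1 K2 K3
    have := congrFun hv0 i
    simp [hvdef, hij] at this
  · -- |T| ≥ 3
    exfalso
    have hT3 : 3 ≤ T.card := by omega
    obtain ⟨i, hiT⟩ := Finset.card_pos.mp (by omega : 0 < T.card)
    have h2 : 1 < (T.erase i).card := by rw [Finset.card_erase_of_mem hiT]; omega
    obtain ⟨j, hj, l, hl, hjl⟩ := Finset.one_lt_card.mp h2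
    have hji : j ≠ i := (Finset.mem_erase.mp hj).1
    have hjT : j ∈ T := (Finset.mem_erase.mp hj).2
    have hli : l ≠ i := (Finset.mem_erase.mp hl).1
    have hlT : l ∈ T := (Finset.mem_erase.mp hl).2
    by_cases hij : a i = a j
    · -- pair direction
      set v : ι → ℝ := fun m => (if m = i then (1:ℝ) else 0) - (if m = j then 1 else 0)
        with hvdef
      set u : ι → ℝ := fun m => a m * v m with hudef
      have hsupp : ∀ m, v m ≠ 0 → 0 < y m ∧ y m < 1 := by
        intro m hm
        have hmor : m = i ∨ m = j := by
          by_contra hc; push_neg at hc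
          exact hm (by simp [hvdef, hc.1, hc.2])
        rcases hmor with h | h <;> subst h
        · exact hfr01 _ hiT
        · exact hfr01 _ hjT
      have hE : ∀ m ∈ (∅ : Set ι), 0 < x m ∧ x m < s m * y m := by simp
      have hu' : ∀ m, m ∉ (∅ : Set ι) →
          u m = (if x m = s m * y m then s m else 0) * v m := fun m _ => rfl
      obtain ⟨K1, K2⟩ := aux_K s x y u v hs hxc (fun m hm => (hsupp m hm).1) _ hE hu'
      have K3 : ∀ m, v m = 0 ∨ (0 < y m ∧ y m < 1) := by
        intro m
        by_cases h : v m = 0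
        · exact Or.inl h
        · exact Or.inr (hsupp m h)
      have hsv : (∑ m, v m) = 0 := by
        simp [hvdef, Finset.sum_sub_distrib, Finset.sum_ite_eq']
      have hsu : (∑ m, u m) = 0 := by
        have h' : (∑ m, u m) = a i - a j := by
          simp [hudef, hvdef, Finset.sum_sub_distrib, mul_sub,
            mul_ite, mul_one, mul_zero, Finset.sum_ite_eq']
        rw [h', hij, sub_self]
      have hv0 := key_vertex s d k P hP x y u v hvx hsu hsv K1 K2 K3
      have := congrFun hv0 i
      simp [hvdef, Ne.symm hji] at this
    · -- triple direction
      set v : ι → ℝ := fun m => (if m = i then a j - a l else 0) +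
          (if m = j then a l - a i else 0) + (if m = l then a i - a j else 0) with hvdef
      set u : ι → ℝ := fun m => a m * v m with hudef
      have hsupp : ∀ m, v m ≠ 0 → 0 < y m ∧ y m < 1 := by
        intro m hm
        have hmor : m = i ∨ m = j ∨ m = l := by
          by_contra hc; push_neg at hc
          exact hm (by simp [hvdef, hc.1, hc.2.1, hc.2.2])
        rcases hmor with h | h | h <;> subst h
        · exact hfr01 _ hiT
        · exact hfr01 _ hjT
        · exact hfr01 _ hlT
      have hE : ∀ m ∈ (∅ : Set ι), 0 < x m ∧ x m < s m * y m := by simp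
      have hu' : ∀ m, m ∉ (∅ : Set ι) →
          u m = (if x m = s m * y m then s m else 0) * v m := fun m _ => rfl
      obtain ⟨K1, K2⟩ := aux_K s x y u v hs hxc (fun m hm => (hsupp m hm).1) _ hE hu'
      have K3 : ∀ m, v m = 0 ∨ (0 < y m ∧ y m < 1) := by
        intro m
        by_cases h : v m = 0
        · exact Or.inl h
        · exact Or.inr (hsupp m h)
      have hsv : (∑ m, v m) = 0 := by
        simp [hvdef, Finset.sum_add_distrib, Finset.sum_ite_eq']
        try ring
      have hsu : (∑ m, u m) = 0 := by
        simp [hudef, hvdef, Finset.sum_add_distrib, mul_add,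
          mul_ite, mul_zero, Finset.sum_ite_eq']
        try ring
      have hv0 := key_vertex s d k P hP x y u v hvx hsu hsv K1 K2 K3
      have := congrFun hv0 l
      simp [hvdef, hli, Ne.symm hjl] at this
      exact hij (by linarith)
end

section
/- Let Q be the polytope of points (x, y) with x ∈ ℝ^{F×D}_{≥0} and y ∈ ℝ^F satisfying ∑_{i∈F} x_{ij} = d_j for all j ∈ D, ∑_{j∈D} x_{ij} ≤ s_i y_i for all i ∈ F, ∑_{i∈F} y_i ≤ k, and 0 ≤ y_i ≤ 1. Then at every vertex (x, y) of Q, the vector y has at most |D| + 1 non-integer components. -/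
open scoped Classical

/-- Structure of vertices of the CKFL LP polytope Q: at any extreme point,
y has at most |D| + 1 non-integer components. -/
theorem stmt_5 {ι κ : Type*} [Fintype ι] [Fintype κ]
    (s : ι → ℝ) (d : κ → ℝ) (k : ℕ)
    (hs : ∀ i, 0 ≤ s i) (hd : ∀ j, 0 ≤ d j) (hk : 0 < k)
    (Q : Set ((ι → κ → ℝ) × (ι → ℝ)))
    (hQ : Q = {p | (∀ i j, 0 ≤ p.1 i j) ∧
      (∀ j, (∑ i, p.1 i j) = d j) ∧
      (∀ i, (∑ j, p.1 i j) ≤ s i * p.2 i) ∧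
      (∑ i, p.2 i) ≤ (k : ℝ) ∧
      (∀ i, 0 ≤ p.2 i ∧ p.2 i ≤ 1)})
    (x : ι → κ → ℝ) (y : ι → ℝ) (hvx : (x, y) ∈ Q.extremePoints ℝ) :
    (Finset.univ.filter fun i => ¬∃ n : ℤ, y i = n).card ≤ Fintype.card κ + 1 := by
  classical
  obtain ⟨hmemQ, hext⟩ := hvx
  have hmem := hmemQ
  rw [hQ] at hmem
  obtain ⟨hx0, hdm, hcap, hsum, hy01⟩ := hmem
  by_contra hcon
  rw [not_le] at hcon
  set Tfin : Finset ι := Finset.univ.filter (fun i => ¬∃ n : ℤ, y i = n) with hTdef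
  -- a linear map from a space of dimension |Tfin| to one of dimension |κ| + 1
  let φ : ({i // i ∈ Tfin} → ℝ) →ₗ[ℝ] ((κ → ℝ) × ℝ) :=
  { toFun := fun c => (fun j => ∑ i, c i * x i.1 j, ∑ i, c i * y i.1)
    map_add' := by
      intro a b
      refine Prod.ext (funext fun j => ?_) ?_ <;>
        simp [add_mul, Finset.sum_add_distrib]
    map_smul' := by
      intro m a
      refine Prod.ext (funext fun j => ?_) ?_ <;>
        simp [Finset.mul_sum, mul_assoc] }
  have hninj : ¬ Function.Injective φ := by
    intro hinj
    have h1 := LinearMap.finrank_le_finrank_of_injective hinj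
    rw [Module.finrank_pi, Module.finrank_prod, Module.finrank_pi,
      Module.finrank_self] at h1
    rw [Fintype.card_coe] at h1
    omega
  have hker : LinearMap.ker φ ≠ ⊥ := fun h => hninj (LinearMap.ker_eq_bot.mp h)
  obtain ⟨c, hcker, hc0⟩ := (Submodule.ne_bot_iff _).mp hker
  have hφc : φ c = 0 := LinearMap.mem_ker.mp hcker
  set C : ι → ℝ := fun i => if h : i ∈ Tfin then c ⟨i, h⟩ else 0 with hCdef
  have hCsum : ∀ f : ι → ℝ, (∑ i, C i * f i) = ∑ i : {i // i ∈ Tfin}, c i * f i.1 := by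
    intro f
    rw [← Finset.sum_subset (Finset.subset_univ Tfin)
      (fun i _ hi => by simp [hCdef, hi])]
    rw [← Finset.sum_coe_sort Tfin (fun i => C i * f i)]
    refine Finset.sum_congr rfl fun i _ => ?_
    simp [hCdef, i.2]
  have hk1 : ∀ j, (∑ i, C i * x i j) = 0 := by
    intro j
    rw [hCsum (fun i => x i j)]
    exact congrFun (congrArg Prod.fst hφc) j
  have hk2 : (∑ i, C i * y i) = 0 := by
    rw [hCsum y]
    exact congrArg Prod.snd hφc
  have hCmem : ∀ i, C i ≠ 0 → (0 < y i ∧ y i < 1) := by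
    intro i hCi
    have hiT : i ∈ Tfin := by
      by_contra h; exact hCi (by simp [hCdef, h])
    have hni : ¬∃ n : ℤ, y i = n := by simpa [hTdef] using hiT
    obtain ⟨h0, h1⟩ := hy01 i
    constructor
    · rcases h0.lt_or_eq with h | h
      · exact h
      · exact absurd ⟨0, by push_cast; exact h.symm⟩ hni
    · rcases h1.lt_or_eq with h | h
      · exact h
      · exact absurd ⟨1, by push_cast; exact h⟩ hni
  obtain ⟨i₀, hi₀⟩ : ∃ i, C i ≠ 0 := by
    obtain ⟨j, hj⟩ := Function.ne_iff.mp hc0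
    refine ⟨j.1, ?_⟩
    simpa [hCdef, j.2] using hj
  have hne : (Finset.univ : Finset ι).Nonempty := ⟨i₀, Finset.mem_univ _⟩
  set ε : ℝ := Finset.univ.inf' hne
    (fun i => if C i = 0 then 1 else (1 - y i) / (2 * |C i|)) with hεdef
  have hεpos : 0 < ε := by
    rw [hεdef, Finset.lt_inf'_iff]
    intro i _
    split_ifs with h
    · norm_num
    · have h1 := (hCmem i h).2
      have h2 : 0 < |C i| := abs_pos.mpr h
      have : 0 < 1 - y i := by linarith
      positivity
  have hεle : ∀ i, C i ≠ 0 → ε * |C i| < 1 - y i := by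
    intro i hCi
    have h1 : ε ≤ (1 - y i) / (2 * |C i|) := by
      have h0 : ε ≤ if C i = 0 then 1 else (1 - y i) / (2 * |C i|) := by
        rw [hεdef]
        exact Finset.inf'_le _ (Finset.mem_univ i)
      rwa [if_neg hCi] at h0
    have hC : 0 < |C i| := abs_pos.mpr hCi
    have hy : 0 < 1 - y i := by linarith [(hCmem i hCi).2]
    calc ε * |C i| ≤ (1 - y i) / (2 * |C i|) * |C i| :=
          mul_le_mul_of_nonneg_right h1 hC.le
      _ = (1 - y i) / 2 := by field_simp
      _ < 1 - y i := by linarith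
  have habs : ∀ t : ℝ, |t| ≤ ε → ∀ i, C i ≠ 0 → |t * C i| < 1 - y i := by
    intro t ht i hCi
    rw [abs_mul]
    calc |t| * |C i| ≤ ε * |C i| := mul_le_mul_of_nonneg_right ht (abs_nonneg _)
      _ < 1 - y i := hεle i hCi
  have hfeas : ∀ t : ℝ, |t| ≤ ε →
      ((fun i j => (1 + t * C i) * x i j, fun i => (1 + t * C i) * y i) :
        (ι → κ → ℝ) × (ι → ℝ)) ∈ Q := by
    intro t ht
    have hcoef : ∀ i, 0 < 1 + t * C i := by
      intro i
      by_cases hCi : C i = 0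
      · simp [hCi]
      · have h1 := habs t ht i hCi
        have h2 : 1 - y i ≤ 1 := by linarith [(hy01 i).1]
        have h3 := (abs_lt.mp (h1.trans_le h2)).1
        linarith
    have hy1 : ∀ i, (1 + t * C i) * y i ≤ 1 := by
      intro i
      by_cases hCi : C i = 0
      · simpa [hCi] using (hy01 i).2
      · have h1 := habs t ht i hCi
        have h2 := le_abs_self (t * C i)
        have h3 := (hy01 i).1
        have h4 := (hy01 i).2
        have h5 := abs_nonneg (t * C i)
        nlinarith
    rw [hQ]
    refine ⟨fun i j => mul_nonneg (hcoef i).le (hx0 i j), ?_, ?_, ?_, ?_⟩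
    · intro j
      have he : ∀ i ∈ Finset.univ, (1 + t * C i) * x i j
          = x i j + t * (C i * x i j) := fun i _ => by ring
      simp only
      rw [Finset.sum_congr rfl he, Finset.sum_add_distrib, ← Finset.mul_sum,
        hk1 j, hdm j]
      ring
    · intro i
      simp only
      rw [← Finset.mul_sum]
      calc (1 + t * C i) * ∑ j, x i j ≤ (1 + t * C i) * (s i * y i) :=
            mul_le_mul_of_nonneg_left (hcap i) (hcoef i).le
        _ = s i * ((1 + t * C i) * y i) := by ring
    · have he : ∀ i ∈ Finset.univ, (1 + t * C i) * y i
          = y i + t * (C i * y i) := fun i _ => by ring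
      simp only
      rw [Finset.sum_congr rfl he, Finset.sum_add_distrib, ← Finset.mul_sum, hk2]
      simpa using hsum
    · exact fun i => ⟨mul_nonneg (hcoef i).le (hy01 i).1, hy1 i⟩
  have hp1 := hfeas ε (by rw [abs_of_pos hεpos])
  have hp2 := hfeas (-ε) (by rw [abs_neg, abs_of_pos hεpos])
  have heq : (1/2 : ℝ) • ((fun i j => (1 + ε * C i) * x i j,
        fun i => (1 + ε * C i) * y i) : (ι → κ → ℝ) × (ι → ℝ))
      + (1/2 : ℝ) • ((fun i j => (1 + (-ε) * C i) * x i j,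
        fun i => (1 + (-ε) * C i) * y i) : (ι → κ → ℝ) × (ι → ℝ)) = (x, y) := by
    refine Prod.ext ?_ ?_
    · funext i j
      show (1/2 : ℝ) * ((1 + ε * C i) * x i j)
          + (1/2 : ℝ) * ((1 + (-ε) * C i) * x i j) = x i j
      ring
    · funext i
      show (1/2 : ℝ) * ((1 + ε * C i) * y i)
          + (1/2 : ℝ) * ((1 + (-ε) * C i) * y i) = y i
      ring
  have hseg : (x, y) ∈ openSegment ℝ
      ((fun i j => (1 + ε * C i) * x i j,
        fun i => (1 + ε * C i) * y i) : (ι → κ → ℝ) × (ι → ℝ))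
      ((fun i j => (1 + (-ε) * C i) * x i j,
        fun i => (1 + (-ε) * C i) * y i) : (ι → κ → ℝ) × (ι → ℝ)) :=
    ⟨1/2, 1/2, by norm_num, by norm_num, by norm_num, heq⟩
  have hcontr := (hext hp1 hp2 hseg)
  have h2 : (1 + ε * C i₀) * y i₀ = y i₀ := by
    have := congrArg Prod.snd hcontr
    exact congrFun this i₀
  have hy0 : 0 < y i₀ := (hCmem i₀ hi₀).1
  have hz : ε * C i₀ * y i₀ = 0 := by linear_combination h2
  rcases mul_eq_zero.mp hz with h | h
  · rcases mul_eq_zero.mp h with h' | h'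
    · exact absurd h' hεpos.ne'
    · exact hi₀ h'
  · exact absurd h hy0.ne'
end

section
/- Let (x, y) be a vertex of the convex hull of feasible solutions to the uniform-capacity capacitated k-facility location MIP, and let G be the bipartite graph on open facilities and clients whose edges are the pairs {i, j} with x_{ij} > 0. Then G is acyclic. -/
open SimpleGraph

private lemma list_sum_finset_sum {α β : Type*} [Fintype β] (l : List α) (f : β → α → ℝ) :
    ∑ b, (l.map (f b)).sum = (l.map fun a => ∑ b, f b a).sum := by
  induction l with
  | nil => simp
  | cons a l ih => simp [List.map_cons, List.sum_cons, Finset.sum_add_distrib, ih]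

private lemma list_sum_neg {α : Type*} (l : List α) (f : α → ℝ) :
    (l.map fun a => -f a).sum = -(l.map f).sum := by
  induction l with
  | nil => simp
  | cons a l ih => simp [ih]; ring

private lemma walk_telescope {V : Type*} {G : SimpleGraph V} [DecidableEq V] {u v : V}
    (p : G.Walk u v) (w : V) :
    (p.darts.map fun d => (if d.snd = w then (1:ℝ) else 0) - (if d.fst = w then 1 else 0)).sum
      = (if v = w then 1 else 0) - (if u = w then 1 else 0) := by
  induction p with
  | nil => simp
  | cons h q ih =>
    simp only [SimpleGraph.Walk.darts_cons, List.map_cons, List.sum_cons, ih]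
    ring

/-- At a vertex of the convex hull of feasible solutions of the
uniform-capacity CKFL MIP, the bipartite support graph G is acyclic. -/
theorem stmt_7 {ι κ : Type*} [Fintype ι] [Fintype κ]
    (s : ℝ) (hs : 0 < s) (d : κ → ℝ) (k : ℕ)
    (S : Set ((ι → κ → ℝ) × (ι → ℝ)))
    (hS : S = {p | (∀ i, p.2 i = 0 ∨ p.2 i = 1) ∧
      (∑ i, p.2 i) ≤ (k : ℝ) ∧
      (∀ i j, 0 ≤ p.1 i j) ∧
      (∀ j, (∑ i, p.1 i j) = d j) ∧
      (∀ i, (∑ j, p.1 i j) ≤ s * p.2 i)})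
    (x : ι → κ → ℝ) (y : ι → ℝ)
    (hvx : (x, y) ∈ (convexHull ℝ S).extremePoints ℝ) :
    (SimpleGraph.fromRel fun a b : ι ⊕ κ =>
      ∃ i j, a = Sum.inl i ∧ b = Sum.inr j ∧ 0 < x i j).IsAcyclic := by
  classical
  set G : SimpleGraph (ι ⊕ κ) := SimpleGraph.fromRel fun a b : ι ⊕ κ =>
      ∃ i j, a = Sum.inl i ∧ b = Sum.inr j ∧ 0 < x i j with hG
  intro v c hc
  -- every dart of G goes between a facility and a client along a positive edge
  have hdart : ∀ dd : G.Dart, ∃ i j, 0 < x i j ∧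
      (dd.toProd = (Sum.inl i, Sum.inr j) ∨ dd.toProd = (Sum.inr j, Sum.inl i)) := by
    intro dd
    obtain ⟨⟨a, b⟩, h⟩ := dd
    rw [hG, SimpleGraph.fromRel_adj] at h
    obtain ⟨hne, h | h⟩ := h
    · obtain ⟨i, j, h1, h2, h3⟩ := h
      exact ⟨i, j, h3, Or.inl (Prod.ext h1 h2)⟩
    · obtain ⟨i, j, h1, h2, h3⟩ := h
      exact ⟨i, j, h3, Or.inr (Prod.ext h2 h1)⟩
  -- characterize when a dart's edge is a given bipartite edge
  have hedge_iff : ∀ (dd : G.Dart) (i : ι) (j : κ),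
      dd.edge = s(Sum.inl i, Sum.inr j) ↔
      (dd.toProd = (Sum.inl i, Sum.inr j) ∨ dd.toProd = (Sum.inr j, Sum.inl i)) := by
    intro dd i j
    rw [SimpleGraph.Dart.edge,
      show (s(Sum.inl i, Sum.inr j) : Sym2 (ι ⊕ κ))
        = Sym2.mk (Sum.inl i : ι ⊕ κ) (Sum.inr j : ι ⊕ κ) from rfl,
      Sym2.eq_iff]
    simp [Prod.swap, Prod.ext_iff]
  -- the circulation induced by the cycle
  set z : ι → κ → ℝ := fun i j =>
    (c.darts.map fun dd => (if dd.toProd = (Sum.inl i, Sum.inr j) then (1:ℝ) else 0)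
        - (if dd.toProd = (Sum.inr j, Sum.inl i) then 1 else 0)).sum with hz
  -- key structural fact about the sum over a list of darts with nodup edges
  have key : ∀ (i : ι) (j : κ) (l : List G.Dart), (l.map SimpleGraph.Dart.edge).Nodup →
      ((s(Sum.inl i, Sum.inr j) ∈ l.map SimpleGraph.Dart.edge →
        ((l.map fun dd => (if dd.toProd = (Sum.inl i, Sum.inr j) then (1:ℝ) else 0)
          - (if dd.toProd = (Sum.inr j, Sum.inl i) then 1 else 0)).sum = 1 ∨
         (l.map fun dd => (if dd.toProd = (Sum.inl i, Sum.inr j) then (1:ℝ) else 0)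
          - (if dd.toProd = (Sum.inr j, Sum.inl i) then 1 else 0)).sum = -1))
       ∧ (s(Sum.inl i, Sum.inr j) ∉ l.map SimpleGraph.Dart.edge →
        (l.map fun dd => (if dd.toProd = (Sum.inl i, Sum.inr j) then (1:ℝ) else 0)
          - (if dd.toProd = (Sum.inr j, Sum.inl i) then 1 else 0)).sum = 0)) := by
    intro i j l
    induction l with
    | nil => simp
    | cons dd l ih =>
      intro hnd
      rw [List.map_cons, List.nodup_cons] at hnd
      obtain ⟨hdd, hnd⟩ := hnd
      have ih' := ih hnd
      constructor
      · intro hmem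
        rw [List.map_cons, List.mem_cons] at hmem
        rcases hmem with hmem | hmem
        · have h2 := (hedge_iff dd i j).mp hmem.symm
          have hrest : (l.map fun dd => (if dd.toProd = (Sum.inl i, Sum.inr j) then (1:ℝ) else 0)
              - (if dd.toProd = (Sum.inr j, Sum.inl i) then 1 else 0)).sum = 0 :=
            ih'.2 (by rw [← hmem] at hdd; exact hdd)
          have hAB : ((Sum.inl i, Sum.inr j) : (ι ⊕ κ) × (ι ⊕ κ)) ≠ (Sum.inr j, Sum.inl i) := by
            simp
          rcases h2 with h2 | h2
          · left
            simp only [List.map_cons, List.sum_cons, hrest, add_zero, h2]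
            simp [hAB]
          · right
            simp only [List.map_cons, List.sum_cons, hrest, add_zero, h2]
            simp [hAB.symm]
        · have hne : dd.edge ≠ s(Sum.inl i, Sum.inr j) := by
            intro h; rw [h] at hdd; exact hdd hmem
          have h3 : dd.toProd ≠ (Sum.inl i, Sum.inr j) ∧ dd.toProd ≠ (Sum.inr j, Sum.inl i) := by
            constructor <;> intro h <;> exact hne ((hedge_iff dd i j).mpr (by simp [h]))
          have := ih'.1 hmem
          simp only [List.map_cons, List.sum_cons, h3.1, h3.2, if_neg, sub_zero]
          rcases this with h | h <;> simp [h3.1, h3.2, h]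
      · intro hmem
        rw [List.map_cons, List.mem_cons] at hmem
        push_neg at hmem
        have hne : dd.edge ≠ s(Sum.inl i, Sum.inr j) := fun h => hmem.1 h.symm
        have h3 : dd.toProd ≠ (Sum.inl i, Sum.inr j) ∧ dd.toProd ≠ (Sum.inr j, Sum.inl i) := by
          constructor <;> intro h <;> exact hne ((hedge_iff dd i j).mpr (by simp [h]))
        have hrest := ih'.2 hmem.2
        simp [List.map_cons, List.sum_cons, h3.1, h3.2, hrest]
  have hnd : (c.darts.map SimpleGraph.Dart.edge).Nodup :=
    hc.isCircuit.isTrail.edges_nodup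
  -- z only takes values in {0, 1, -1}
  have htri : ∀ i j, z i j = 0 ∨ z i j = 1 ∨ z i j = -1 := by
    intro i j
    by_cases hm : s(Sum.inl i, Sum.inr j) ∈ c.darts.map SimpleGraph.Dart.edge
    · rcases (key i j c.darts hnd).1 hm with h | h
      · exact Or.inr (Or.inl h)
      · exact Or.inr (Or.inr h)
    · exact Or.inl ((key i j c.darts hnd).2 hm)
  -- support of z lies on positive entries of x
  have hsupp : ∀ i j, z i j ≠ 0 → 0 < x i j := by
    intro i j hzij
    have hm : s(Sum.inl i, Sum.inr j) ∈ c.darts.map SimpleGraph.Dart.edge := by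
      by_contra hm
      exact hzij ((key i j c.darts hnd).2 hm)
    have hadj : G.Adj (Sum.inl i) (Sum.inr j) :=
      (SimpleGraph.mem_edgeSet G).mp (SimpleGraph.Walk.edges_subset_edgeSet c hm)
    rw [hG, SimpleGraph.fromRel_adj] at hadj
    obtain ⟨-, h | h⟩ := hadj
    · obtain ⟨i', j', h1, h2, h3⟩ := h
      rw [Sum.inl.injEq] at h1
      rw [Sum.inr.injEq] at h2
      subst h1
      subst h2
      exact h3
    · obtain ⟨i', j', h1, h2, h3⟩ := h
      exact absurd h1 (by simp)
  -- per-dart column computation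
  have perdartC : ∀ (j : κ) (dd : G.Dart),
      (∑ i, ((if dd.toProd = (Sum.inl i, Sum.inr j) then (1:ℝ) else 0)
        - (if dd.toProd = (Sum.inr j, Sum.inl i) then 1 else 0)))
      = (if dd.snd = Sum.inr j then (1:ℝ) else 0) - (if dd.fst = Sum.inr j then 1 else 0) := by
    intro j dd
    obtain ⟨i0, j0, -, hcase | hcase⟩ := hdart dd
    · have hfst : dd.fst = Sum.inl i0 := congrArg Prod.fst hcase
      have hsnd : dd.snd = Sum.inr j0 := congrArg Prod.snd hcase
      by_cases hj : j0 = j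
      · subst hj
        simp [hcase, hfst, hsnd, Prod.ext_iff, Finset.sum_sub_distrib, Finset.sum_ite_eq]
      · simp [hcase, hfst, hsnd, Prod.ext_iff, hj, Ne.symm hj]
    · have hfst : dd.fst = Sum.inr j0 := congrArg Prod.fst hcase
      have hsnd : dd.snd = Sum.inl i0 := congrArg Prod.snd hcase
      by_cases hj : j0 = j
      · subst hj
        simp [hcase, hfst, hsnd, Prod.ext_iff, Finset.sum_sub_distrib, Finset.sum_ite_eq]
      · simp [hcase, hfst, hsnd, Prod.ext_iff, hj, Ne.symm hj]
  -- per-dart row computation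
  have perdartR : ∀ (i : ι) (dd : G.Dart),
      (∑ j, ((if dd.toProd = (Sum.inl i, Sum.inr j) then (1:ℝ) else 0)
        - (if dd.toProd = (Sum.inr j, Sum.inl i) then 1 else 0)))
      = -((if dd.snd = Sum.inl i then (1:ℝ) else 0) - (if dd.fst = Sum.inl i then 1 else 0)) := by
    intro i dd
    obtain ⟨i0, j0, -, hcase | hcase⟩ := hdart dd
    · have hfst : dd.fst = Sum.inl i0 := congrArg Prod.fst hcase
      have hsnd : dd.snd = Sum.inr j0 := congrArg Prod.snd hcase
      by_cases hi : i0 = i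
      · subst hi
        simp [hcase, hfst, hsnd, Prod.ext_iff, Finset.sum_sub_distrib, Finset.sum_ite_eq]
      · simp [hcase, hfst, hsnd, Prod.ext_iff, hi, Ne.symm hi]
    · have hfst : dd.fst = Sum.inr j0 := congrArg Prod.fst hcase
      have hsnd : dd.snd = Sum.inl i0 := congrArg Prod.snd hcase
      by_cases hi : i0 = i
      · subst hi
        simp [hcase, hfst, hsnd, Prod.ext_iff, Finset.sum_sub_distrib, Finset.sum_ite_eq]
      · simp [hcase, hfst, hsnd, Prod.ext_iff, hi, Ne.symm hi]
  -- column sums vanish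
  have hcol : ∀ j, ∑ i, z i j = 0 := by
    intro j
    rw [show (∑ i, z i j) = ∑ i, (c.darts.map fun dd =>
      (if dd.toProd = (Sum.inl i, Sum.inr j) then (1:ℝ) else 0)
      - (if dd.toProd = (Sum.inr j, Sum.inl i) then 1 else 0)).sum from rfl]
    rw [list_sum_finset_sum]
    rw [List.map_congr_left fun dd _ => perdartC j dd]
    rw [walk_telescope c (Sum.inr j)]
    ring
  -- row sums vanish
  have hrow : ∀ i, ∑ j, z i j = 0 := by
    intro i
    rw [show (∑ j, z i j) = ∑ j, (c.darts.map fun dd =>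
      (if dd.toProd = (Sum.inl i, Sum.inr j) then (1:ℝ) else 0)
      - (if dd.toProd = (Sum.inr j, Sum.inl i) then 1 else 0)).sum from rfl]
    rw [list_sum_finset_sum]
    rw [List.map_congr_left fun dd _ => perdartR i dd]
    rw [list_sum_neg, walk_telescope c (Sum.inl i)]
    ring
  -- z is nonzero somewhere
  have hdartsne : c.darts ≠ [] := by
    intro h
    have h3 := hc.three_le_length
    have hl := SimpleGraph.Walk.length_darts c
    rw [h] at hl
    simp at hl
    omega
  obtain ⟨i0, j0, hx0, hcase0⟩ := hdart (c.darts.head hdartsne)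
  have hz0 : z i0 j0 ≠ 0 := by
    have hmemd : (c.darts.head hdartsne) ∈ c.darts := List.head_mem hdartsne
    have hm : s(Sum.inl i0, Sum.inr j0) ∈ c.darts.map SimpleGraph.Dart.edge := by
      have : (c.darts.head hdartsne).edge = s(Sum.inl i0, Sum.inr j0) :=
        (hedge_iff _ i0 j0).mpr hcase0
      rw [← this]
      exact List.mem_map_of_mem hmemd
    have hzeq : z i0 j0 = (c.darts.map fun dd =>
        (if dd.toProd = (Sum.inl i0, Sum.inr j0) then (1:ℝ) else 0)
        - (if dd.toProd = (Sum.inr j0, Sum.inl i0) then 1 else 0)).sum := rfl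
    rcases (key i0 j0 c.darts hnd).1 hm with h | h <;> rw [hzeq, h] <;> norm_num
  -- feasibility data at (x, y)
  have hxyS : (x, y) ∈ S := extremePoints_convexHull_subset hvx
  rw [hS] at hxyS
  obtain ⟨hy01, hyk, hxnn, hcols, hrows⟩ := hxyS
  -- the perturbation size
  set T : Finset (ι × κ) := Finset.univ.filter (fun p => z p.1 p.2 ≠ 0) with hT
  have hTne : T.Nonempty := ⟨(i0, j0), Finset.mem_filter.mpr ⟨Finset.mem_univ _, hz0⟩⟩
  set ε : ℝ := T.inf' hTne (fun p => x p.1 p.2) with hε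
  have hεpos : 0 < ε := by
    rw [hε, Finset.lt_inf'_iff]
    intro p hp
    rw [hT, Finset.mem_filter] at hp
    exact hsupp p.1 p.2 hp.2
  have hεle : ∀ i j, z i j ≠ 0 → ε ≤ x i j := by
    intro i j h
    exact Finset.inf'_le (fun p : ι × κ => x p.1 p.2)
      (show ((i, j) : ι × κ) ∈ T from Finset.mem_filter.mpr ⟨Finset.mem_univ _, h⟩)
  -- the two perturbed feasible points
  have hfeas : ∀ σ : ℝ, σ = 1 ∨ σ = -1 →
      ((fun i j => x i j + σ * (ε * z i j), y) : (ι → κ → ℝ) × (ι → ℝ)) ∈ S := by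
    intro σ hσ
    rw [hS]
    refine ⟨hy01, hyk, ?_, ?_, ?_⟩
    · intro i j
      simp only
      rcases htri i j with h | h | h
      · rw [h]; simpa using hxnn i j
      · have h1 := hεle i j (by rw [h]; norm_num)
        have h2 := hxnn i j
        rcases hσ with h' | h' <;> rw [h, h'] <;> nlinarith
      · have h1 := hεle i j (by rw [h]; norm_num)
        have h2 := hxnn i j
        rcases hσ with h' | h' <;> rw [h, h'] <;> nlinarith
    · intro j
      simp only
      have h0 : (∑ i, σ * (ε * z i j)) = (σ * ε) * ∑ i, z i j := by
        rw [Finset.mul_sum]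
        exact Finset.sum_congr rfl fun i _ => by ring
      rw [Finset.sum_add_distrib, h0, hcol j, mul_zero, add_zero, hcols j]
    · intro i
      simp only
      have h0 : (∑ j, σ * (ε * z i j)) = (σ * ε) * ∑ j, z i j := by
        rw [Finset.mul_sum]
        exact Finset.sum_congr rfl fun j _ => by ring
      rw [Finset.sum_add_distrib, h0, hrow i, mul_zero, add_zero]
      exact hrows i
  have hq1 : ((fun i j => x i j + 1 * (ε * z i j), y) : (ι → κ → ℝ) × (ι → ℝ)) ∈ S :=
    hfeas 1 (Or.inl rfl)
  have hq2 : ((fun i j => x i j + (-1) * (ε * z i j), y) : (ι → κ → ℝ) × (ι → ℝ)) ∈ S :=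
    hfeas (-1) (Or.inr rfl)
  -- (x, y) is the midpoint
  have hmid : (x, y) ∈ openSegment ℝ
      ((fun i j => x i j + 1 * (ε * z i j), y) : (ι → κ → ℝ) × (ι → ℝ))
      ((fun i j => x i j + (-1) * (ε * z i j), y) : (ι → κ → ℝ) × (ι → ℝ)) := by
    refine ⟨1/2, 1/2, by norm_num, by norm_num, by norm_num, ?_⟩
    apply Prod.ext
    · show (1/2 : ℝ) • (fun i j => x i j + 1 * (ε * z i j))
        + (1/2 : ℝ) • (fun i j => x i j + (-1) * (ε * z i j)) = x
      funext i j
      simp only [Pi.add_apply, Pi.smul_apply, smul_eq_mul]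
      ring
    · show (1/2 : ℝ) • y + (1/2 : ℝ) • y = y
      funext i
      simp only [Pi.add_apply, Pi.smul_apply, smul_eq_mul]
      ring
  have hext := hvx.2 (subset_convexHull ℝ S hq1) (subset_convexHull ℝ S hq2) hmid
  have hq1eq := congrFun (congrFun (congrArg Prod.fst hext) i0) j0
  simp only [one_mul] at hq1eq
  have hzero : ε * z i0 j0 = 0 := by linarith [hq1eq]
  rcases mul_eq_zero.mp hzero with h | h
  · exact absurd h (ne_of_gt hεpos)
  · exact hz0 h
end

section
/- Let (x, y) be a vertex of the convex hull of feasible solutions of the uniform-capacity CKFL MIP, and let H be the subgraph of G consisting of the 'untight' edges {i,j} with 0 < x_{ij} < s. Then in each connected component of H there is at most one facility i with 0 < ∑_{j∈D} x_{ij} < s. -/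
open Classical in
/-- indicator matrix for an edge between a facility and a client -/
noncomputable def ckflEdgeMat {ι κ : Type*} (a b : ι ⊕ κ) : ι → κ → ℝ :=
  fun i j => (if a = Sum.inl i ∧ b = Sum.inr j then 1 else 0) +
             (if a = Sum.inr j ∧ b = Sum.inl i then 1 else 0)

/-- alternating-sign perturbation along a walk -/
noncomputable def ckflZ {ι κ : Type*} {G : SimpleGraph (ι ⊕ κ)} :
    {a b : ι ⊕ κ} → G.Walk a b → ℝ → ι → κ → ℝ
  | _, _, SimpleGraph.Walk.nil, _ => 0
  | _, _, SimpleGraph.Walk.cons (u := a) (v := c) _ q, σ =>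
      fun i j => σ * ckflEdgeMat a c i j + ckflZ q (-σ) i j

section aux
variable {ι κ : Type*} [Fintype ι] [Fintype κ] {G : SimpleGraph (ι ⊕ κ)}
  {x : ι → κ → ℝ} {s : ℝ}

open Classical

lemma ckflEdgeMat_row₁ (i' : ι) (j' : κ) (i : ι) :
    ∑ j, ckflEdgeMat (ι := ι) (κ := κ) (Sum.inl i') (Sum.inr j') i j
      = if Sum.inl (β := κ) i' = Sum.inl i then 1 else 0 := by
  simp only [ckflEdgeMat, Sum.inl.injEq, Sum.inr.injEq]
  by_cases h : i' = i <;> simp [h]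

lemma ckflEdgeMat_row₂ (i' : ι) (j' : κ) (i : ι) :
    ∑ j, ckflEdgeMat (ι := ι) (κ := κ) (Sum.inr j') (Sum.inl i') i j
      = if Sum.inl (β := κ) i' = Sum.inl i then 1 else 0 := by
  simp only [ckflEdgeMat, Sum.inl.injEq, Sum.inr.injEq]
  by_cases h : i' = i <;> simp [h]

lemma ckflEdgeMat_col₁ (i' : ι) (j' : κ) (j : κ) :
    ∑ i, ckflEdgeMat (ι := ι) (κ := κ) (Sum.inl i') (Sum.inr j') i j
      = if Sum.inr (α := ι) j' = Sum.inr j then 1 else 0 := by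
  simp only [ckflEdgeMat, Sum.inl.injEq, Sum.inr.injEq]
  by_cases h : j' = j <;> simp [h]

lemma ckflEdgeMat_col₂ (i' : ι) (j' : κ) (j : κ) :
    ∑ i, ckflEdgeMat (ι := ι) (κ := κ) (Sum.inr j') (Sum.inl i') i j
      = if Sum.inr (α := ι) j' = Sum.inr j then 1 else 0 := by
  simp only [ckflEdgeMat, Sum.inl.injEq, Sum.inr.injEq]
  by_cases h : j' = j <;> simp [h]

variable (hG : ∀ a b, G.Adj a b → ∃ i j,
    ((a = Sum.inl i ∧ b = Sum.inr j) ∨ (a = Sum.inr j ∧ b = Sum.inl i)) ∧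
    0 < x i j ∧ x i j < s)

include hG

lemma ckflZ_row {a b : ι ⊕ κ} (p : G.Walk a b) (σ : ℝ) (i : ι) :
    ∑ j, ckflZ p σ i j =
      σ * (if a = Sum.inl i then 1 else 0)
      - σ * (-1) ^ p.length * (if b = Sum.inl i then 1 else 0) := by
  induction p generalizing σ with
  | nil => simp [ckflZ]
  | @cons a c b h q ih =>
    obtain ⟨i', j', hshape, -⟩ := hG _ _ h
    have hsum : ∑ j, ckflZ (SimpleGraph.Walk.cons h q) σ i j
        = σ * (∑ j, ckflEdgeMat a c i j) + ∑ j, ckflZ q (-σ) i j := by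
      simp [ckflZ, Finset.sum_add_distrib, Finset.mul_sum]
    rcases hshape with ⟨ha, hc⟩ | ⟨ha, hc⟩
    · subst ha; subst hc
      rw [hsum, ckflEdgeMat_row₁, ih]
      simp only [SimpleGraph.Walk.length_cons]
      have : ((Sum.inr j' : ι ⊕ κ) = Sum.inl i) = False := by simp
      simp only [this, if_false]
      rcases eq_or_ne b (Sum.inl i) with hb | hb <;>
        rcases eq_or_ne ((Sum.inl i' : ι ⊕ κ)) (Sum.inl i) with hii | hii <;>
          simp [hb, hii, pow_succ] <;> ring
    · subst ha; subst hc
      rw [hsum, ckflEdgeMat_row₂, ih]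
      simp only [SimpleGraph.Walk.length_cons]
      have : ((Sum.inr j' : ι ⊕ κ) = Sum.inl i) = False := by simp
      simp only [this, if_false]
      rcases eq_or_ne b (Sum.inl i) with hb | hb <;>
        rcases eq_or_ne ((Sum.inl i' : ι ⊕ κ)) (Sum.inl i) with hii | hii <;>
          simp [hb, hii, pow_succ] <;> ring

lemma ckflZ_col {a b : ι ⊕ κ} (p : G.Walk a b) (σ : ℝ) (j : κ) :
    ∑ i, ckflZ p σ i j =
      σ * (if a = Sum.inr j then 1 else 0)
      - σ * (-1) ^ p.length * (if b = Sum.inr j then 1 else 0) := by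
  induction p generalizing σ with
  | nil => simp [ckflZ]
  | @cons a c b h q ih =>
    obtain ⟨i', j', hshape, -⟩ := hG _ _ h
    have hsum : ∑ i, ckflZ (SimpleGraph.Walk.cons h q) σ i j
        = σ * (∑ i, ckflEdgeMat a c i j) + ∑ i, ckflZ q (-σ) i j := by
      simp [ckflZ, Finset.sum_add_distrib, Finset.mul_sum]
    rcases hshape with ⟨ha, hc⟩ | ⟨ha, hc⟩
    · subst ha; subst hc
      rw [hsum, ckflEdgeMat_col₁, ih]
      simp only [SimpleGraph.Walk.length_cons]
      have : ((Sum.inl i' : ι ⊕ κ) = Sum.inr j) = False := by simp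
      simp only [this, if_false]
      rcases eq_or_ne b (Sum.inr j) with hb | hb <;>
        rcases eq_or_ne ((Sum.inr j' : ι ⊕ κ)) (Sum.inr j) with hii | hii <;>
          simp [hb, hii, pow_succ] <;> ring
    · subst ha; subst hc
      rw [hsum, ckflEdgeMat_col₂, ih]
      simp only [SimpleGraph.Walk.length_cons]
      have : ((Sum.inl i' : ι ⊕ κ) = Sum.inr j) = False := by simp
      simp only [this, if_false]
      rcases eq_or_ne b (Sum.inr j) with hb | hb <;>
        rcases eq_or_ne ((Sum.inr j' : ι ⊕ κ)) (Sum.inr j) with hii | hii <;>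
          simp [hb, hii, pow_succ] <;> ring

lemma ckflZ_supp {a b : ι ⊕ κ} (p : G.Walk a b) (σ : ℝ) (i : ι) (j : κ)
    (hne : ckflZ p σ i j ≠ 0) : 0 < x i j ∧ x i j < s := by
  induction p generalizing σ with
  | nil => simp [ckflZ] at hne
  | @cons a c b h q ih =>
    by_cases h0 : ckflZ q (-σ) i j ≠ 0
    · exact ih _ h0
    · push_neg at h0
      have hE : ckflEdgeMat a c i j ≠ 0 := by
        intro hE
        apply hne
        simp [ckflZ, hE, h0]
      obtain ⟨i', j', hshape, hx1, hx2⟩ := hG _ _ h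
      have : (a = Sum.inl i ∧ c = Sum.inr j) ∨ (a = Sum.inr j ∧ c = Sum.inl i) := by
        by_contra hcon
        apply hE
        simp only [ckflEdgeMat]
        rw [if_neg (fun hc => hcon (Or.inl hc)), if_neg (fun hc => hcon (Or.inr hc))]
        norm_num
      rcases this with ⟨ha, hc⟩ | ⟨ha, hc⟩ <;>
        rcases hshape with ⟨ha', hc'⟩ | ⟨ha', hc'⟩ <;>
          simp_all
end aux

/-- At a vertex of the convex hull of feasible solutions of the
uniform-capacity CKFL MIP, each connected component of the untight subgraph H
contains at most one facility serving strictly between 0 and s units. -/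
theorem stmt_8 {ι κ : Type*} [Fintype ι] [Fintype κ]
    (s : ℝ) (hs : 0 < s) (d : κ → ℝ) (k : ℕ)
    (S : Set ((ι → κ → ℝ) × (ι → ℝ)))
    (hS : S = {p | (∀ i, p.2 i = 0 ∨ p.2 i = 1) ∧
      (∑ i, p.2 i) ≤ (k : ℝ) ∧
      (∀ i j, 0 ≤ p.1 i j) ∧
      (∀ j, (∑ i, p.1 i j) = d j) ∧
      (∀ i, (∑ j, p.1 i j) ≤ s * p.2 i)})
    (x : ι → κ → ℝ) (y : ι → ℝ)
    (hvx : (x, y) ∈ (convexHull ℝ S).extremePoints ℝ)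
    (H : SimpleGraph (ι ⊕ κ))
    (hH : H = SimpleGraph.fromRel fun a b =>
      ∃ i j, a = Sum.inl i ∧ b = Sum.inr j ∧ 0 < x i j ∧ x i j < s)
    (i₁ i₂ : ι)
    (h₁ : 0 < (∑ j, x i₁ j) ∧ (∑ j, x i₁ j) < s)
    (h₂ : 0 < (∑ j, x i₂ j) ∧ (∑ j, x i₂ j) < s)
    (hreach : H.Reachable (Sum.inl i₁) (Sum.inl i₂)) :
    i₁ = i₂ := by
  classical
  by_contra hne
  -- shape of adjacency
  have hG : ∀ a b, H.Adj a b → ∃ i j,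
      ((a = Sum.inl i ∧ b = Sum.inr j) ∨ (a = Sum.inr j ∧ b = Sum.inl i)) ∧
      0 < x i j ∧ x i j < s := by
    intro a b hab
    rw [hH] at hab
    obtain ⟨-, hab | hab⟩ := hab
    · obtain ⟨i, j, ha, hb, hx⟩ := hab
      exact ⟨i, j, Or.inl ⟨ha, hb⟩, hx⟩
    · obtain ⟨i, j, hb, ha, hx⟩ := hab
      exact ⟨i, j, Or.inr ⟨ha, hb⟩, hx⟩
  -- (x,y) is feasible
  have hxyS : (x, y) ∈ S := extremePoints_convexHull_subset hvx
  rw [hS] at hxyS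
  obtain ⟨hy01, hky, hxnn, hdem, hcap⟩ := hxyS
  simp only at hy01 hky hxnn hdem hcap
  have hy1 : y i₁ = 1 := by
    rcases hy01 i₁ with h | h
    · exfalso; have := hcap i₁; rw [h] at this; linarith [h₁.1]
    · exact h
  have hy2 : y i₂ = 1 := by
    rcases hy01 i₂ with h | h
    · exfalso; have := hcap i₂; rw [h] at this; linarith [h₂.1]
    · exact h
  -- the perturbation
  obtain ⟨p⟩ := hreach
  set z : ι → κ → ℝ := ckflZ p 1 with hz
  have hrow : ∀ i, ∑ j, z i j =
      (if (Sum.inl i₁ : ι ⊕ κ) = Sum.inl i then 1 else 0)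
      - (-1) ^ p.length * (if (Sum.inl i₂ : ι ⊕ κ) = Sum.inl i then 1 else 0) := by
    intro i
    have := ckflZ_row hG p 1 i
    simpa using this
  have hrow1 : ∑ j, z i₁ j = 1 := by
    have := hrow i₁
    rw [if_pos rfl, if_neg (by simp [Ne.symm hne])] at this
    simpa using this
  have hrow2 : ∑ j, z i₂ j = -((-1) ^ p.length) := by
    have := hrow i₂
    rw [if_neg (by simp [hne]), if_pos rfl] at this
    simpa using this
  have hrow2' : (∑ j, z i₂ j) = 1 ∨ (∑ j, z i₂ j) = -1 := by
    rcases Nat.even_or_odd p.length with h | h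
    · right; rw [hrow2, h.neg_one_pow]
    · left; rw [hrow2, h.neg_one_pow]; ring
  have hrow0 : ∀ i, i ≠ i₁ → i ≠ i₂ → ∑ j, z i j = 0 := by
    intro i hi1 hi2
    have := hrow i
    rw [if_neg (by simp [Ne.symm hi1]), if_neg (by simp [Ne.symm hi2])] at this
    simpa using this
  have hcol : ∀ j, ∑ i, z i j = 0 := by
    intro j
    have := ckflZ_col hG p 1 j
    simpa using this
  have hsupp : ∀ i j, z i j ≠ 0 → 0 < x i j ∧ x i j < s :=
    fun i j h => ckflZ_supp hG p 1 i j h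
  -- choice of ε
  set T : Finset ℝ := insert (s - ∑ j, x i₁ j) (insert (s - ∑ j, x i₂ j)
      ((Finset.univ.filter fun q : ι × κ => z q.1 q.2 ≠ 0).image
        fun q => x q.1 q.2 / |z q.1 q.2|)) with hT
  have hTne : T.Nonempty := ⟨_, Finset.mem_insert_self _ _⟩
  set ε : ℝ := T.min' hTne with hε
  have hεpos : 0 < ε := by
    rw [hε, Finset.lt_min'_iff]
    intro b hb
    rw [hT] at hb
    simp only [Finset.mem_insert, Finset.mem_image, Finset.mem_filter] at hb
    rcases hb with rfl | rfl | ⟨q, ⟨-, hq⟩, rfl⟩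
    · linarith [h₁.2]
    · linarith [h₂.2]
    · exact div_pos (hsupp q.1 q.2 hq).1 (abs_pos.mpr hq)
  have hε1 : ε ≤ s - ∑ j, x i₁ j := Finset.min'_le _ _ (by rw [hT]; simp)
  have hε2 : ε ≤ s - ∑ j, x i₂ j := Finset.min'_le _ _ (by rw [hT]; simp)
  have hεsupp : ∀ i j, ε * |z i j| ≤ x i j := by
    intro i j
    by_cases h : z i j = 0
    · rw [h, abs_zero, mul_zero]; exact hxnn i j
    · have hle : ε ≤ x i j / |z i j| := Finset.min'_le _ _ (by
        rw [hT]
        simp only [Finset.mem_insert, Finset.mem_image, Finset.mem_filter]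
        exact Or.inr (Or.inr ⟨(i, j), ⟨Finset.mem_univ _, h⟩, rfl⟩))
      rw [le_div_iff₀ (abs_pos.mpr h)] at hle
      exact hle
  -- the two perturbed points
  have hmem : ∀ t : ℝ, |t| = 1 → ((fun i j => x i j + (t * ε) * z i j, y) : _ × _) ∈ S := by
    intro t ht
    have htabs : ∀ r : ℝ, t * ε * r ≤ ε * |r| := by
      intro r
      calc t * ε * r ≤ |t * ε * r| := le_abs_self _
      _ = ε * |r| := by rw [abs_mul, abs_mul, ht, abs_of_pos hεpos]; ring
    rw [hS]
    refine ⟨hy01, hky, ?_, ?_, ?_⟩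
    · intro i j
      simp only
      have h1 := htabs (-z i j)
      have h2 := hεsupp i j
      rw [abs_neg] at h1
      nlinarith
    · intro j
      simp only
      rw [Finset.sum_add_distrib, ← Finset.mul_sum, hcol j, hdem j]
      ring
    · intro i
      simp only
      rw [Finset.sum_add_distrib, ← Finset.mul_sum]
      by_cases hi1 : i = i₁
      · rw [hi1, hrow1, hy1]
        have := htabs 1
        simp at this
        linarith
      · by_cases hi2 : i = i₂
        · rw [hi2, hy2]
          have h2' := htabs (∑ j, z i₂ j)
          have : |∑ j, z i₂ j| = 1 := by rcases hrow2' with h | h <;> rw [h] <;> simp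
          simp only [this, if_false] at h2'
          linarith
        · rw [hrow0 i hi1 hi2, mul_zero, add_zero]
          exact hcap i
  have hp1 : ((fun i j => x i j + (1 * ε) * z i j, y) : _ × _) ∈ S := hmem 1 (by norm_num)
  have hp2 : ((fun i j => x i j + ((-1) * ε) * z i j, y) : _ × _) ∈ S := hmem (-1) (by norm_num)
  have hseg : (x, y) ∈ openSegment ℝ
      ((fun i j => x i j + (1 * ε) * z i j, y) : _ × _)
      ((fun i j => x i j + ((-1) * ε) * z i j, y) : _ × _) := by
    refine ⟨1/2, 1/2, by norm_num, by norm_num, by norm_num, ?_⟩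
    refine Prod.ext ?_ ?_
    · funext i j
      simp
      ring
    · simp
      funext i
      simp
      ring
  have := (hvx.2 (subset_convexHull ℝ S hp1) (subset_convexHull ℝ S hp2) hseg)
  have hfst := congrArg Prod.fst this
  simp only at hfst
  have : ∑ j, (x i₁ j + (1 * ε) * z i₁ j) = ∑ j, x i₁ j :=
    Finset.sum_congr rfl fun j _ => congrFun (congrFun hfst i₁) j
  rw [Finset.sum_add_distrib, ← Finset.mul_sum, hrow1] at this
  have : ε = 0 := by linarith
  linarith
end

section
/- Let (x, y) be a vertex of the convex hull of feasible solutions of the uniform-capacity CKFL MIP, and let H be its untight subgraph (edges {i,j} with 0 < x_{ij} < s). Then H contains at most m facilities and at most 2m − 1 edges, where m = |D|. -/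
open scoped Classical
open Finset

section Aux
variable {ι κ : Type*} [Fintype ι] [Fintype κ]

noncomputable def Zfun (E : Finset (ι × κ)) (w : ↥E → ℝ) : ι → κ → ℝ :=
  fun i j => if h : (i, j) ∈ E then w ⟨(i, j), h⟩ else 0

lemma Zfun_apply (E : Finset (ι × κ)) (w : ↥E → ℝ) (p : ↥E) :
    Zfun E w (p : ι × κ).1 (p : ι × κ).2 = w p := by
  obtain ⟨⟨i, j⟩, h⟩ := p
  simp [Zfun, h]

lemma Zfun_eq_zero (E : Finset (ι × κ)) (w : ↥E → ℝ) {i : ι} {j : κ}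
    (h : (i, j) ∉ E) : Zfun E w i j = 0 := dif_neg h

noncomputable def colMap (E : Finset (ι × κ)) : (↥E → ℝ) →ₗ[ℝ] (κ → ℝ) where
  toFun w := fun j => ∑ p : ↥E, (if (p : ι × κ).2 = j then (1:ℝ) else 0) * w p
  map_add' a b := by funext j; simp [mul_add, Finset.sum_add_distrib]
  map_smul' c a := by
    funext j; simp [Finset.mul_sum, mul_left_comm]

noncomputable def rowMap (E : Finset (ι × κ)) (T : Finset ι) : (↥E → ℝ) →ₗ[ℝ] (↥T → ℝ) where
  toFun w := fun i => ∑ p : ↥E, (if (p : ι × κ).1 = (i : ι) then (1:ℝ) else 0) * w p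
  map_add' a b := by funext i; simp [mul_add, Finset.sum_add_distrib]
  map_smul' c a := by
    funext i; simp [Finset.mul_sum, mul_left_comm]

lemma col_eq (E : Finset (ι × κ)) (w : ↥E → ℝ) (j : κ) :
    ∑ i, Zfun E w i j = colMap E w j := by
  have h1 : colMap E w j = ∑ p : ↥E, (if (p : ι × κ).2 = j then Zfun E w (p : ι × κ).1 (p : ι × κ).2 else 0) := by
    simp only [colMap, LinearMap.coe_mk, AddHom.coe_mk, boole_mul]
    exact Finset.sum_congr rfl fun p _ => by rw [Zfun_apply]
  rw [h1, Finset.sum_coe_sort E (fun p => if p.2 = j then Zfun E w p.1 p.2 else 0)]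
  rw [Finset.sum_subset (Finset.subset_univ E)]
  · rw [Fintype.sum_prod_type]
    rw [Finset.sum_comm]
    rw [show ∑ y_1 : κ, ∑ x_1 : ι, (if y_1 = j then Zfun E w x_1 y_1 else 0)
      = ∑ y_1 : κ, (if y_1 = j then ∑ x_1 : ι, Zfun E w x_1 y_1 else 0) from
      Finset.sum_congr rfl fun y _ => by split <;> simp]
    rw [Finset.sum_ite_eq' Finset.univ j (fun y_1 => ∑ x_1 : ι, Zfun E w x_1 y_1)]
    simp
  · intro p _ hp
    simp [Zfun_eq_zero E w (by simpa using hp)]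

lemma row_eq (E : Finset (ι × κ)) (w : ↥E → ℝ) (i : ι) :
    ∑ j, Zfun E w i j = ∑ p : ↥E, (if (p : ι × κ).1 = i then (1:ℝ) else 0) * w p := by
  have h1 : ∑ p : ↥E, (if (p : ι × κ).1 = i then (1:ℝ) else 0) * w p
      = ∑ p : ↥E, (if (p : ι × κ).1 = i then Zfun E w (p : ι × κ).1 (p : ι × κ).2 else 0) := by
    simp only [boole_mul]
    exact Finset.sum_congr rfl fun p _ => by rw [Zfun_apply]
  rw [h1, Finset.sum_coe_sort E (fun p => if p.1 = i then Zfun E w p.1 p.2 else 0)]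
  rw [Finset.sum_subset (Finset.subset_univ E)]
  · rw [Fintype.sum_prod_type]
    rw [show ∑ x_1 : ι, ∑ y_1 : κ, (if x_1 = i then Zfun E w x_1 y_1 else 0)
      = ∑ x_1 : ι, (if x_1 = i then ∑ y_1 : κ, Zfun E w x_1 y_1 else 0) from
      Finset.sum_congr rfl fun x _ => by split <;> simp]
    rw [Finset.sum_ite_eq' Finset.univ i (fun x_1 => ∑ y_1 : κ, Zfun E w x_1 y_1)]
    simp
  · intro p _ hp
    simp [Zfun_eq_zero E w (by simpa using hp)]

end Aux


lemma pert {ι κ : Type*} [Fintype ι] [Fintype κ]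
    (s : ℝ) (hs : 0 < s) (d : κ → ℝ) (k : ℕ)
    (S : Set ((ι → κ → ℝ) × (ι → ℝ)))
    (hS : S = {p | (∀ i, p.2 i = 0 ∨ p.2 i = 1) ∧
      (∑ i, p.2 i) ≤ (k : ℝ) ∧
      (∀ i j, 0 ≤ p.1 i j) ∧
      (∀ j, (∑ i, p.1 i j) = d j) ∧
      (∀ i, (∑ j, p.1 i j) ≤ s * p.2 i)})
    (x : ι → κ → ℝ) (y : ι → ℝ)
    (hvx : (x, y) ∈ (convexHull ℝ S).extremePoints ℝ)
    (z : ι → κ → ℝ)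
    (hsupp : ∀ i j, ¬(0 < x i j ∧ x i j < s) → z i j = 0)
    (hcl : ∀ j, (∑ i, z i j) = 0)
    (hrow : ∀ i, (∑ j, x i j) = s * y i → (∑ j, z i j) = 0) :
    z = 0 := by
  classical
  by_contra hz
  have hxy : (x, y) ∈ S := extremePoints_convexHull_subset hvx
  rw [hS] at hxy
  obtain ⟨hy01, hk, hxpos, hdem, hload⟩ := hxy
  obtain ⟨i0, j0, hz0⟩ : ∃ i j, z i j ≠ 0 := by
    by_contra h; push_neg at h
    exact hz (funext fun i => funext fun j => h i j)
  have hfrac0 : 0 < x i0 j0 ∧ x i0 j0 < s := by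
    by_contra h; exact hz0 (hsupp _ _ h)
  haveI : Nonempty ι := ⟨i0⟩
  haveI : Nonempty κ := ⟨j0⟩
  set E : Finset (ι × κ) := univ.filter (fun p => 0 < x p.1 p.2 ∧ x p.1 p.2 < s) with hE
  have hEne : E.Nonempty := ⟨(i0, j0), by simp [hE, hfrac0.1, hfrac0.2]⟩
  set Mz : ℝ := univ.sup' univ_nonempty (fun p : ι × κ => |z p.1 p.2|) with hMz
  have hMzpos : 0 < Mz :=
    lt_of_lt_of_le (abs_pos.mpr hz0) (Finset.le_sup' (fun p : ι × κ => |z p.1 p.2|) (mem_univ (i0, j0)))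
  have hMzle : ∀ i j, |z i j| ≤ Mz := fun i j =>
    Finset.le_sup' (fun p : ι × κ => |z p.1 p.2|) (mem_univ (i, j))
  set m : ℝ := (Fintype.card κ : ℝ) with hmdef
  have hm1 : 1 ≤ m := by rw [hmdef]; exact_mod_cast Nat.one_le_iff_ne_zero.mpr Fintype.card_ne_zero
  set δ1 : ℝ := E.inf' hEne (fun p => x p.1 p.2) with hδ1def
  have hδ1pos : 0 < δ1 := by
    rw [hδ1def, Finset.lt_inf'_iff]
    intro p hp; exact ((Finset.mem_filter.mp hp).2).1
  have hδ1le : ∀ p ∈ E, δ1 ≤ x p.1 p.2 := fun p hp => Finset.inf'_le _ hp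
  set G : Finset ι := univ.filter (fun i => (∑ j, x i j) ≠ s * y i) with hG
  set δ2 : ℝ := if h : G.Nonempty then G.inf' h (fun i => s * y i - ∑ j, x i j) else 1 with hδ2def
  have hδ2pos : 0 < δ2 := by
    rw [hδ2def]; split
    · rw [Finset.lt_inf'_iff]
      intro i hi
      have h1 := hload i
      have h2 := (Finset.mem_filter.mp hi).2
      have : (∑ j, x i j) < s * y i := lt_of_le_of_ne h1 h2
      linarith
    · norm_num
  have hδ2le : ∀ i ∈ G, δ2 ≤ s * y i - ∑ j, x i j := by
    intro i hi
    rw [hδ2def, dif_pos ⟨i, hi⟩]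
    exact Finset.inf'_le _ hi
  set δ : ℝ := min δ1 δ2 with hδdef
  have hδpos : 0 < δ := lt_min hδ1pos hδ2pos
  set ε : ℝ := δ / (m * Mz) with hεdef
  have hmMz : 0 < m * Mz := by positivity
  have hεpos : 0 < ε := div_pos hδpos hmMz
  have hbound1 : ε * Mz ≤ δ := by
    rw [hεdef]
    rw [div_mul_eq_mul_div, mul_comm m Mz, mul_div_assoc]
    nth_rewrite 2 [show δ = δ * 1 by ring]
    apply mul_le_mul_of_nonneg_left _ hδpos.le
    rw [div_le_one (by positivity)]
    nlinarith
  have hbound2 : ε * (m * Mz) ≤ δ := by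
    rw [hεdef, div_mul_cancel₀ _ hmMz.ne']
  -- entrywise bound
  have hent : ∀ (t : ℝ), |t| ≤ ε → ∀ i j, |t * z i j| ≤ δ := by
    intro t ht i j
    rw [abs_mul]
    calc |t| * |z i j| ≤ ε * Mz := by
          apply mul_le_mul ht (hMzle i j) (abs_nonneg _) hεpos.le
      _ ≤ δ := hbound1
  -- row sum bound
  have hrowb : ∀ (t : ℝ), |t| ≤ ε → ∀ i, |t * ∑ j, z i j| ≤ δ := by
    intro t ht i
    rw [abs_mul]
    have h1 : |∑ j, z i j| ≤ m * Mz := by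
      calc |∑ j, z i j| ≤ ∑ j, |z i j| := Finset.abs_sum_le_sum_abs _ _
        _ ≤ ∑ _j : κ, Mz := Finset.sum_le_sum fun j _ => hMzle i j
        _ = m * Mz := by rw [Finset.sum_const, nsmul_eq_mul]; rfl
    calc |t| * |∑ j, z i j| ≤ ε * (m * Mz) := by
          apply mul_le_mul ht h1 (abs_nonneg _) hεpos.le
      _ ≤ δ := hbound2
  -- feasibility of perturbed points
  have hmem : ∀ (t : ℝ), |t| ≤ ε →
      ((fun i j => x i j + t * z i j, y) : (ι → κ → ℝ) × (ι → ℝ)) ∈ S := by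
    intro t ht
    rw [hS]
    refine ⟨hy01, hk, ?_, ?_, ?_⟩
    · intro i j
      by_cases hf : 0 < x i j ∧ x i j < s
      · have h1 : δ1 ≤ x i j := hδ1le (i, j) (by simp [hE, hf.1, hf.2])
        have h2 := abs_le.mp (hent t ht i j)
        have h3 : δ ≤ δ1 := min_le_left _ _
        simp only
        linarith [h2.1]
      · simp only [hsupp i j hf, mul_zero, add_zero]
        exact hxpos i j
    · intro j
      simp only
      rw [Finset.sum_add_distrib, ← Finset.mul_sum, hcl j, mul_zero, add_zero]
      exact hdem j
    · intro i
      simp only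
      rw [Finset.sum_add_distrib, ← Finset.mul_sum]
      by_cases hg : (∑ j, x i j) = s * y i
      · rw [hrow i hg, mul_zero, add_zero]; exact hload i
      · have hiG : i ∈ G := Finset.mem_filter.mpr ⟨mem_univ _, hg⟩
        have h2 := hδ2le i hiG
        have h3 := abs_le.mp (hrowb t ht i)
        have h4 : δ ≤ δ2 := min_le_right _ _
        linarith [h3.2]
  have hp1 := hmem ε (by rw [abs_of_pos hεpos])
  have hp2 := hmem (-ε) (by rw [abs_neg, abs_of_pos hεpos])
  set p1 : (ι → κ → ℝ) × (ι → ℝ) := (fun i j => x i j + ε * z i j, y) with hp1def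
  set p2 : (ι → κ → ℝ) × (ι → ℝ) := (fun i j => x i j + (-ε) * z i j, y) with hp2def
  have hseg : (x, y) ∈ openSegment ℝ p1 p2 := by
    refine ⟨1/2, 1/2, by norm_num, by norm_num, by norm_num, ?_⟩
    rw [hp1def, hp2def, Prod.ext_iff]
    constructor
    · funext i j
      show (1/2 : ℝ) * (x i j + ε * z i j) + (1/2 : ℝ) * (x i j + (-ε) * z i j) = x i j
      ring
    · funext i
      show (1/2 : ℝ) * y i + (1/2 : ℝ) * y i = y i
      ring
  obtain ⟨heq, -⟩ := (mem_extremePoints.mp hvx).2 _ (subset_convexHull ℝ S hp1) _ (subset_convexHull ℝ S hp2) hseg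
  have h5 := congrFun (congrFun (congrArg Prod.fst heq) i0) j0
  simp only [hp1def] at h5
  have : ε * z i0 j0 = 0 := by linarith [h5]
  rcases mul_eq_zero.mp this with h | h
  · exact absurd h hεpos.ne'
  · exact hz0 h


/-- At a vertex of the convex hull of feasible solutions of the
uniform-capacity CKFL MIP, the untight subgraph H (edges with 0 < x_{ij} < s)
contains at most m facilities and at most 2m - 1 edges, where m = |D|. -/
theorem stmt_9 {ι κ : Type*} [Fintype ι] [Fintype κ]
    (s : ℝ) (hs : 0 < s) (d : κ → ℝ) (k : ℕ)
    (S : Set ((ι → κ → ℝ) × (ι → ℝ)))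
    (hS : S = {p | (∀ i, p.2 i = 0 ∨ p.2 i = 1) ∧
      (∑ i, p.2 i) ≤ (k : ℝ) ∧
      (∀ i j, 0 ≤ p.1 i j) ∧
      (∀ j, (∑ i, p.1 i j) = d j) ∧
      (∀ i, (∑ j, p.1 i j) ≤ s * p.2 i)})
    (x : ι → κ → ℝ) (y : ι → ℝ)
    (hvx : (x, y) ∈ (convexHull ℝ S).extremePoints ℝ) :
    (Finset.univ.filter fun i : ι => ∃ j, 0 < x i j ∧ x i j < s).card ≤
        Fintype.card κ ∧
    (Finset.univ.filter fun p : ι × κ => 0 < x p.1 p.2 ∧ x p.1 p.2 < s).card ≤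
        2 * Fintype.card κ - 1 := by
  classical
  set F : Finset ι := Finset.univ.filter (fun i : ι => ∃ j, 0 < x i j ∧ x i j < s) with hF
  set E : Finset (ι × κ) := Finset.univ.filter (fun p : ι × κ => 0 < x p.1 p.2 ∧ x p.1 p.2 < s) with hEdef
  have hxy : (x, y) ∈ S := extremePoints_convexHull_subset hvx
  rw [hS] at hxy
  obtain ⟨hy01, hk, hxpos, hdem, hload⟩ := hxy
  dsimp only at hy01 hk hxpos hdem hload
  have hyF : ∀ i ∈ F, y i = 1 := by
    intro i hi
    obtain ⟨j, hj⟩ := (mem_filter.mp hi).2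
    have h1 : x i j ≤ ∑ j', x i j' :=
      Finset.single_le_sum (fun j' _ => hxpos i j') (mem_univ j)
    have h2 : 0 < s * y i := lt_of_lt_of_le hj.1 (h1.trans (hload i))
    rcases hy01 i with h | h
    · rw [h, mul_zero] at h2; linarith
    · exact h
  set T : Finset ι := F.filter (fun i => (∑ j, x i j) = s) with hT
  have hTF : T ⊆ F := filter_subset _ _
  have hEF : ∀ p ∈ E, p.1 ∈ F := fun p hp =>
    mem_filter.mpr ⟨mem_univ _, ⟨p.2, (mem_filter.mp hp).2⟩⟩
  -- degree counting
  have hcard : E.card = ∑ i ∈ F, (E.filter fun p => p.1 = i).card :=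
    Finset.card_eq_sum_card_fiberwise hEF
  have hdeg1 : ∀ i ∈ F, 1 ≤ (E.filter fun p => p.1 = i).card := by
    intro i hi
    obtain ⟨j, hj⟩ := (mem_filter.mp hi).2
    refine Finset.card_pos.mpr ⟨(i, j), ?_⟩
    simp [hEdef, hj.1, hj.2]
  have hdeg2 : ∀ i ∈ T, 2 ≤ (E.filter fun p => p.1 = i).card := by
    intro i hi
    have hiF : i ∈ F := hTF hi
    have htight : (∑ j, x i j) = s := (mem_filter.mp hi).2
    obtain ⟨ja, hja⟩ := (mem_filter.mp hiF).2
    have key : ∃ jb, jb ≠ ja ∧ (0 < x i jb ∧ x i jb < s) := by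
      by_contra h
      have hsum : ∑ j, x i j = x i ja + ∑ j ∈ Finset.univ.erase ja, x i j :=
        (Finset.add_sum_erase Finset.univ (fun j => x i j) (mem_univ ja)).symm
      have hR0 : (0:ℝ) ≤ ∑ j ∈ Finset.univ.erase ja, x i j :=
        Finset.sum_nonneg fun j _ => hxpos i j
      have hRpos : (0:ℝ) < ∑ j ∈ Finset.univ.erase ja, x i j := by
        by_contra h'
        push_neg at h'
        have : ∑ j ∈ Finset.univ.erase ja, x i j = 0 := le_antisymm h' hR0
        rw [this, add_zero] at hsum
        rw [htight] at hsum
        linarith [hja.2]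
      obtain ⟨jb, hjb, hjbpos⟩ : ∃ jb ∈ Finset.univ.erase ja, 0 < x i jb := by
        by_contra h'; push_neg at h'
        have : ∑ j ∈ Finset.univ.erase ja, x i j ≤ 0 :=
          Finset.sum_nonpos fun j hj => h' j hj
        linarith
      have hne : jb ≠ ja := (Finset.mem_erase.mp hjb).1
      have h3 : s ≤ x i jb := by
        by_contra h4
        push_neg at h4
        exact h ⟨jb, hne, hjbpos, h4⟩
      have hle : x i jb ≤ ∑ j ∈ Finset.univ.erase ja, x i j :=
        Finset.single_le_sum (fun j _ => hxpos i j) hjb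
      rw [htight] at hsum
      linarith [hja.1]
    obtain ⟨jb, hjbne, hjbfrac⟩ := key
    exact Finset.one_lt_card.mpr ⟨(i, ja), by simp [hEdef, hja.1, hja.2], (i, jb),
      by simp [hEdef, hjbfrac.1, hjbfrac.2],
      fun hpe => hjbne ((congrArg Prod.snd hpe).symm)⟩
  have hge : F.card + T.card ≤ E.card := by
    rw [hcard]
    calc F.card + T.card = ∑ i ∈ F, (1 + if i ∈ T then 1 else 0) := by
          rw [Finset.sum_add_distrib, Finset.sum_const, smul_eq_mul, mul_one]
          congr 1
          rw [Finset.sum_ite_mem, Finset.inter_eq_right.mpr hTF, Finset.sum_const,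
            smul_eq_mul, mul_one]
      _ ≤ ∑ i ∈ F, (E.filter fun p => p.1 = i).card := by
          apply Finset.sum_le_sum
          intro i hi
          by_cases hiT : i ∈ T
          · simpa [hiT] using hdeg2 i hiT
          · simpa [hiT] using hdeg1 i hi
  have hker : ∀ w : ↥E → ℝ, (∀ j, ∑ i, Zfun E w i j = 0) →
      (∀ i ∈ T, ∑ j, Zfun E w i j = 0) → w = 0 := by
    intro w h1 h2
    have hZ : Zfun E w = 0 := by
      apply pert s hs d k S hS x y hvx
      · intro i j hfrac
        exact Zfun_eq_zero E w (by simpa [hEdef] using hfrac)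
      · exact h1
      · intro i hg
        by_cases hiF : i ∈ F
        · refine h2 i ?_
          rw [hT]
          refine mem_filter.mpr ⟨hiF, ?_⟩
          rw [hyF i hiF, mul_one] at hg
          exact hg
        · apply Finset.sum_eq_zero
          intro j _
          exact Zfun_eq_zero E w (fun hmem => hiF (hEF _ hmem))
    funext p
    rw [← Zfun_apply E w p, hZ]
    rfl
  have hrowT_of : ∀ (w : ↥E → ℝ), rowMap E T w = 0 → ∀ i ∈ T, ∑ j, Zfun E w i j = 0 := by
    intro w hw i hi
    rw [row_eq]
    exact congrFun hw ⟨i, hi⟩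
  by_cases hFT : F ⊆ T
  · -- all facilities of H are tight
    have hTeq : T = F := Finset.Subset.antisymm hTF hFT
    by_cases hEne : E.Nonempty
    · obtain ⟨q1, hq1⟩ := hEne
      set j0 : κ := q1.2 with hj0def
      haveI : Nonempty κ := ⟨j0⟩
      set L : (↥E → ℝ) →ₗ[ℝ] ({j : κ // j ≠ j0} → ℝ) × (↥T → ℝ) :=
        ((LinearMap.funLeft ℝ ℝ (Subtype.val : {j : κ // j ≠ j0} → κ)).comp
          (colMap E)).prod (rowMap E T) with hL
      have hker0 : ∀ w, L w = 0 → w = 0 := by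
        intro w hw
        rw [hL, LinearMap.prod_apply, Prod.mk_eq_zero] at hw
        obtain ⟨hw1, hw2⟩ := hw
        have hcol : ∀ j, j ≠ j0 → colMap E w j = 0 := fun j hj => congrFun hw1 ⟨j, hj⟩
        have hrowT : ∀ i ∈ T, ∑ j, Zfun E w i j = 0 := hrowT_of w hw2
        have hrowAll : ∀ i, ∑ j, Zfun E w i j = 0 := by
          intro i
          by_cases hiF : i ∈ F
          · exact hrowT i (hFT hiF)
          · exact Finset.sum_eq_zero fun j _ => Zfun_eq_zero E w (fun hmem => hiF (hEF _ hmem))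
        have htot : ∑ j, ∑ i, Zfun E w i j = 0 := by
          rw [Finset.sum_comm]
          exact Finset.sum_eq_zero fun i _ => hrowAll i
        have hcol' : ∀ j, j ≠ j0 → ∑ i, Zfun E w i j = 0 := by
          intro j hj; rw [col_eq]; exact hcol j hj
        have hj0sum : ∑ i, Zfun E w i j0 = 0 := by
          have hsingle := Fintype.sum_eq_single (f := fun j => ∑ i, Zfun E w i j) j0
            (fun b hb => hcol' b hb)
          rw [hsingle] at htot
          exact htot
        apply hker w
        · intro j
          by_cases hj : j = j0
          · rw [hj]; exact hj0sum
          · exact hcol' j hj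
        · exact hrowT
      have hinj : Function.Injective L := by
        intro a b hab
        have h0 := hker0 (a - b) (by rw [map_sub, hab, sub_self])
        exact sub_eq_zero.mp h0
      have hfr := LinearMap.finrank_le_finrank_of_injective hinj
      rw [Module.finrank_pi, Module.finrank_prod, Module.finrank_pi, Module.finrank_pi,
        Fintype.card_coe, Fintype.card_coe] at hfr
      have hcardsub : Fintype.card {j : κ // j ≠ j0} = Fintype.card κ - 1 := by
        have h1 : Fintype.card {j : κ // ¬ j = j0} = Fintype.card κ - Fintype.card {j : κ // j = j0} :=
          Fintype.card_subtype_compl _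
        have h2 : Fintype.card {j : κ // j = j0} = 1 := Fintype.card_subtype_eq j0
        rw [h2] at h1
        exact h1
      rw [hcardsub] at hfr
      have hm1 : 1 ≤ Fintype.card κ := Fintype.card_pos
      have hTcard : T.card = F.card := by rw [hTeq]
      constructor <;> omega
    · have hEempty : E = ∅ := Finset.not_nonempty_iff_eq_empty.mp hEne
      have hFempty : F = ∅ := by
        rw [Finset.eq_empty_iff_forall_notMem]
        intro i hi
        obtain ⟨j, hj⟩ := (mem_filter.mp hi).2
        have hmem : (i, j) ∈ E := by simp [hEdef, hj.1, hj.2]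
        rw [hEempty] at hmem
        exact absurd hmem (Finset.notMem_empty _)
      rw [hFempty, hEempty]
      simp
  · -- there is a non-tight facility in H
    have hssub : T ⊂ F := ⟨hTF, hFT⟩
    have hlt : T.card < F.card := Finset.card_lt_card hssub
    set L : (↥E → ℝ) →ₗ[ℝ] (κ → ℝ) × (↥T → ℝ) := (colMap E).prod (rowMap E T) with hL
    have hker0 : ∀ w, L w = 0 → w = 0 := by
      intro w hw
      rw [hL, LinearMap.prod_apply, Prod.mk_eq_zero] at hw
      obtain ⟨hw1, hw2⟩ := hw
      apply hker w
      · intro j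
        rw [col_eq]
        exact congrFun hw1 j
      · exact hrowT_of w hw2
    have hinj : Function.Injective L := by
      intro a b hab
      have h0 := hker0 (a - b) (by rw [map_sub, hab, sub_self])
      exact sub_eq_zero.mp h0
    have hfr := LinearMap.finrank_le_finrank_of_injective hinj
    rw [Module.finrank_pi, Module.finrank_prod, Module.finrank_pi, Module.finrank_pi,
      Fintype.card_coe, Fintype.card_coe] at hfr
    constructor <;> omega
end

section
/- Let T be a tree that is bipartite with parts F' (facilities) ∪ D' (clients), let s > 0, let d_j > 0 be demands for j ∈ D', and suppose x assigns to each edge {i,j} of T a weight with 0 < x_{ij} < s, such that ∑_{j: {i,j}∈T} x_{ij} = s for every facility i ∈ F' except possibly one designated root facility i*, and for each client j, d_j − ∑_{i: {i,j}∈T} x_{ij} is a nonnegative integer multiple of s. Then the edge weights x are uniquely determined by T, s, d, and i*. -/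
open scoped Classical

private lemma aux_untight {ι κ : Type*} [Fintype ι] [Fintype κ]
    (T : SimpleGraph (ι ⊕ κ))
    (s : ℝ) (hs : 0 < s) (d : κ → ℝ) (istar : ι)
    (x x' : ι → κ → ℝ)
    (hx1 : ∀ i j, T.Adj (Sum.inl i) (Sum.inr j) → 0 < x i j ∧ x i j < s)
    (hx2 : ∀ i, i ≠ istar →
      (∑ j ∈ Finset.univ.filter fun j => T.Adj (Sum.inl i) (Sum.inr j), x i j) = s)
    (hx3 : ∀ j, ∃ n : ℕ,
      d j - (∑ i ∈ Finset.univ.filter fun i => T.Adj (Sum.inl i) (Sum.inr j), x i j)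
        = n * s)
    (hx1' : ∀ i j, T.Adj (Sum.inl i) (Sum.inr j) → 0 < x' i j ∧ x' i j < s)
    (hx2' : ∀ i, i ≠ istar →
      (∑ j ∈ Finset.univ.filter fun j => T.Adj (Sum.inl i) (Sum.inr j), x' i j) = s)
    (hx3' : ∀ j, ∃ n : ℕ,
      d j - (∑ i ∈ Finset.univ.filter fun i => T.Adj (Sum.inl i) (Sum.inr j), x' i j)
        = n * s)
    (i0 : ι) (j0 : κ) (hadj : T.Adj (Sum.inl i0) (Sum.inr j0))
    (C : Set (ι ⊕ κ))
    (hclosed : ∀ a b, T.Adj a b → s(a, b) ≠ s(Sum.inl i0, Sum.inr j0) →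
      (a ∈ C ↔ b ∈ C))
    (hxor : (Sum.inl i0 ∈ C) ↔ ¬ (Sum.inr j0 ∈ C))
    (histar : Sum.inl istar ∉ C) :
    x i0 j0 = x' i0 j0 := by
  classical
  choose n hn using hx3
  choose n' hn' using hx3'
  set c : ℝ := (if Sum.inl i0 ∈ C then (1:ℝ) else 0)
      - (if Sum.inr j0 ∈ C then (1:ℝ) else 0) with hc
  -- the counting identity
  have hcount : ∀ y : ι → κ → ℝ,
      ((∑ i ∈ Finset.univ.filter fun i => Sum.inl i ∈ C,
          ∑ j ∈ Finset.univ.filter fun j => T.Adj (Sum.inl i) (Sum.inr j), y i j)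
        - ∑ j ∈ Finset.univ.filter fun j => Sum.inr j ∈ C,
          ∑ i ∈ Finset.univ.filter fun i => T.Adj (Sum.inl i) (Sum.inr j), y i j)
      = c * y i0 j0 := by
    intro y
    have h1 : (∑ i ∈ Finset.univ.filter fun i => Sum.inl i ∈ C,
          ∑ j ∈ Finset.univ.filter fun j => T.Adj (Sum.inl i) (Sum.inr j), y i j)
        = ∑ i : ι, ∑ j : κ,
          (if T.Adj (Sum.inl i) (Sum.inr j) ∧ Sum.inl i ∈ C then y i j else 0) := by
      rw [Finset.sum_filter]
      refine Finset.sum_congr rfl fun i _ => ?_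
      by_cases h : Sum.inl i ∈ C
      · simp only [h, if_true, and_true, Finset.sum_filter]
      · simp [h]
    have h2 : (∑ j ∈ Finset.univ.filter fun j => Sum.inr j ∈ C,
          ∑ i ∈ Finset.univ.filter fun i => T.Adj (Sum.inl i) (Sum.inr j), y i j)
        = ∑ i : ι, ∑ j : κ,
          (if T.Adj (Sum.inl i) (Sum.inr j) ∧ Sum.inr j ∈ C then y i j else 0) := by
      have : (∑ j ∈ Finset.univ.filter fun j => Sum.inr j ∈ C,
          ∑ i ∈ Finset.univ.filter fun i => T.Adj (Sum.inl i) (Sum.inr j), y i j)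
        = ∑ j : κ, ∑ i : ι,
          (if T.Adj (Sum.inl i) (Sum.inr j) ∧ Sum.inr j ∈ C then y i j else 0) := by
        rw [Finset.sum_filter]
        refine Finset.sum_congr rfl fun j _ => ?_
        by_cases h : Sum.inr j ∈ C
        · simp only [h, if_true, and_true, Finset.sum_filter]
        · simp [h]
      rw [this, Finset.sum_comm]
    rw [h1, h2, ← Finset.sum_sub_distrib]
    simp only [← Finset.sum_sub_distrib]
    have hterm : ∀ i j,
        ((if T.Adj (Sum.inl i) (Sum.inr j) ∧ Sum.inl i ∈ C then y i j else 0)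
          - if T.Adj (Sum.inl i) (Sum.inr j) ∧ Sum.inr j ∈ C then y i j else 0)
        = if i = i0 then (if j = j0 then c * y i0 j0 else 0) else 0 := by
      intro i j
      by_cases hij : i = i0 ∧ j = j0
      · rw [hij.1, hij.2]
        simp only [if_pos rfl, hadj, true_and, hc]
        by_cases h1 : Sum.inl i0 ∈ C <;> by_cases h2 : Sum.inr j0 ∈ C <;>
          simp [h1, h2]
      · have hne1 : ¬ (i = i0 ∧ j = j0) := hij
        by_cases ha : T.Adj (Sum.inl i) (Sum.inr j)
        · have hne : s(Sum.inl i, Sum.inr j) ≠ s(Sum.inl i0, Sum.inr j0) := by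
            intro h
            rw [Sym2.eq_iff] at h
            rcases h with ⟨h1, h2⟩ | ⟨h1, h2⟩
            · exact hne1 ⟨Sum.inl.inj h1, Sum.inr.inj h2⟩
            · exact (Sum.inl_ne_inr h1).elim
          have := hclosed _ _ ha hne
          by_cases h1 : i = i0
          · subst h1
            have hj : j ≠ j0 := fun h => hne1 ⟨rfl, h⟩
            simp only [if_pos rfl, if_neg hj]
            by_cases h2 : Sum.inl i ∈ C <;> simp [ha, h2, this.symm, ← this]
          · simp only [if_neg h1]
            by_cases h2 : Sum.inl i ∈ C <;> simp [ha, h2, ← this]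
        · by_cases h1 : i = i0
          · by_cases h2 : j = j0
            · exact absurd (h1 ▸ h2 ▸ hadj) ha
            · simp [ha, h2]
          · simp [ha, h1]
    calc (∑ i : ι, ∑ j : κ, _) = ∑ i : ι, ∑ j : κ,
          (if i = i0 then (if j = j0 then c * y i0 j0 else 0) else 0) := by
          exact Finset.sum_congr rfl fun i _ => Finset.sum_congr rfl fun j _ => hterm i j
      _ = c * y i0 j0 := by simp
  -- evaluate both sides for x
  have keyval : ∀ y : ι → κ → ℝ,
      (∀ i, i ≠ istar →
        (∑ j ∈ Finset.univ.filter fun j => T.Adj (Sum.inl i) (Sum.inr j), y i j) = s) →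
      ∀ m : κ → ℕ,
      (∀ j, d j -
        (∑ i ∈ Finset.univ.filter fun i => T.Adj (Sum.inl i) (Sum.inr j), y i j)
        = m j * s) →
      c * y i0 j0 =
        ((Finset.univ.filter fun i => Sum.inl i ∈ C).card : ℝ) * s
          - ∑ j ∈ Finset.univ.filter fun j => Sum.inr j ∈ C, (d j - m j * s) := by
    intro y hy2 m hm
    rw [← hcount y]
    congr 1
    · rw [Finset.sum_congr rfl (fun i hi => ?_), Finset.sum_const, nsmul_eq_mul]
      apply hy2
      intro h
      subst h
      exact histar (Finset.mem_filter.mp hi).2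
    · refine Finset.sum_congr rfl fun j _ => ?_
      have := hm j
      linarith
  have hAx := keyval x hx2 n hn
  have hAx' := keyval x' hx2' n' hn'
  set N : ℤ := (∑ j ∈ Finset.univ.filter fun j => Sum.inr j ∈ C, ((n j : ℤ) - (n' j : ℤ)) : ℤ)
    with hNdef
  have hcast : ((N : ℤ) : ℝ)
      = ∑ j ∈ Finset.univ.filter fun j => Sum.inr j ∈ C, ((n j : ℝ) - (n' j : ℝ)) := by
    rw [hNdef]; push_cast; ring
  have hdiff : c * (x i0 j0 - x' i0 j0) = ((N : ℤ) : ℝ) * s := by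
    rw [hcast, Finset.sum_mul, mul_sub, hAx, hAx']
    have : ∀ j ∈ Finset.univ.filter fun j => Sum.inr j ∈ C,
        ((n j : ℝ) - n' j) * s = (d j - n' j * s) - (d j - n j * s) := by
      intro j _; ring
    rw [Finset.sum_congr rfl this]
    simp only [Finset.sum_sub_distrib]
    ring
  have hcpm : c = 1 ∨ c = -1 := by
    by_cases h1 : Sum.inl i0 ∈ C
    · left; simp [hc, h1, hxor.mp h1]
    · right
      have : Sum.inr j0 ∈ C := by
        by_contra h2
        exact h1 (hxor.mpr h2)
      simp [hc, h1, this]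
  have habs : |x i0 j0 - x' i0 j0| < s := by
    obtain ⟨p1, p2⟩ := hx1 i0 j0 hadj
    obtain ⟨q1, q2⟩ := hx1' i0 j0 hadj
    rw [abs_lt]; constructor <;> linarith
  have hNabs : |(N : ℝ)| * s < s := by
    have : |c * (x i0 j0 - x' i0 j0)| = |x i0 j0 - x' i0 j0| := by
      rcases hcpm with h | h
      · simp [h]
      · rw [h]; simp only [neg_one_mul, abs_neg]
    rw [hdiff] at this
    rw [abs_mul, abs_of_pos hs] at this
    linarith [this ▸ habs]
  have hN0 : N = 0 := by
    have h1 : |(N : ℝ)| < 1 := by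
      by_contra h
      push_neg at h
      nlinarith
    rw [← Int.cast_abs] at h1
    have h2 : |N| < 1 := by exact_mod_cast h1
    have h3 := abs_lt.mp h2
    omega
  have : c * (x i0 j0 - x' i0 j0) = 0 := by rw [hdiff, hN0]; simp
  rcases hcpm with h | h <;> rw [h] at this <;> linarith

/-- Uniqueness of untight-tree edge weights: on a bipartite tree T with
designated root facility i*, edge weights in (0,s) that saturate every other
facility and leave every client a nonnegative integer multiple of s of residual
demand are uniquely determined. -/
theorem stmt_10 {ι κ : Type*} [Fintype ι] [Fintype κ]
    (T : SimpleGraph (ι ⊕ κ)) (hT : T.IsTree)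
    (hbip : ∀ a b, T.Adj a b →
      (∃ i j, (a = Sum.inl i ∧ b = Sum.inr j) ∨ (a = Sum.inr j ∧ b = Sum.inl i)))
    (s : ℝ) (hs : 0 < s) (d : κ → ℝ) (hd : ∀ j, 0 < d j) (istar : ι)
    (x x' : ι → κ → ℝ)
    (hx1 : ∀ i j, T.Adj (Sum.inl i) (Sum.inr j) → 0 < x i j ∧ x i j < s)
    (hx2 : ∀ i, i ≠ istar →
      (∑ j ∈ Finset.univ.filter fun j => T.Adj (Sum.inl i) (Sum.inr j), x i j) = s)
    (hx3 : ∀ j, ∃ n : ℕ,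
      d j - (∑ i ∈ Finset.univ.filter fun i => T.Adj (Sum.inl i) (Sum.inr j), x i j)
        = n * s)
    (hx1' : ∀ i j, T.Adj (Sum.inl i) (Sum.inr j) → 0 < x' i j ∧ x' i j < s)
    (hx2' : ∀ i, i ≠ istar →
      (∑ j ∈ Finset.univ.filter fun j => T.Adj (Sum.inl i) (Sum.inr j), x' i j) = s)
    (hx3' : ∀ j, ∃ n : ℕ,
      d j - (∑ i ∈ Finset.univ.filter fun i => T.Adj (Sum.inl i) (Sum.inr j), x' i j)
        = n * s) :
    ∀ i j, T.Adj (Sum.inl i) (Sum.inr j) → x i j = x' i j := by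
  classical
  intro i0 j0 hadj
  have hbridge := (SimpleGraph.isAcyclic_iff_forall_adj_isBridge.mp hT.IsAcyclic) hadj
  rw [SimpleGraph.isBridge_iff] at hbridge
  set G := T \ SimpleGraph.fromEdgeSet {s(Sum.inl i0, Sum.inr j0)} with hG
  have hGadj : ∀ a b, T.Adj a b → s(a, b) ≠ s(Sum.inl i0, Sum.inr j0) → G.Adj a b := by
    intro a b h hne
    rw [hG, SimpleGraph.sdiff_adj, SimpleGraph.fromEdgeSet_adj]
    exact ⟨h, fun hh => hne hh.1⟩
  have hnr : ¬ G.Reachable (Sum.inl i0) (Sum.inr j0) := hbridge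
  by_cases hside : G.Reachable (Sum.inl istar) (Sum.inl i0)
  · -- C = component of j0
    refine aux_untight T s hs d istar x x' hx1 hx2 hx3 hx1' hx2' hx3' i0 j0 hadj
      {v | G.Reachable (Sum.inr j0) v} ?_ ?_ ?_
    · intro a b h hne
      have : G.Adj a b := hGadj a b h hne
      exact ⟨fun hr => hr.trans this.reachable, fun hr => hr.trans this.symm.reachable⟩
    · simp only [Set.mem_setOf_eq]
      constructor
      · intro h _; exact hnr h.symm
      · intro h; exact absurd (SimpleGraph.Reachable.refl _) h
    · simp only [Set.mem_setOf_eq]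
      intro h
      exact hnr ((h.trans hside).symm)
  · -- C = component of i0
    refine aux_untight T s hs d istar x x' hx1 hx2 hx3 hx1' hx2' hx3' i0 j0 hadj
      {v | G.Reachable (Sum.inl i0) v} ?_ ?_ ?_
    · intro a b h hne
      have : G.Adj a b := hGadj a b h hne
      exact ⟨fun hr => hr.trans this.reachable, fun hr => hr.trans this.symm.reachable⟩
    · simp only [Set.mem_setOf_eq]
      constructor
      · intro _ h; exact hnr h
      · intro _; exact SimpleGraph.Reachable.refl _
    · simp only [Set.mem_setOf_eq]
      intro h
      exact hside h.symm
end

section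
/- The number of spanning trees of the complete bipartite graph K_{m,n} is m^{n−1} · n^{m−1}. -/
namespace Stmt11

open Function

variable {α : Type*} {σ : α → α} {x y r : α}

/-- periodic point -/
def Per (σ : α → α) (x : α) : Prop := ∃ k, 0 < k ∧ σ^[k] x = x

lemma Per.apply (h : Per σ x) : Per σ (σ x) := by
  obtain ⟨k, hk, hx⟩ := h
  exact ⟨k, hk, by rw [← Function.iterate_succ_apply, Function.iterate_succ_apply', hx]⟩

lemma Per.iterate (h : Per σ x) (n : ℕ) : Per σ (σ^[n] x) := by
  induction n with
  | zero => exact h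
  | succ n ih => rw [Function.iterate_succ_apply']; exact ih.apply

lemma per_inj (hx : Per σ x) (hy : Per σ y) (h : σ x = σ y) : x = y := by
  obtain ⟨p, hp, hpx⟩ := hx
  obtain ⟨q, hq, hqy⟩ := hy
  have hxpq : σ^[p * q] x = x := by
    rw [Function.iterate_mul]; exact Function.iterate_fixed hpx q
  have hypq : σ^[q * p] y = y := by
    rw [Function.iterate_mul]; exact Function.iterate_fixed hqy p
  have h1 : 0 < p * q := Nat.mul_pos hp hq
  have e : p * q = (p * q - 1) + 1 := (Nat.succ_pred_eq_of_pos h1).symm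
  calc x = σ^[p * q] x := hxpq.symm
    _ = σ^[(p * q - 1) + 1] x := by rw [← e]
    _ = σ^[p * q - 1] (σ x) := Function.iterate_succ_apply σ _ x
    _ = σ^[p * q - 1] (σ y) := by rw [h]
    _ = σ^[(p * q - 1) + 1] y := (Function.iterate_succ_apply σ _ y).symm
    _ = σ^[q * p] y := by rw [Nat.mul_comm q p, ← e]
    _ = y := hypq

lemma exists_iterate_per [Finite α] (σ : α → α) (x : α) : ∃ t, Per σ (σ^[t] x) := by
  obtain ⟨i, j, hne, hij⟩ := Finite.exists_ne_map_eq_of_infinite (fun n : ℕ => σ^[n] x)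
  rcases hne.lt_or_gt with h | h
  · exact ⟨i, j - i, by omega, by
      rw [← Function.iterate_add_apply, Nat.sub_add_cancel h.le, hij]⟩
  · exact ⟨j, i - j, by omega, by
      rw [← Function.iterate_add_apply, Nat.sub_add_cancel h.le, ← hij]⟩

lemma Per.pre (h : Per σ y) : ∃ x, Per σ x ∧ σ x = y := by
  obtain ⟨k, hk, hky⟩ := h
  refine ⟨σ^[k - 1] y, Per.iterate ⟨k, hk, hky⟩ _, ?_⟩
  have : σ (σ^[k - 1] y) = σ^[(k - 1) + 1] y := (Function.iterate_succ_apply' σ _ y).symm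
  rw [this, Nat.sub_add_cancel hk, hky]

/-- injectivity of the trajectory up to the first hit of `r` -/
lemma traj_inj {t : ℕ} (hroot : σ^[t] x = r) (hmin : ∀ t' < t, σ^[t'] x ≠ r)
    {i j : ℕ} (hij : i < j) (hjt : j ≤ t) : σ^[i] x ≠ σ^[j] x := by
  intro h
  have : σ^[t - j + i] x = r := by
    have : σ^[t - j] (σ^[j] x) = r := by rw [← Function.iterate_add_apply, Nat.sub_add_cancel hjt, hroot]
    rw [← h, ← Function.iterate_add_apply] at this
    exact this
  exact hmin (t - j + i) (by omega) this


variable {V W : Type*}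

/-- The combined step function of a bipartite parent structure. -/
def step (f : V → W) (g : W → V) : V ⊕ W → V ⊕ W :=
  Sum.elim (fun v => Sum.inr (f v)) (fun w => Sum.inl (g w))

@[simp] lemma step_inl (f : V → W) (g : W → V) (v : V) :
    step f g (Sum.inl v) = Sum.inr (f v) := rfl

@[simp] lemma step_inr (f : V → W) (g : W → V) (w : W) :
    step f g (Sum.inr w) = Sum.inl (g w) := rfl

lemma step_ne (f : V → W) (g : W → V) (u : V ⊕ W) : step f g u ≠ u := by
  cases u <;> simp [step]

lemma step_even (f : V → W) (g : W → V) (j : ℕ) (v : V) :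
    (step f g)^[2 * j] (Sum.inl v) = Sum.inl ((g ∘ f)^[j] v) := by
  induction j generalizing v with
  | zero => simp
  | succ j ih =>
    have : 2 * (j + 1) = 2 + 2 * j := by ring
    rw [this, Function.iterate_add_apply, ih v]
    have h2 : (step f g)^[2] (Sum.inl ((g ∘ f)^[j] v)) = Sum.inl ((g ∘ f) ((g ∘ f)^[j] v)) := rfl
    rw [h2, Function.iterate_succ_apply']

lemma step_odd (f : V → W) (g : W → V) (j : ℕ) (v : V) :
    (step f g)^[2 * j + 1] (Sum.inl v) = Sum.inr (f ((g ∘ f)^[j] v)) := by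
  rw [Function.iterate_succ_apply', step_even]
  rfl

/-- If the step-trajectory from `inl v` hits `inr w`, the time is odd and given by `g∘f` iterates. -/
lemma step_hit {f : V → W} {g : W → V} {v : V} {w : W} {t : ℕ}
    (h : (step f g)^[t] (Sum.inl v) = Sum.inr w) :
    ∃ j, t = 2 * j + 1 ∧ f ((g ∘ f)^[j] v) = w := by
  rcases Nat.even_or_odd t with ⟨j, hj⟩ | ⟨j, hj⟩
  · exfalso
    rw [hj] at h
    rw [show j + j = 2 * j by ring, step_even] at h
    simp at h
  · rw [hj, step_odd] at h
    exact ⟨j, hj, by simpa using h⟩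

lemma per_inl_iff {f : V → W} {g : W → V} {v : V} :
    Per (step f g) (Sum.inl v) ↔ Per (g ∘ f) v := by
  constructor
  · rintro ⟨k, hk, hkv⟩
    rcases Nat.even_or_odd k with ⟨j, hj⟩ | ⟨j, hj⟩
    · rw [hj, show j + j = 2 * j by ring, step_even] at hkv
      refine ⟨j, by omega, by simpa using hkv⟩
    · rw [hj, step_odd] at hkv
      simp at hkv
  · rintro ⟨k, hk, hkv⟩
    exact ⟨2 * k, by omega, by rw [step_even, hkv]⟩

lemma per_inr_elim {f : V → W} {g : W → V} {w : W}
    (h : Per (step f g) (Sum.inr w)) :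
    ∃ v, Per (step f g) (Sum.inl v) ∧ f v = w := by
  obtain ⟨x, hx, hxw⟩ := h.pre
  cases x with
  | inl v => exact ⟨v, hx, by simpa [step] using hxw⟩
  | inr w' => simp [step] at hxw

lemma per_inr_g {f : V → W} {g : W → V} {w : W}
    (h : Per (step f g) (Sum.inr w)) : Per (step f g) (Sum.inl (g w)) := by
  simpa [step] using h.apply


section Graph

open SimpleGraph

variable {V W : Type*} (f : V → W) (g : W → V) (w₀ : W)

/-- every vertex reaches the root `inr w₀` -/
def Reach : Prop := ∀ u : V ⊕ W, ∃ k, (step f g)^[k] u = Sum.inr w₀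

/-- the graph whose edges join each non-root vertex to its parent -/
def graphOf : SimpleGraph (V ⊕ W) :=
  SimpleGraph.fromEdgeSet {e | ∃ u, u ≠ Sum.inr w₀ ∧ e = s(u, step f g u)}

variable {f g w₀}

lemma graphOf_adj {x y : V ⊕ W} :
    (graphOf f g w₀).Adj x y ↔
      (x ≠ Sum.inr w₀ ∧ y = step f g x) ∨ (y ≠ Sum.inr w₀ ∧ x = step f g y) := by
  rw [graphOf, fromEdgeSet_adj]
  constructor
  · rintro ⟨⟨u, hu, he⟩, hxy⟩
    rw [Sym2.eq_iff] at he
    rcases he with ⟨rfl, h2⟩ | ⟨h1, rfl⟩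
    · exact Or.inl ⟨hu, h2⟩
    · exact Or.inr ⟨hu, h1⟩
  · rintro (⟨hx, rfl⟩ | ⟨hy, rfl⟩)
    · exact ⟨⟨x, hx, rfl⟩, fun h => step_ne f g x h.symm⟩
    · exact ⟨⟨y, hy, Sym2.eq_swap⟩, step_ne f g y⟩

/-- height above the root -/
noncomputable def htf (u : V ⊕ W) : ℕ := sInf {k | (step f g)^[k] u = Sum.inr w₀}

variable (hr : Reach f g w₀)
include hr

lemma htf_spec (u : V ⊕ W) : (step f g)^[htf (f := f) (g := g) (w₀ := w₀) u] u = Sum.inr w₀ :=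
  Nat.sInf_mem (hr u)

omit hr

lemma htf_le {u : V ⊕ W} {k : ℕ} (h : (step f g)^[k] u = Sum.inr w₀) :
    htf (f := f) (g := g) (w₀ := w₀) u ≤ k := Nat.sInf_le h

lemma htf_min {u : V ⊕ W} {k : ℕ} (h : k < htf (f := f) (g := g) (w₀ := w₀) u) :
    (step f g)^[k] u ≠ Sum.inr w₀ := Nat.notMem_of_lt_sInf h

include hr

lemma htf_pos {u : V ⊕ W} (h : u ≠ Sum.inr w₀) : 0 < htf (f := f) (g := g) (w₀ := w₀) u := by
  rcases Nat.eq_zero_or_pos (htf (f := f) (g := g) (w₀ := w₀) u) with h0 | h1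
  · exfalso; have := htf_spec hr u; rw [h0] at this; exact h this
  · exact h1

lemma htf_step {u : V ⊕ W} (h : u ≠ Sum.inr w₀) :
    htf (f := f) (g := g) (w₀ := w₀) (step f g u) + 1 = htf (f := f) (g := g) (w₀ := w₀) u := by
  have hpos := htf_pos hr h
  have h1 : htf (f := f) (g := g) (w₀ := w₀) (step f g u)
      ≤ htf (f := f) (g := g) (w₀ := w₀) u - 1 := by
    apply htf_le
    rw [← Function.iterate_succ_apply, Nat.succ_eq_add_one, Nat.sub_add_cancel hpos]
    exact htf_spec hr u
  have h2 : htf (f := f) (g := g) (w₀ := w₀) u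
      ≤ htf (f := f) (g := g) (w₀ := w₀) (step f g u) + 1 := by
    apply htf_le
    rw [Function.iterate_succ_apply]
    exact htf_spec hr (step f g u)
  omega

lemma graphOf_reachable (u : V ⊕ W) : (graphOf f g w₀).Reachable u (Sum.inr w₀) := by
  suffices H : ∀ n u, htf (f := f) (g := g) (w₀ := w₀) u ≤ n →
      (graphOf f g w₀).Reachable u (Sum.inr w₀) by
    exact H _ u le_rfl
  intro n
  induction n with
  | zero =>
    intro u hu
    have h0 : htf (f := f) (g := g) (w₀ := w₀) u = 0 := Nat.le_zero.mp hu
    have := htf_spec hr u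
    rw [h0] at this
    rw [show u = Sum.inr w₀ from this]
  | succ n ih =>
    intro u hu
    by_cases h : u = Sum.inr w₀
    · rw [h]
    · have hadj : (graphOf f g w₀).Adj u (step f g u) := graphOf_adj.mpr (Or.inl ⟨h, rfl⟩)
      have hht := htf_step hr h
      exact hadj.reachable.trans (ih (step f g u) (by omega))

lemma graphOf_connected : (graphOf f g w₀).Connected := by
  have : Nonempty (V ⊕ W) := ⟨Sum.inr w₀⟩
  exact Connected.mk fun a b =>
    (graphOf_reachable hr a).trans (graphOf_reachable hr b).symm

lemma graphOf_isBridge {x : V ⊕ W} (hx : x ≠ Sum.inr w₀) :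
    (graphOf f g w₀).IsBridge s(x, step f g x) := by
  rw [isBridge_iff]
  show ¬ (graphOf f g w₀ \ fromEdgeSet {s(x, step f g x)}).Reachable x (step f g x)
  set G' := graphOf f g w₀ \ fromEdgeSet {s(x, step f g x)} with hG'
  set D : Set (V ⊕ W) :=
    {u | ∃ i, i ≤ htf (f := f) (g := g) (w₀ := w₀) u ∧ (step f g)^[i] u = x} with hD
  -- adjacency in G' preserves D-membership
  have key : ∀ a b, G'.Adj a b → (a ∈ D ↔ b ∈ D) := by
    have main : ∀ a b, G'.Adj a b → a ≠ Sum.inr w₀ → b = step f g a → (a ∈ D ↔ b ∈ D) := by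
      intro a b hab ha hb
      have hne : a ≠ x := by
        intro rfl'
        subst rfl'
        rw [hG', sdiff_adj] at hab
        exact hab.2 (by rw [fromEdgeSet_adj]; exact ⟨by rw [hb]; exact rfl, hab.1.ne⟩)
      have hstep := htf_step hr ha
      subst hb
      constructor
      · rintro ⟨i, hi, hix⟩
        have hipos : i ≠ 0 := by
          intro h0; rw [h0] at hix; exact hne hix
        refine ⟨i - 1, by omega, ?_⟩
        have h9 : (step f g)^[i - 1 + 1] a = x := by rwa [show i - 1 + 1 = i by omega]
        rw [Function.iterate_succ_apply] at h9
        exact h9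
      · rintro ⟨j, hj, hjx⟩
        exact ⟨j + 1, by omega, by rwa [Function.iterate_succ_apply]⟩
    intro a b hab
    have hg : (graphOf f g w₀).Adj a b := by rw [hG', sdiff_adj] at hab; exact hab.1
    rcases graphOf_adj.mp hg with ⟨ha, hb⟩ | ⟨hbne, hab2⟩
    · exact main a b hab ha hb
    · exact (main b a hab.symm hbne hab2).symm
  intro hreach
  obtain ⟨p⟩ := hreach
  have hwalk : ∀ {a b : V ⊕ W} (q : G'.Walk a b), a ∈ D → b ∈ D := by
    intro a b q
    induction q with
    | nil => exact id
    | cons h q ih => intro ha; exact ih ((key _ _ h).mp ha)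
  have hxD : x ∈ D := ⟨0, Nat.zero_le _, rfl⟩
  have hsxD : step f g x ∈ D := hwalk p hxD
  obtain ⟨j, hj, hjx⟩ := hsxD
  have hstep := htf_step hr hx
  have h0 : (step f g)^[0] x = x := rfl
  have : (step f g)^[j + 1] x = x := by rwa [Function.iterate_succ_apply]
  exact traj_inj (htf_spec hr x) (fun t' ht' => htf_min ht') (Nat.succ_pos j)
    (by omega) (by simp [this])

lemma graphOf_isTree : (graphOf f g w₀).IsTree := by
  refine ⟨graphOf_connected hr, ?_⟩
  rw [isAcyclic_iff_forall_adj_isBridge]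
  intro a b hab
  rcases graphOf_adj.mp hab with ⟨ha, rfl⟩ | ⟨hb, rfl⟩
  · exact graphOf_isBridge hr ha
  · rw [Sym2.eq_swap]
    exact graphOf_isBridge hr hb

omit hr

lemma graphOf_le : graphOf f g w₀ ≤ completeBipartiteGraph V W := by
  intro a b hab
  rcases graphOf_adj.mp hab with ⟨_, rfl⟩ | ⟨_, rfl⟩
  · cases a <;> simp
  · cases b <;> simp [completeBipartiteGraph]

end Graph


section TreeToFun

open SimpleGraph

variable {V W : Type*} {T : SimpleGraph (V ⊕ W)}

/-- the unique path from `u` to the root -/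
noncomputable def pwalk (hT : T.IsTree) (w₀ : W) (u : V ⊕ W) : T.Walk u (Sum.inr w₀) :=
  (hT.existsUnique_path u (Sum.inr w₀)).choose

lemma pwalk_isPath (hT : T.IsTree) (w₀ : W) (u : V ⊕ W) : (pwalk hT w₀ u).IsPath :=
  (hT.existsUnique_path u (Sum.inr w₀)).choose_spec.1

lemma pwalk_unique (hT : T.IsTree) (w₀ : W) {u : V ⊕ W} {p : T.Walk u (Sum.inr w₀)}
    (hp : p.IsPath) : p = pwalk hT w₀ u :=
  (hT.existsUnique_path u (Sum.inr w₀)).choose_spec.2 p hp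

/-- parent of a vertex: next vertex on the path to the root -/
noncomputable def parentT (hT : T.IsTree) (w₀ : W) (u : V ⊕ W) : V ⊕ W :=
  (pwalk hT w₀ u).getVert 1

lemma parentT_adj (hT : T.IsTree) (w₀ : W) {u : V ⊕ W} (hu : u ≠ Sum.inr w₀) :
    T.Adj u (parentT hT w₀ u) := by
  have hnn : ¬(pwalk hT w₀ u).Nil := Walk.not_nil_of_ne hu
  rw [Walk.nil_iff_length_eq] at hnn
  have := (pwalk hT w₀ u).adj_getVert_succ (i := 0) (by omega)
  simpa [Walk.getVert_zero, parentT] using this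

lemma parentT_tail (hT : T.IsTree) (w₀ : W) {u : V ⊕ W} (hu : u ≠ Sum.inr w₀) :
    (pwalk hT w₀ u).length = (pwalk hT w₀ (parentT hT w₀ u)).length + 1 := by
  have hnn : ¬(pwalk hT w₀ u).Nil := Walk.not_nil_of_ne hu
  have htail : (pwalk hT w₀ u).tail = pwalk hT w₀ (parentT hT w₀ u) :=
    pwalk_unique hT w₀ ((pwalk_isPath hT w₀ u).tail)
  rw [← htail, ← Walk.length_tail_add_one hnn]
  rfl

variable (hK : T ≤ completeBipartiteGraph V W) (hT : T.IsTree) (w₀ : W) (x : V)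

/-- the V-side parent map extracted from a tree -/
noncomputable def fT : V → W := fun v =>
  Sum.elim (fun _ => w₀) id (parentT hT w₀ (Sum.inl v))

/-- the W-side parent map extracted from a tree, with junk value `x` at the root -/
noncomputable def gT : W → V := fun w =>
  letI := Classical.decEq W
  if w = w₀ then x else Sum.elim id (fun _ => x) (parentT hT w₀ (Sum.inr w))

include hK

lemma fT_eq (v : V) : Sum.inr (fT hT w₀ v) = parentT hT w₀ (Sum.inl v) := by
  have hadj := hK (parentT_adj hT w₀ (u := Sum.inl v) (by simp))
  simp only [completeBipartiteGraph_adj] at hadj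
  rcases hadj with ⟨_, hR⟩ | ⟨hL, _⟩
  · obtain ⟨w, hw⟩ := Sum.isRight_iff.mp hR
    simp [fT, hw]
  · simp at hL

lemma gT_eq {w : W} (hw : w ≠ w₀) :
    Sum.inl (gT hT w₀ x w) = parentT hT w₀ (Sum.inr w) := by
  have hadj := hK (parentT_adj hT w₀ (u := Sum.inr w) (by simp [hw]))
  simp only [completeBipartiteGraph_adj] at hadj
  rcases hadj with ⟨hL, _⟩ | ⟨_, hL⟩
  · simp at hL
  · obtain ⟨v', hv'⟩ := Sum.isLeft_iff.mp hL
    simp [gT, hw, hv']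

lemma stepT_eq {u : V ⊕ W} (hu : u ≠ Sum.inr w₀) :
    step (fT hT w₀) (gT hT w₀ x) u = parentT hT w₀ u := by
  cases u with
  | inl v => rw [step_inl]; exact fT_eq hK hT w₀ v
  | inr w =>
    have hw : w ≠ w₀ := fun h => hu (by rw [h])
    rw [step_inr]; exact gT_eq hK hT w₀ x hw

lemma treeReach : Reach (fT hT w₀) (gT hT w₀ x) w₀ := by
  intro u
  suffices H : ∀ (n : ℕ) (u : V ⊕ W), (pwalk hT w₀ u).length ≤ n →
      ∃ k, (step (fT hT w₀) (gT hT w₀ x))^[k] u = Sum.inr w₀ by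
    exact H _ u le_rfl
  intro n
  induction n with
  | zero =>
    intro u hu
    have := Walk.eq_of_length_eq_zero (Nat.le_zero.mp hu)
    exact ⟨0, this⟩
  | succ n ih =>
    intro u hu
    by_cases h : u = Sum.inr w₀
    · exact ⟨0, h⟩
    · have hlen := parentT_tail hT w₀ h
      obtain ⟨k, hk⟩ := ih (parentT hT w₀ u) (by omega)
      refine ⟨k + 1, ?_⟩
      rw [Function.iterate_succ_apply, stepT_eq hK hT w₀ x h]
      exact hk

end TreeToFun


section RoundTrips

open SimpleGraph

variable {V W : Type*} [DecidableEq V] [DecidableEq W] {f : V → W} {g : W → V} {w₀ : W}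

/-- the walk to the root following the parent pointers -/
noncomputable def followWalk (hr : Reach f g w₀) : (n : ℕ) → (u : V ⊕ W) →
    htf (f := f) (g := g) (w₀ := w₀) u ≤ n → (graphOf f g w₀).Walk u (Sum.inr w₀)
  | 0, u, h => Walk.nil.copy (by
      have h0 : htf (f := f) (g := g) (w₀ := w₀) u = 0 := Nat.le_zero.mp h
      have hs := htf_spec hr u
      rw [h0] at hs
      exact hs.symm.trans (Function.iterate_zero_apply _ _)) rfl
  | (n+1), u, _h =>
    if hu : u = Sum.inr w₀ then Walk.nil.copy hu.symm rfl
    else Walk.cons (graphOf_adj.mpr (Or.inl ⟨hu, rfl⟩))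
      (followWalk hr n (step f g u) (by
        have := htf_step hr hu; omega))

lemma followWalk_support (hr : Reach f g w₀) : ∀ (n : ℕ) (u : V ⊕ W)
    (h : htf (f := f) (g := g) (w₀ := w₀) u ≤ n) (y : V ⊕ W),
    y ∈ (followWalk hr n u h).support →
    ∃ i, i ≤ htf (f := f) (g := g) (w₀ := w₀) u ∧ y = (step f g)^[i] u := by
  intro n
  induction n with
  | zero =>
    intro u h y hy
    simp only [followWalk, Walk.support_copy, Walk.support_nil, List.mem_singleton] at hy
    have h0 : htf (f := f) (g := g) (w₀ := w₀) u = 0 := Nat.le_zero.mp h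
    have hs := htf_spec hr u
    rw [h0] at hs
    exact ⟨0, Nat.zero_le _, by rw [hy, ← hs]⟩
  | succ n ih =>
    intro u h y hy
    rw [followWalk] at hy
    by_cases hu : u = Sum.inr w₀
    · rw [dif_pos hu] at hy
      simp only [Walk.support_copy, Walk.support_nil, List.mem_singleton] at hy
      exact ⟨0, Nat.zero_le _, by rw [hy, hu]; rfl⟩
    · rw [dif_neg hu] at hy
      rw [Walk.support_cons, List.mem_cons] at hy
      rcases hy with rfl | hy
      · exact ⟨0, Nat.zero_le _, rfl⟩
      · obtain ⟨i, hi, hyi⟩ := ih (step f g u) _ y hy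
        have := htf_step hr hu
        exact ⟨i + 1, by omega, by rw [Function.iterate_succ_apply]; exact hyi⟩

lemma followWalk_isPath (hr : Reach f g w₀) : ∀ (n : ℕ) (u : V ⊕ W)
    (h : htf (f := f) (g := g) (w₀ := w₀) u ≤ n), (followWalk hr n u h).IsPath := by
  intro n
  induction n with
  | zero => intro u h; simp [followWalk]
  | succ n ih =>
    intro u h
    rw [followWalk]
    by_cases hu : u = Sum.inr w₀
    · rw [dif_pos hu]; simp
    · rw [dif_neg hu]
      rw [Walk.cons_isPath_iff]
      refine ⟨ih _ _, fun hmem => ?_⟩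
      obtain ⟨i, hi, hyi⟩ := followWalk_support hr n (step f g u) _ u hmem
      have hstep := htf_step hr hu
      have : (step f g)^[i + 1] u = u := by
        rw [Function.iterate_succ_apply]; exact hyi.symm
      exact traj_inj (htf_spec hr u) (fun t' ht' => htf_min ht') (Nat.succ_pos i)
        (by omega) (by simp [this])

lemma followWalk_getVert1 (hr : Reach f g w₀) : ∀ (n : ℕ) (u : V ⊕ W)
    (h : htf (f := f) (g := g) (w₀ := w₀) u ≤ n) (hu : u ≠ Sum.inr w₀),
    (followWalk hr n u h).getVert 1 = step f g u := by
  intro n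
  induction n with
  | zero =>
    intro u h hu
    exact absurd h (by have := htf_pos hr hu; omega)
  | succ n _ih =>
    intro u h hu
    rw [followWalk, dif_neg hu, Walk.getVert_cons_succ, Walk.getVert_zero]

lemma parentT_graphOf (hr : Reach f g w₀) {u : V ⊕ W} (hu : u ≠ Sum.inr w₀) :
    parentT (graphOf_isTree hr) w₀ u = step f g u := by
  rw [parentT, ← pwalk_unique (graphOf_isTree hr) w₀ (followWalk_isPath hr _ u le_rfl),
    followWalk_getVert1 hr _ u le_rfl hu]

lemma fT_graphOf (hr : Reach f g w₀) : fT (graphOf_isTree hr) w₀ = f := by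
  funext v
  have h1 := fT_eq (graphOf_le (f := f) (g := g) (w₀ := w₀)) (graphOf_isTree hr) w₀ v
  rw [parentT_graphOf hr (by simp)] at h1
  simpa using h1

lemma gT_graphOf (hr : Reach f g w₀) : gT (graphOf_isTree hr) w₀ (g w₀) = g := by
  funext w
  by_cases hw : w = w₀
  · subst hw; simp [gT]
  · have h1 := gT_eq (graphOf_le (f := f) (g := g) (w₀ := w₀)) (graphOf_isTree hr) w₀ (g w₀) hw
    rw [parentT_graphOf hr (by simp [hw])] at h1
    simpa using h1

omit [DecidableEq V] [DecidableEq W] in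
lemma graphOf_fT_gT [Fintype V] [Fintype W] {T : SimpleGraph (V ⊕ W)}
    (hK : T ≤ completeBipartiteGraph V W) (hT : T.IsTree) (w₀ : W) (x : V) :
    graphOf (fT hT w₀) (gT hT w₀ x) w₀ = T := by
  classical
  have hr := treeReach hK hT w₀ x
  have hle : graphOf (fT hT w₀) (gT hT w₀ x) w₀ ≤ T := by
    intro a b hab
    rcases graphOf_adj.mp hab with ⟨ha, rfl⟩ | ⟨hb, rfl⟩
    · rw [stepT_eq hK hT w₀ x ha]; exact parentT_adj hT w₀ ha
    · rw [stepT_eq hK hT w₀ x hb]; exact (parentT_adj hT w₀ hb).symm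
  letI : Fintype (graphOf (fT hT w₀) (gT hT w₀ x) w₀).edgeSet := Fintype.ofFinite _
  letI : Fintype T.edgeSet := Fintype.ofFinite _
  have hG := (graphOf_isTree hr).card_edgeFinset
  have hTT := hT.card_edgeFinset
  apply edgeFinset_inj.mp
  exact Finset.eq_of_subset_of_card_le (edgeFinset_mono hle) (by omega)

end RoundTrips

section EquivA

open SimpleGraph

variable (V W : Type*)

/-- spanning trees of the complete bipartite graph -/
def TreeSub : Type _ :=
  {T : SimpleGraph (V ⊕ W) // T ≤ completeBipartiteGraph V W ∧ T.IsTree}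

/-- rooted parent structures -/
def RootedSub (w₀ : W) : Type _ :=
  {fg : (V → W) × (W → V) // Reach fg.1 fg.2 w₀}

variable {V W}

/-- a rooted parent structure is the same as a spanning tree plus a junk vertex -/
noncomputable def equivA [Fintype V] [Fintype W] [DecidableEq V] [DecidableEq W] (w₀ : W) :
    RootedSub V W w₀ ≃ TreeSub V W × V where
  toFun fg := (⟨graphOf fg.1.1 fg.1.2 w₀, graphOf_le, graphOf_isTree fg.2⟩, fg.1.2 w₀)
  invFun Tx := ⟨(fT Tx.1.2.2 w₀, gT Tx.1.2.2 w₀ Tx.2),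
    treeReach Tx.1.2.1 Tx.1.2.2 w₀ Tx.2⟩
  left_inv fg := by
    obtain ⟨⟨f, g⟩, hr⟩ := fg
    apply Subtype.ext
    exact Prod.ext (fT_graphOf hr) (gT_graphOf hr)
  right_inv Tx := by
    obtain ⟨⟨T, hK, hT⟩, x⟩ := Tx
    have hG := graphOf_fT_gT hK hT w₀ x
    refine Prod.ext (Subtype.ext ?_) ?_
    · exact hG
    · simp [gT]

end EquivA


section Joyal

variable {V W : Type*} [Fintype V] [Fintype W] [LinearOrder V] [DecidableEq W] [Nonempty V]

/-- generic transfer of reachability along a modification supported on `R` -/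
lemma reach_transfer {α : Type*} {s s' : α → α} {R : Set α} {r : α}
    (hss : ∀ x, x ∉ R → s' x = s x) (hR : ∀ u, ∃ t, s^[t] u ∈ R)
    (hroot : ∀ x ∈ R, ∃ t, s'^[t] x = r) : ∀ u, ∃ t, s'^[t] u = r := by
  intro u
  obtain ⟨t, ht⟩ := hR u
  induction t generalizing u with
  | zero => exact hroot u ht
  | succ t ih =>
    by_cases hu : u ∈ R
    · exact hroot u hu
    · rw [Function.iterate_succ_apply] at ht
      obtain ⟨t', ht'⟩ := ih (s u) ht
      exact ⟨t' + 1, by rw [Function.iterate_succ_apply, hss u hu]; exact ht'⟩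

lemma closed_iterate {α : Type*} {s : α → α} {R : Set α}
    (hclosed : ∀ x ∈ R, s x ∈ R) {x : α} (hx : x ∈ R) (n : ℕ) : s^[n] x ∈ R := by
  induction n with
  | zero => exact hx
  | succ n ih => rw [Function.iterate_succ_apply']; exact hclosed _ ih

/-- a periodic point whose trajectory meets a closed set lies in that set -/
lemma per_mem_closed {α : Type*} {s : α → α} {R : Set α}
    (hclosed : ∀ x ∈ R, s x ∈ R) {x : α} (hreach : ∃ t, s^[t] x ∈ R)
    (hper : Per s x) : x ∈ R := by
  obtain ⟨t, ht⟩ := hreach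
  obtain ⟨p, hp, hpx⟩ := hper
  obtain ⟨n, hn⟩ : ∃ n, t ≤ n * p := ⟨t, Nat.le_mul_of_pos_right t hp⟩
  have hx : s^[n * p] x = x := by
    rw [Nat.mul_comm, Function.iterate_mul]
    exact Function.iterate_fixed hpx n
  have : s^[n * p] x ∈ R := by
    have e : n * p = (n * p - t) + t := by omega
    rw [e, Function.iterate_add_apply]
    exact closed_iterate hclosed ht _
  rwa [hx] at this

variable (f : V → W) (g : W → V)

/-- the set of periodic `V`-points -/
noncomputable def perSet : Finset V :=
  letI := Classical.decPred fun v => Per (step f g) (Sum.inl v)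
  Finset.univ.filter fun v => Per (step f g) (Sum.inl v)

/-- the periodic `V`-points in increasing order -/
noncomputable def sortPer : List V := (perSet f g).sort (· ≤ ·)

/-- the spine: images of the sorted periodic points under `g ∘ f` -/
noncomputable def spineA : List V := (sortPer f g).map (g ∘ f)

/-- images of the spine under `f` -/
noncomputable def spineB : List W := (spineA f g).map f

/-- the root produced by the forward (Joyal) map -/
noncomputable def rootW : W :=
  f ((spineA f g).getD ((spineA f g).length - 1) (Classical.arbitrary V))

/-- the modified `W`-side parent map produced by the forward (Joyal) map -/
noncomputable def gFwd : W → V := fun w =>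
  if w ∈ spineB f g then
    (spineA f g).getD (((spineB f g).idxOf w + 1) % (spineA f g).length)
      (Classical.arbitrary V)
  else g w

variable {f g}

lemma mem_perSet {v : V} : v ∈ perSet f g ↔ Per (step f g) (Sum.inl v) := by
  rw [perSet]
  letI := Classical.decPred fun v => Per (step f g) (Sum.inl v)
  simp [Finset.mem_filter]

lemma sortPer_nodup : (sortPer f g).Nodup := Finset.sort_nodup _ _

lemma mem_sortPer {v : V} : v ∈ sortPer f g ↔ Per (step f g) (Sum.inl v) := by
  rw [sortPer, Finset.mem_sort]; exact mem_perSet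

lemma perV_step {v : V} (h : Per (step f g) (Sum.inl v)) :
    Per (step f g) (Sum.inl (g (f v))) := by
  have h2 := h.apply.apply
  simpa using h2

lemma perV_f_inj {v v' : V} (h : Per (step f g) (Sum.inl v))
    (h' : Per (step f g) (Sum.inl v')) (hf : f v = f v') : v = v' := by
  have := per_inj h h' (by simp [hf])
  simpa using this

lemma perV_h_inj {v v' : V} (h : Per (step f g) (Sum.inl v))
    (h' : Per (step f g) (Sum.inl v')) (hh : g (f v) = g (f v')) : v = v' := by
  have hfv : Per (step f g) (Sum.inr (f v)) := by simpa using h.apply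
  have hfv' : Per (step f g) (Sum.inr (f v')) := by simpa using h'.apply
  have : Sum.inr (f v) = Sum.inr (f v') := per_inj hfv hfv' (by simp [hh])
  exact perV_f_inj h h' (by simpa using this)

lemma spineA_mem {x : V} (hx : x ∈ spineA f g) : Per (step f g) (Sum.inl x) := by
  rw [spineA] at hx
  obtain ⟨y, hy, rfl⟩ := List.mem_map.mp hx
  exact perV_step (mem_sortPer.mp hy)

lemma spineA_nodup : (spineA f g).Nodup := by
  rw [spineA]
  refine List.Nodup.map_on ?_ sortPer_nodup
  intro x hx y hy hxy
  exact perV_h_inj (mem_sortPer.mp hx) (mem_sortPer.mp hy) hxy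

lemma spineB_nodup : (spineB f g).Nodup := by
  rw [spineB]
  refine List.Nodup.map_on ?_ spineA_nodup
  intro x hx y hy hxy
  exact perV_f_inj (spineA_mem hx) (spineA_mem hy) hxy

lemma spineA_length : (spineA f g).length = (sortPer f g).length := by
  rw [spineA, List.length_map]

lemma spineA_toFinset : (spineA f g).toFinset = perSet f g := by
  classical
  apply Finset.eq_of_subset_of_card_le
  · intro x hx
    rw [List.mem_toFinset] at hx
    exact mem_perSet.mpr (spineA_mem hx)
  · rw [List.toFinset_card_of_nodup spineA_nodup, spineA_length, sortPer,
      Finset.length_sort]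

lemma mem_spineA {x : V} : x ∈ spineA f g ↔ Per (step f g) (Sum.inl x) := by
  rw [← List.mem_toFinset, spineA_toFinset, mem_perSet]

lemma perSet_nonempty : (perSet f g).Nonempty := by
  obtain ⟨t, ht⟩ := exists_iterate_per (step f g) (Sum.inl (Classical.arbitrary V))
  set x := (step f g)^[t] (Sum.inl (Classical.arbitrary V)) with hx
  cases hxx : x with
  | inl v => exact ⟨v, mem_perSet.mpr (by rwa [hxx] at ht)⟩
  | inr w =>
    rw [hxx] at ht
    exact ⟨g w, mem_perSet.mpr (per_inr_g ht)⟩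

lemma spineA_ne_nil : spineA f g ≠ [] := by
  intro h
  have := spineA_toFinset (f := f) (g := g)
  rw [h] at this
  obtain ⟨v, hv⟩ := perSet_nonempty (f := f) (g := g)
  rw [← this] at hv
  simp at hv

lemma spineA_length_pos : 0 < (spineA f g).length :=
  List.length_pos_iff.mpr spineA_ne_nil

end Joyal


section Joyal2

set_option linter.unusedSectionVars false

variable {V W : Type*} [Fintype V] [Fintype W] [LinearOrder V] [DecidableEq W] [Nonempty V]
variable {f : V → W} {g : W → V}

lemma spineB_length : (spineB f g).length = (spineA f g).length := by
  rw [spineB, List.length_map]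

lemma spineB_getElem {i : ℕ} (hi : i < (spineA f g).length) :
    (spineB f g)[i]'(by rwa [spineB_length]) = f ((spineA f g)[i]) := by
  simp [spineB]

lemma gFwd_spec {i : ℕ} (hi : i < (spineA f g).length) :
    gFwd f g (f ((spineA f g)[i])) =
      (spineA f g)[(i + 1) % (spineA f g).length]'
        (Nat.mod_lt _ (by omega)) := by
  have hmem : f ((spineA f g)[i]) ∈ spineB f g := by
    rw [← spineB_getElem hi]
    exact List.getElem_mem _
  rw [gFwd, if_pos hmem]
  have hidx : (spineB f g).idxOf (f ((spineA f g)[i])) = i := by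
    rw [← spineB_getElem hi]
    exact List.Nodup.idxOf_getElem spineB_nodup _ _
  rw [hidx, List.getD_eq_getElem]

lemma rootW_eq : rootW f g =
    f ((spineA f g)[(spineA f g).length - 1]'
      (by have := spineA_length_pos (f := f) (g := g); omega)) := by
  rw [rootW, List.getD_eq_getElem]

/-- the new step function after the forward map -/
lemma stepFwd_two (x : V) :
    (step f (gFwd f g))^[2] (Sum.inl x) = Sum.inl (gFwd f g (f x)) := rfl

lemma spineA_reach {i : ℕ} (hi : i < (spineA f g).length) :
    ∃ t, (step f (gFwd f g))^[t] (Sum.inl ((spineA f g)[i])) = Sum.inr (rootW f g) := by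
  set k := (spineA f g).length with hk
  suffices H : ∀ (n i : ℕ) (hi : i < k), k - 1 - i ≤ n →
      ∃ t, (step f (gFwd f g))^[t] (Sum.inl ((spineA f g)[i])) = Sum.inr (rootW f g) by
    exact H (k - 1 - i) i hi le_rfl
  intro n
  induction n with
  | zero =>
    intro i hi hn
    have : i = k - 1 := by omega
    subst this
    refine ⟨1, ?_⟩
    rw [Function.iterate_one, step_inl, rootW_eq]
  | succ n ih =>
    intro i hi hn
    by_cases hik : i = k - 1
    · subst hik
      exact ⟨1, by rw [Function.iterate_one, step_inl, rootW_eq]⟩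
    · have hi1 : i + 1 < k := by omega
      obtain ⟨t, ht⟩ := ih (i + 1) hi1 (by omega)
      refine ⟨t + 2, ?_⟩
      have h2 : (step f (gFwd f g))^[t + 2] (Sum.inl ((spineA f g)[i])) =
          (step f (gFwd f g))^[t] ((step f (gFwd f g))^[2] (Sum.inl ((spineA f g)[i]))) :=
        Function.iterate_add_apply _ t 2 _
      rw [h2, stepFwd_two, gFwd_spec hi]
      have hmod : (i + 1) % (spineA f g).length = i + 1 := Nat.mod_eq_of_lt hi1
      simp only [hmod]
      exact ht

/-- the forward output satisfies the reachability condition -/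
lemma fwd_reach : Reach f (gFwd f g) (rootW f g) := by
  set R : Set (V ⊕ W) :=
    {u | ∃ i, ∃ hi : i < (spineA f g).length,
      u = Sum.inl ((spineA f g)[i]) ∨ u = Sum.inr (f ((spineA f g)[i]))} with hR
  have hmemA : ∀ x ∈ spineA f g, (Sum.inl x : V ⊕ W) ∈ R := by
    intro x hx
    obtain ⟨i, hi, hxi⟩ := List.mem_iff_getElem.mp hx
    exact ⟨i, hi, Or.inl (by rw [hxi])⟩
  have hroot : ∀ x ∈ R, ∃ t, (step f (gFwd f g))^[t] x = Sum.inr (rootW f g) := by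
    rintro x ⟨i, hi, rfl | rfl⟩
    · exact spineA_reach hi
    · obtain ⟨t, ht⟩ := spineA_reach (Nat.mod_lt (i + 1) (by omega) :
        (i + 1) % (spineA f g).length < (spineA f g).length)
      refine ⟨t + 1, ?_⟩
      rw [Function.iterate_succ_apply, step_inr, gFwd_spec hi]
      exact ht
  have hss : ∀ x, x ∉ R → step f (gFwd f g) x = step f g x := by
    intro x hx
    cases x with
    | inl v => rfl
    | inr w =>
      rw [step_inr, step_inr]
      congr 1
      rw [gFwd, if_neg]
      intro hw
      obtain ⟨i, hi, hwi⟩ := List.mem_iff_getElem.mp hw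
      refine hx ⟨i, by rwa [spineB_length] at hi, Or.inr ?_⟩
      rw [← hwi, spineB_getElem]
  have hreach : ∀ u, ∃ t, (step f g)^[t] u ∈ R := by
    intro u
    obtain ⟨t, ht⟩ := exists_iterate_per (step f g) u
    refine ⟨t, ?_⟩
    set x := (step f g)^[t] u
    cases hxx : x with
    | inl v =>
      rw [hxx] at ht
      exact hmemA v (mem_spineA.mpr ht)
    | inr w =>
      rw [hxx] at ht
      obtain ⟨v, hv, hfv⟩ := per_inr_elim ht
      have hvA : v ∈ spineA f g := mem_spineA.mpr hv
      obtain ⟨i, hi, hvi⟩ := List.mem_iff_getElem.mp hvA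
      exact ⟨i, hi, Or.inr (by rw [hvi, hfv])⟩
  exact reach_transfer hss hreach hroot

end Joyal2


section Joyal3

set_option linter.unusedSectionVars false

variable {V W : Type*} [Fintype V] [Fintype W] [LinearOrder V] [DecidableEq W]
variable {f : V → W} {g : W → V} {w₀ : W}

lemma exists_spine_idx (hr : Reach f g w₀) : ∃ j, f ((g ∘ f)^[j] (g w₀)) = w₀ := by
  obtain ⟨t, ht⟩ := hr (Sum.inl (g w₀))
  obtain ⟨j, _, hj⟩ := step_hit ht
  exact ⟨j, hj⟩

/-- index of the last spine vertex for the inverse map -/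
noncomputable def invK (hr : Reach f g w₀) : ℕ :=
  letI := Classical.decPred fun j => f ((g ∘ f)^[j] (g w₀)) = w₀
  Nat.find (exists_spine_idx hr)

lemma invK_spec (hr : Reach f g w₀) : f ((g ∘ f)^[invK hr] (g w₀)) = w₀ := by
  rw [invK]
  letI := Classical.decPred fun j => f ((g ∘ f)^[j] (g w₀)) = w₀
  exact Nat.find_spec (exists_spine_idx hr)

lemma invK_min (hr : Reach f g w₀) {j : ℕ} (hj : j < invK hr) :
    f ((g ∘ f)^[j] (g w₀)) ≠ w₀ := by
  rw [invK] at hj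
  letI := Classical.decPred fun j => f ((g ∘ f)^[j] (g w₀)) = w₀
  exact Nat.find_min (exists_spine_idx hr) hj

/-- the spine of the inverse map -/
noncomputable def aInv (hr : Reach f g w₀) : List V :=
  (List.range (invK hr + 1)).map (fun j => (g ∘ f)^[j] (g w₀))

lemma aInv_length (hr : Reach f g w₀) : (aInv hr).length = invK hr + 1 := by
  rw [aInv, List.length_map, List.length_range]

lemma aInv_getElem (hr : Reach f g w₀) {j : ℕ} (hj : j < (aInv hr).length) :
    (aInv hr)[j] = (g ∘ f)^[j] (g w₀) := by
  simp only [aInv, List.getElem_map, List.getElem_range]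

lemma aInv_nodup (hr : Reach f g w₀) : (aInv hr).Nodup := by
  rw [List.nodup_iff_injective_getElem]
  rintro ⟨i, hi⟩ ⟨j, hj⟩ hij
  simp only [aInv_getElem hr hi, aInv_getElem hr hj] at hij
  rw [aInv_length hr] at hi hj
  by_contra hne
  simp only [Fin.mk.injEq] at hne
  -- wlog i < j
  rcases Nat.lt_or_ge i j with h | h
  · -- i < j ≤ invK
    have : f ((g ∘ f)^[invK hr - j + i] (g w₀)) = w₀ := by
      have h1 : (g ∘ f)^[invK hr] (g w₀) = (g ∘ f)^[invK hr - j] ((g ∘ f)^[j] (g w₀)) := by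
        rw [← Function.iterate_add_apply]
        congr 1
        omega
      rw [← hij, ← Function.iterate_add_apply] at h1
      have := invK_spec hr
      rw [h1] at this
      exact this
    exact invK_min hr (by omega) this
  · have hlt : j < i := by omega
    have : f ((g ∘ f)^[invK hr - i + j] (g w₀)) = w₀ := by
      have h1 : (g ∘ f)^[invK hr] (g w₀) = (g ∘ f)^[invK hr - i] ((g ∘ f)^[i] (g w₀)) := by
        rw [← Function.iterate_add_apply]
        congr 1
        omega
      rw [hij, ← Function.iterate_add_apply] at h1
      have := invK_spec hr
      rw [h1] at this
      exact this
    exact invK_min hr (by omega) this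

lemma aInv_f_inj (hr : Reach f g w₀) {i j : ℕ} (hi : i < (aInv hr).length)
    (hj : j < (aInv hr).length) (hij : f ((aInv hr)[i]) = f ((aInv hr)[j])) : i = j := by
  by_contra hne
  -- wlog i < j
  have key : ∀ i j (hi : i < (aInv hr).length) (hj : j < (aInv hr).length), i < j →
      f ((aInv hr)[i]) = f ((aInv hr)[j]) → False := by
    intro i j hi hj hlt heq
    rw [aInv_length hr] at hi hj
    rw [aInv_getElem hr (by rw [aInv_length hr]; omega),
      aInv_getElem hr (by rw [aInv_length hr]; omega)] at heq
    by_cases hjk : j = invK hr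
    · subst hjk
      rw [invK_spec hr] at heq
      exact invK_min hr (by omega) heq
    · -- j < invK; then a (i+1) = a (j+1), contradicting nodup
      have h1 : (g ∘ f)^[i + 1] (g w₀) = (g ∘ f)^[j + 1] (g w₀) := by
        rw [Function.iterate_succ_apply', Function.iterate_succ_apply']
        simp only [Function.comp_apply]
        rw [heq]
      have hnd := aInv_nodup hr
      rw [List.nodup_iff_injective_getElem] at hnd
      have hi1 : i + 1 < (aInv hr).length := by rw [aInv_length hr]; omega
      have hj1 : j + 1 < (aInv hr).length := by rw [aInv_length hr]; omega
      have h2 : (⟨i + 1, hi1⟩ : Fin (aInv hr).length) = ⟨j + 1, hj1⟩ := by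
        apply hnd
        show (aInv hr)[i + 1]'hi1 = (aInv hr)[j + 1]'hj1
        rw [aInv_getElem hr hi1, aInv_getElem hr hj1]
        exact h1
      simp only [Fin.mk.injEq] at h2
      omega
  rcases Nat.lt_or_ge i j with h | h
  · exact key i j hi hj h hij
  · exact key j i hj hi (by omega) hij.symm

/-- the sorted list of spine vertices for the inverse map -/
noncomputable def lInv (hr : Reach f g w₀) : List V :=
  ((aInv hr).toFinset).sort (· ≤ ·)

lemma lInv_nodup (hr : Reach f g w₀) : (lInv hr).Nodup := Finset.sort_nodup _ _

lemma mem_lInv (hr : Reach f g w₀) {x : V} : x ∈ lInv hr ↔ x ∈ aInv hr := by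
  rw [lInv, Finset.mem_sort, List.mem_toFinset]

lemma lInv_length (hr : Reach f g w₀) : (lInv hr).length = (aInv hr).length := by
  rw [lInv, Finset.length_sort, List.toFinset_card_of_nodup (aInv_nodup hr)]

/-- the reconstructed original `W`-side map -/
noncomputable def gInv (hr : Reach f g w₀) : W → V := fun w =>
  if w ∈ (aInv hr).map f then
    (aInv hr).getD ((lInv hr).idxOf ((aInv hr).getD (((aInv hr).map f).idxOf w) (g w₀)))
      (g w₀)
  else g w

lemma gInv_off (hr : Reach f g w₀) {w : W} (hw : w ∉ (aInv hr).map f) : gInv hr w = g w := by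
  rw [gInv, if_neg hw]

lemma lInv_indexOf_lt (hr : Reach f g w₀) {x : V} (hx : x ∈ aInv hr) :
    (lInv hr).idxOf x < (aInv hr).length := by
  rw [← lInv_length hr]
  exact List.idxOf_lt_length_iff.mpr ((mem_lInv hr).mpr hx)

lemma gInv_spec (hr : Reach f g w₀) {j : ℕ} (hj : j < (aInv hr).length) :
    gInv hr (f ((aInv hr)[j])) =
      (aInv hr)[(lInv hr).idxOf ((aInv hr)[j])]'(lInv_indexOf_lt hr (List.getElem_mem hj)) := by
  have hmem : f ((aInv hr)[j]) ∈ (aInv hr).map f := by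
    rw [List.mem_map]
    exact ⟨_, List.getElem_mem _, rfl⟩
  rw [gInv, if_pos hmem]
  have hBnd : (aInv hr).map f = List.map f (aInv hr) := rfl
  have hBidx : ((aInv hr).map f).idxOf (f ((aInv hr)[j])) = j := by
    have hBnodup : ((aInv hr).map f).Nodup := by
      rw [List.nodup_iff_injective_getElem]
      rintro ⟨i₁, h₁⟩ ⟨i₂, h₂⟩ h12
      simp only [List.getElem_map] at h12
      rw [List.length_map] at h₁ h₂
      exact Fin.ext (aInv_f_inj hr h₁ h₂ h12)
    have : ((aInv hr).map f)[j]'(by rw [List.length_map]; exact hj) = f ((aInv hr)[j]) := by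
      rw [List.getElem_map]
    rw [← this]
    exact List.Nodup.idxOf_getElem hBnodup _ _
  rw [hBidx, List.getD_eq_getElem _ _ hj, List.getD_eq_getElem]

end Joyal3


section Joyal4

set_option linter.unusedSectionVars false

variable {V W : Type*} [Fintype V] [Fintype W] [LinearOrder V] [DecidableEq W] [Nonempty V]
variable {f : V → W} {g : W → V}

lemma invK_le (hr : Reach f g w₀) {j : ℕ} (h : f ((g ∘ f)^[j] (g w₀)) = w₀) :
    invK hr ≤ j := by
  rw [invK]
  letI := Classical.decPred fun j => f ((g ∘ f)^[j] (g w₀)) = w₀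
  exact Nat.find_le h

lemma sortPer_getElem {i : ℕ} (hi : i < (sortPer f g).length) :
    (spineA f g)[i]'(by rwa [spineA_length]) = (g ∘ f) ((sortPer f g)[i]) := by
  simp [spineA]

lemma spineA_f_inj {i j : ℕ} (hi : i < (spineA f g).length) (hj : j < (spineA f g).length)
    (hij : f ((spineA f g)[i]) = f ((spineA f g)[j])) : i = j := by
  have h1 := perV_f_inj (spineA_mem (List.getElem_mem hi)) (spineA_mem (List.getElem_mem hj)) hij
  have hnd := spineA_nodup (f := f) (g := g)
  rw [List.nodup_iff_injective_getElem] at hnd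
  have h2 : (⟨i, hi⟩ : Fin (spineA f g).length) = ⟨j, hj⟩ := by
    apply hnd
    exact h1
  simpa using h2

lemma gFwd_root : gFwd f g (rootW f g) = (spineA f g)[0]'(spineA_length_pos) := by
  have hk := spineA_length_pos (f := f) (g := g)
  have h1 : rootW f g = f ((spineA f g)[(spineA f g).length - 1]'(by omega)) := rootW_eq
  rw [h1, gFwd_spec (by omega)]
  simp only [show (spineA f g).length - 1 + 1 = (spineA f g).length from by omega, Nat.mod_self]

lemma hFwd_iterate (j : ℕ) :
    ((gFwd f g) ∘ f)^[j] ((spineA f g)[0]'(spineA_length_pos)) =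
      (spineA f g)[j % (spineA f g).length]'
        (Nat.mod_lt _ spineA_length_pos) := by
  have hk := spineA_length_pos (f := f) (g := g)
  induction j with
  | zero => simp [Nat.mod_eq_of_lt hk]
  | succ j ih =>
    rw [Function.iterate_succ_apply', ih]
    have h2 : ((gFwd f g) ∘ f) ((spineA f g)[j % (spineA f g).length]'
        (Nat.mod_lt _ hk)) =
        (spineA f g)[(j % (spineA f g).length + 1) % (spineA f g).length]'
          (Nat.mod_lt _ (by omega)) := gFwd_spec (Nat.mod_lt _ hk)
    rw [h2]
    simp only [Nat.mod_add_mod]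

lemma invK_fwd : invK (fwd_reach (f := f) (g := g)) = (spineA f g).length - 1 := by
  have hk := spineA_length_pos (f := f) (g := g)
  set k := (spineA f g).length with hkdef
  have hP : ∀ j : ℕ, (f (((gFwd f g) ∘ f)^[j] (gFwd f g (rootW f g))) = rootW f g) ↔
      j % k = k - 1 := by
    intro j
    rw [gFwd_root, hFwd_iterate j, rootW_eq]
    constructor
    · intro h
      exact spineA_f_inj (Nat.mod_lt _ hk) (by omega) h
    · intro h
      simp only [← hkdef, h]
  apply Nat.le_antisymm
  · -- ≤
    have := invK_le (fwd_reach (f := f) (g := g)) (j := k - 1)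
      ((hP (k - 1)).mpr (Nat.mod_eq_of_lt (by omega)))
    omega
  · -- ≥ : lower bound via minimality
    by_contra hlt
    push_neg at hlt
    have h2 := invK_spec (fwd_reach (f := f) (g := g))
    rw [hP _] at h2
    rw [Nat.mod_eq_of_lt (by omega)] at h2
    omega

lemma aInv_fwd : aInv (fwd_reach (f := f) (g := g)) = spineA f g := by
  have hk := spineA_length_pos (f := f) (g := g)
  have hlen : (aInv (fwd_reach (f := f) (g := g))).length = (spineA f g).length := by
    rw [aInv_length, invK_fwd]
    omega
  apply List.ext_getElem hlen
  intro j h1 h2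
  rw [aInv_getElem _ h1, gFwd_root, hFwd_iterate j]
  simp only [Nat.mod_eq_of_lt h2]

lemma lInv_fwd : lInv (fwd_reach (f := f) (g := g)) = sortPer f g := by
  rw [lInv, aInv_fwd, spineA_toFinset, sortPer]

lemma gInv_fwd : gInv (fwd_reach (f := f) (g := g)) = g := by
  funext w
  by_cases hw : w ∈ (spineA f g).map f
  · obtain ⟨x, hx, rfl⟩ := List.mem_map.mp hw
    obtain ⟨j, hj, rfl⟩ := List.mem_iff_getElem.mp hx
    have hj' : j < (aInv (fwd_reach (f := f) (g := g))).length := by rw [aInv_fwd]; exact hj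
    have h1 := gInv_spec (fwd_reach (f := f) (g := g)) hj'
    simp only [aInv_fwd, lInv_fwd] at h1
    rw [h1]
    have hmem : (spineA f g)[j] ∈ sortPer f g := mem_sortPer.mpr (spineA_mem (List.getElem_mem hj))
    have hridx : (sortPer f g).idxOf ((spineA f g)[j]) < (sortPer f g).length :=
      List.idxOf_lt_length_iff.mpr hmem
    have h3 := sortPer_getElem (f := f) (g := g) hridx
    rw [List.getElem_idxOf hridx] at h3
    rw [h3]
    rfl
  · have h1 : gInv (fwd_reach (f := f) (g := g)) (f := f) w = gFwd f g w := by
      apply gInv_off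
      rwa [aInv_fwd]
    rw [h1, gFwd, if_neg]
    rwa [spineB]

end Joyal4


section Joyal5

set_option linter.unusedSectionVars false

variable {V W : Type*} [Fintype V] [Fintype W] [LinearOrder V] [DecidableEq W] [Nonempty V]
variable {f : V → W} {g : W → V} {w₀ : W}

lemma reach_transfer_mem {α : Type*} {s s' : α → α} {R : Set α}
    (hss : ∀ x, x ∉ R → s' x = s x) (hR : ∀ u, ∃ t, s^[t] u ∈ R) :
    ∀ u, ∃ t, s'^[t] u ∈ R := by
  intro u
  obtain ⟨t, ht⟩ := hR u
  induction t generalizing u with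
  | zero => exact ⟨0, ht⟩
  | succ t ih =>
    by_cases hu : u ∈ R
    · exact ⟨0, hu⟩
    · rw [Function.iterate_succ_apply] at ht
      obtain ⟨t', ht'⟩ := ih (s u) ht
      exact ⟨t' + 1, by rw [Function.iterate_succ_apply, hss u hu]; exact ht'⟩

lemma exists_per_of_injOn {α : Type*} [Finite α] {s : α → α} {A : Set α}
    (hmaps : ∀ x ∈ A, s x ∈ A)
    (hinj : ∀ x ∈ A, ∀ y ∈ A, s x = s y → x = y) {x : α} (hx : x ∈ A) :
    ∃ n, 0 < n ∧ s^[n] x = x := by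
  obtain ⟨i, j, hne, hij⟩ := Finite.exists_ne_map_eq_of_infinite (fun n : ℕ => s^[n] x)
  have key : ∀ i j, i < j → s^[i] x = s^[j] x → ∃ n, 0 < n ∧ s^[n] x = x := by
    intro i
    induction i with
    | zero =>
      intro j hj h
      exact ⟨j, hj, h.symm⟩
    | succ i ih =>
      intro j hj h
      obtain ⟨j', rfl⟩ : ∃ j', j = j' + 1 := ⟨j - 1, by omega⟩
      rw [Function.iterate_succ_apply', Function.iterate_succ_apply'] at h
      have h2 : s^[i] x = s^[j'] x :=
        hinj _ (closed_iterate hmaps hx i) _ (closed_iterate hmaps hx j') h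
      exact ih j' (by omega) h2
  rcases Nat.lt_or_ge i j with h | h
  · exact key i j h hij
  · exact key j i (by omega) hij.symm

variable (hr : Reach f g w₀)

lemma aInv_last : f ((aInv hr)[(aInv hr).length - 1]'
    (by rw [aInv_length]; omega)) = w₀ := by
  rw [aInv_getElem hr (by rw [aInv_length]; omega), aInv_length]
  simpa using invK_spec hr

lemma w₀_mem_faInv : w₀ ∈ (aInv hr).map f := by
  rw [List.mem_map]
  exact ⟨_, List.getElem_mem _, aInv_last hr⟩

lemma gInv_f_mem {x : V} (hx : x ∈ aInv hr) : gInv hr (f x) ∈ aInv hr := by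
  obtain ⟨j, hj, rfl⟩ := List.mem_iff_getElem.mp hx
  rw [gInv_spec hr hj]
  exact List.getElem_mem _

/-- the spine set of the inverse structure -/
def spineSet (hr : Reach f g w₀) : Set (V ⊕ W) :=
  Sum.inl '' {x | x ∈ aInv hr} ∪ Sum.inr '' {w | w ∈ (aInv hr).map f}

lemma spineSet_closed : ∀ u ∈ spineSet hr, step f (gInv hr) u ∈ spineSet hr := by
  rintro u (⟨x, hx, rfl⟩ | ⟨w, hw, rfl⟩)
  · exact Or.inr ⟨f x, List.mem_map_of_mem hx, rfl⟩
  · obtain ⟨x, hx, rfl⟩ := List.mem_map.mp hw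
    exact Or.inl ⟨gInv hr (f x), gInv_f_mem hr hx, rfl⟩

lemma spineSet_agree : ∀ u, u ∉ spineSet hr → step f (gInv hr) u = step f g u := by
  intro u hu
  cases u with
  | inl v => rfl
  | inr w =>
    rw [step_inr, step_inr]
    congr 1
    apply gInv_off
    intro hw
    exact hu (Or.inr ⟨w, hw, rfl⟩)

lemma spineSet_reach_old : ∀ u, ∃ t, (step f g)^[t] u ∈ spineSet hr := by
  intro u
  obtain ⟨t, ht⟩ := hr u
  exact ⟨t, by rw [ht]; exact Or.inr ⟨w₀, w₀_mem_faInv hr, rfl⟩⟩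

lemma spineSet_reach_new : ∀ u, ∃ t, (step f (gInv hr))^[t] u ∈ spineSet hr :=
  reach_transfer_mem (spineSet_agree hr) (spineSet_reach_old hr)

lemma gInv_f_injOn {x y : V} (hx : x ∈ aInv hr) (hy : y ∈ aInv hr)
    (hxy : gInv hr (f x) = gInv hr (f y)) : x = y := by
  obtain ⟨i, hi, rfl⟩ := List.mem_iff_getElem.mp hx
  obtain ⟨j, hj, rfl⟩ := List.mem_iff_getElem.mp hy
  rw [gInv_spec hr hi, gInv_spec hr hj] at hxy
  have hnd := aInv_nodup hr
  rw [List.nodup_iff_injective_getElem] at hnd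
  have h2 : ((lInv hr).idxOf ((aInv hr)[i]) : ℕ) = (lInv hr).idxOf ((aInv hr)[j]) := by
    have := hnd (a₁ := ⟨_, lInv_indexOf_lt hr (List.getElem_mem hi)⟩)
      (a₂ := ⟨_, lInv_indexOf_lt hr (List.getElem_mem hj)⟩) hxy
    exact congrArg Fin.val this
  have hmi : (aInv hr)[i] ∈ lInv hr := (mem_lInv hr).mpr (List.getElem_mem hi)
  have hmj : (aInv hr)[j] ∈ lInv hr := (mem_lInv hr).mpr (List.getElem_mem hj)
  have h3 := List.getElem_idxOf (List.idxOf_lt_length_iff.mpr hmi)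
  have h4 := List.getElem_idxOf (List.idxOf_lt_length_iff.mpr hmj)
  rw [← h3, ← h4]
  simp only [h2]

lemma perSet_inv : perSet f (gInv hr) = (aInv hr).toFinset := by
  ext v
  rw [mem_perSet, List.mem_toFinset]
  constructor
  · intro hper
    have hmem : (Sum.inl v : V ⊕ W) ∈ spineSet hr :=
      per_mem_closed (spineSet_closed hr) (spineSet_reach_new hr _) hper
    rcases hmem with ⟨x, hx, hxx⟩ | ⟨w, _, hww⟩
    · rw [show x = v from Sum.inl.inj hxx] at hx
      exact hx
    · exact absurd hww (by simp)
  · intro hv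
    rw [per_inl_iff]
    obtain ⟨n, hn, hnn⟩ := exists_per_of_injOn (A := {x | x ∈ aInv hr})
      (fun x hx => gInv_f_mem hr hx)
      (fun x hx y hy h => gInv_f_injOn hr hx hy h) hv
    exact ⟨n, hn, hnn⟩

lemma sortPer_inv : sortPer f (gInv hr) = lInv hr := by
  rw [sortPer, perSet_inv, lInv]

lemma spineA_inv : spineA f (gInv hr) = aInv hr := by
  have hlen : (spineA f (gInv hr)).length = (aInv hr).length := by
    rw [spineA_length, sortPer_inv, lInv_length]
  apply List.ext_getElem hlen
  intro j h1 h2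
  have hj' : j < (sortPer f (gInv hr)).length := by rwa [← spineA_length]
  rw [sortPer_getElem hj']
  have hjl : j < (lInv hr).length := by rw [lInv_length]; exact h2
  have hmem : (lInv hr)[j] ∈ aInv hr := (mem_lInv hr).mp (List.getElem_mem hjl)
  obtain ⟨i, hi, hij⟩ := List.mem_iff_getElem.mp hmem
  have hsl : (sortPer f (gInv hr))[j]'hj' = (aInv hr)[i] := by
    simp only [sortPer_inv]
    exact hij.symm
  rw [hsl]
  have hspec := gInv_spec hr hi
  have : (gInv hr ∘ f) ((aInv hr)[i]) = (aInv hr)[(lInv hr).idxOf ((aInv hr)[i])]'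
      (lInv_indexOf_lt hr (List.getElem_mem hi)) := hspec
  rw [this]
  have hidx : (lInv hr).idxOf ((aInv hr)[i]) = j := by
    rw [hij]
    exact List.Nodup.idxOf_getElem (lInv_nodup hr) _ _
  simp only [hidx]

lemma rootW_inv : rootW f (gInv hr) = w₀ := by
  rw [rootW]
  have hlen : (spineA f (gInv hr)).length = (aInv hr).length := by rw [spineA_inv]
  have hpos : 0 < (aInv hr).length := by rw [aInv_length]; omega
  rw [List.getD_eq_getElem _ _ (by omega)]
  have : (spineA f (gInv hr))[(spineA f (gInv hr)).length - 1]'(by omega) =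
      (aInv hr)[(aInv hr).length - 1]'(by omega) := by
    simp only [spineA_inv]
  rw [this]
  exact aInv_last hr

lemma faInv_nodup : ((aInv hr).map f).Nodup := by
  rw [List.nodup_iff_injective_getElem]
  rintro ⟨i₁, h₁⟩ ⟨i₂, h₂⟩ h12
  simp only [List.getElem_map] at h12
  rw [List.length_map] at h₁ h₂
  exact Fin.ext (aInv_f_inj hr h₁ h₂ h12)

lemma gFwd_inv : gFwd f (gInv hr) = g := by
  have hlen : (spineA f (gInv hr)).length = (aInv hr).length := by rw [spineA_inv]
  have hpos : 0 < (aInv hr).length := by rw [aInv_length]; omega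
  have hBeq : spineB f (gInv hr) = (aInv hr).map f := by
    rw [spineB, spineA_inv]
  funext w
  by_cases hw : w ∈ (aInv hr).map f
  · obtain ⟨x, hx, rfl⟩ := List.mem_map.mp hw
    obtain ⟨i, hi, rfl⟩ := List.mem_iff_getElem.mp hx
    rw [gFwd, if_pos (by rw [hBeq]; exact hw)]
    have hidx : (spineB f (gInv hr)).idxOf (f ((aInv hr)[i])) = i := by
      rw [hBeq]
      have : ((aInv hr).map f)[i]'(by rw [List.length_map]; exact hi) = f ((aInv hr)[i]) :=
        List.getElem_map f
      rw [← this]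
      exact List.Nodup.idxOf_getElem (faInv_nodup hr) _ _
    rw [hidx]
    rw [List.getD_eq_getElem _ _ (by rw [hlen]; exact Nat.mod_lt _ hpos)]
    have hgoal : (spineA f (gInv hr))[(i + 1) % (spineA f (gInv hr)).length]'
        (Nat.mod_lt _ (by omega)) =
        (aInv hr)[(i + 1) % (aInv hr).length]'(Nat.mod_lt _ hpos) := by
      simp only [spineA_inv]
    rw [hgoal]
    by_cases hik : i = (aInv hr).length - 1
    · subst hik
      have hw0 : f ((aInv hr)[(aInv hr).length - 1]'hi) = w₀ := aInv_last hr
      rw [hw0]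
      have hmod : ((aInv hr).length - 1 + 1) % (aInv hr).length = 0 := by
        rw [show (aInv hr).length - 1 + 1 = (aInv hr).length from by omega, Nat.mod_self]
      simp only [hmod]
      rw [aInv_getElem hr (by omega)]
      simp
    · have hi1 : i + 1 < (aInv hr).length := by omega
      have hmod : (i + 1) % (aInv hr).length = i + 1 := Nat.mod_eq_of_lt hi1
      simp only [hmod]
      rw [aInv_getElem hr hi1, aInv_getElem hr hi, Function.iterate_succ_apply']
      rfl
  · rw [gFwd, if_neg (by rw [hBeq]; exact hw)]
    exact gInv_off hr hw

end Joyal5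


section Final

set_option linter.unusedSectionVars false

open SimpleGraph

variable {V W : Type*} [Fintype V] [Fintype W] [LinearOrder V] [DecidableEq W] [Nonempty V]

lemma sigma_rooted_ext {w₁ w₂ : W} {p₁ : RootedSub V W w₁} {p₂ : RootedSub V W w₂}
    (hw : w₁ = w₂) (hp : p₁.1 = p₂.1) :
    (⟨w₁, p₁⟩ : Σ w, RootedSub V W w) = ⟨w₂, p₂⟩ := by
  subst hw
  congr 1
  exact Subtype.ext hp

/-- the Joyal-style bijection -/
noncomputable def equivB : ((V → W) × (W → V)) ≃ Σ w₀ : W, RootedSub V W w₀ where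
  toFun p := ⟨rootW p.1 p.2, ⟨(p.1, gFwd p.1 p.2), fwd_reach⟩⟩
  invFun x := (x.2.1.1, gInv x.2.2)
  left_inv p := by
    obtain ⟨f, g⟩ := p
    exact Prod.ext rfl gInv_fwd
  right_inv x := by
    obtain ⟨w₀, ⟨⟨f, g⟩, hr⟩⟩ := x
    exact sigma_rooted_ext (rootW_inv hr) (Prod.ext rfl (gFwd_inv hr))

lemma card_rootedSub (w₀ : W) :
    Nat.card (RootedSub V W w₀) = Nat.card (TreeSub V W) * Fintype.card V := by
  rw [Nat.card_congr (equivA w₀), Nat.card_prod, Nat.card_eq_fintype_card (α := V)]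

lemma card_main :
    Fintype.card W ^ Fintype.card V * Fintype.card V ^ Fintype.card W =
      Fintype.card W * (Nat.card (TreeSub V W) * Fintype.card V) := by
  haveI : ∀ w₀ : W, Finite (RootedSub V W w₀) := fun _ => Subtype.finite
  haveI : ∀ w₀ : W, Fintype (RootedSub V W w₀) := fun _ => Fintype.ofFinite _
  have h1 : Nat.card ((V → W) × (W → V)) = Nat.card (Σ w₀ : W, RootedSub V W w₀) :=
    Nat.card_congr equivB
  rw [Nat.card_prod, Nat.card_fun, Nat.card_fun] at h1
  simp only [Nat.card_eq_fintype_card] at h1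
  rw [Fintype.card_sigma] at h1
  have h2 : ∀ w₀ : W, Fintype.card (RootedSub V W w₀) =
      Nat.card (TreeSub V W) * Fintype.card V := by
    intro w₀
    rw [← Nat.card_eq_fintype_card, card_rootedSub]
  rw [Finset.sum_congr rfl (fun w₀ _ => h2 w₀), Finset.sum_const, Finset.card_univ,
    smul_eq_mul] at h1
  exact h1

end Final

section Conclusion

open SimpleGraph

lemma card_treeSub {V W : Type*} [Fintype V] [Fintype W]
    (hm : 1 ≤ Fintype.card V) (hn : 1 ≤ Fintype.card W) :
    Nat.card (TreeSub V W) =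
      Fintype.card V ^ (Fintype.card W - 1) * Fintype.card W ^ (Fintype.card V - 1) := by
  letI : LinearOrder V := LinearOrder.lift' (fun v => (Fintype.equivFin V v : Fin _))
    (Fintype.equivFin V).injective
  letI : DecidableEq W := Classical.decEq W
  haveI : Nonempty V := Fintype.card_pos_iff.mp hm
  haveI : Nonempty W := Fintype.card_pos_iff.mp hn
  set m := Fintype.card V with hmm
  set n := Fintype.card W with hnn
  set t := Nat.card (TreeSub V W) with ht
  have h1 : n ^ m * m ^ n = n * (t * m) := card_main
  have e1 : n ^ m = n ^ (m - 1) * n := by rw [← pow_succ]; congr 1; omega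
  have e2 : m ^ n = m ^ (n - 1) * m := by rw [← pow_succ]; congr 1; omega
  have h2 : (n * m) * t = (n * m) * (m ^ (n - 1) * n ^ (m - 1)) := by
    rw [e1, e2] at h1
    calc (n * m) * t = n * (t * m) := by ring
      _ = n ^ (m - 1) * n * (m ^ (n - 1) * m) := h1.symm
      _ = (n * m) * (m ^ (n - 1) * n ^ (m - 1)) := by ring
  have hpos : 0 < n * m := by positivity
  exact Nat.eq_of_mul_eq_mul_left hpos h2

end Conclusion

end Stmt11

/-- The number of spanning trees of the complete bipartite graph K_{m,n} is
m^(n-1) · n^(m-1). -/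
theorem stmt_11 {V W : Type*} [Fintype V] [Fintype W]
    (hm : 1 ≤ Fintype.card V) (hn : 1 ≤ Fintype.card W) :
    Nat.card {T : SimpleGraph (V ⊕ W) //
        T ≤ completeBipartiteGraph V W ∧ T.IsTree} =
      Fintype.card V ^ (Fintype.card W - 1) *
        Fintype.card W ^ (Fintype.card V - 1) := by
  exact Stmt11.card_treeSub hm hn
end

section
/- In Algorithm 2’s branching step: if (x, y) is a vertex of the single-sink LP polytope with exactly two fractional components y_{i1}, y_{i2} where s_{i1} ≥ s_{i2}, then the point (x¹, y¹) defined by x¹_{i1} = x_{i1} + x_{i2}, x¹_{i2} = 0, y¹_{i1} = 1, y¹_{i2} = 0 (all other coordinates unchanged) is a feasible integral solution, and its cost satisfies cᵀx¹ + fᵀy¹ ≤ (cᵀx + fᵀy) + (c_{i1} s_{i1} + f_{i1}). -/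
open scoped Classical

lemma sum_mul_update2 {ι : Type*} [Fintype ι] [DecidableEq ι]
    (w g : ι → ℝ) (i₁ i₂ : ι) (h : i₁ ≠ i₂) (a b : ℝ) :
    ∑ i, w i * Function.update (Function.update g i₁ a) i₂ b i
      = w i₂ * b + w i₁ * a
        + ∑ i ∈ (Finset.univ.erase i₂).erase i₁, w i * g i := by
  rw [← Finset.sum_erase_add _ _ (Finset.mem_univ i₂),
      ← Finset.sum_erase_add _ _ (Finset.mem_erase.mpr ⟨h, Finset.mem_univ i₁⟩)]
  have h1 : Function.update (Function.update g i₁ a) i₂ b i₂ = b :=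
    Function.update_self _ _ _
  have h2 : Function.update (Function.update g i₁ a) i₂ b i₁ = a := by
    rw [Function.update_of_ne h, Function.update_self]
  rw [h1, h2]
  have : ∀ i ∈ (Finset.univ.erase i₂).erase i₁,
      w i * Function.update (Function.update g i₁ a) i₂ b i = w i * g i := by
    intro i hi
    rcases Finset.mem_erase.mp hi with ⟨hi1, hi'⟩
    rcases Finset.mem_erase.mp hi' with ⟨hi2, _⟩
    rw [Function.update_of_ne hi2, Function.update_of_ne hi1]
  rw [Finset.sum_congr rfl this]
  ring

lemma sum_split2 {ι : Type*} [Fintype ι] [DecidableEq ι]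
    (w g : ι → ℝ) (i₁ i₂ : ι) (h : i₁ ≠ i₂) :
    ∑ i, w i * g i
      = w i₂ * g i₂ + w i₁ * g i₁
        + ∑ i ∈ (Finset.univ.erase i₂).erase i₁, w i * g i := by
  rw [← Finset.sum_erase_add _ _ (Finset.mem_univ i₂),
      ← Finset.sum_erase_add _ _ (Finset.mem_erase.mpr ⟨h, Finset.mem_univ i₁⟩)]
  ring

/-- Algorithm 2's branching step: rounding the two fractional components of a
vertex of the single-sink LP polytope (shipping everything to the larger
facility) yields a feasible integral solution whose cost exceeds the vertex
cost by at most c_{i1} s_{i1} + f_{i1}. -/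
theorem stmt_13 {ι : Type*} [Fintype ι] [DecidableEq ι]
    (s c f : ι → ℝ) (d : ℝ) (k : ℤ)
    (hs : ∀ i, 1 ≤ s i) (hc : ∀ i, 0 ≤ c i) (hf : ∀ i, 0 ≤ f i)
    (P : Set ((ι → ℝ) × (ι → ℝ)))
    (hP : P = {p | (∑ i, p.1 i) = d ∧ (∑ i, p.2 i) = (k : ℝ) ∧
      (∀ i, 0 ≤ p.1 i ∧ p.1 i ≤ s i * p.2 i) ∧
      (∀ i, 0 ≤ p.2 i ∧ p.2 i ≤ 1)})
    (x y : ι → ℝ) (hvx : (x, y) ∈ P.extremePoints ℝ)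
    (i₁ i₂ : ι) (hne : i₁ ≠ i₂)
    (hfrac₁ : 0 < y i₁ ∧ y i₁ < 1) (hfrac₂ : 0 < y i₂ ∧ y i₂ < 1)
    (hint : ∀ i, i ≠ i₁ → i ≠ i₂ → y i = 0 ∨ y i = 1)
    (hss : s i₂ ≤ s i₁) :
    let x₁ := Function.update (Function.update x i₁ (x i₁ + x i₂)) i₂ 0
    let y₁ := Function.update (Function.update y i₁ 1) i₂ 0
    (∀ i, y₁ i = 0 ∨ y₁ i = 1) ∧
    (∑ i, y₁ i) = (k : ℝ) ∧
    (∀ i, 0 ≤ x₁ i ∧ x₁ i ≤ s i * y₁ i) ∧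
    (∑ i, x₁ i) = d ∧
    (∑ i, c i * x₁ i) + (∑ i, f i * y₁ i) ≤
      ((∑ i, c i * x i) + (∑ i, f i * y i)) + (c i₁ * s i₁ + f i₁) := by
  intro x₁ y₁
  have hmem : (x, y) ∈ P := hvx.1
  rw [hP] at hmem
  obtain ⟨hxd, hyk, hxy, hy01⟩ := hmem
  simp only at hxd hyk hxy hy01
  -- key integrality: y i₁ + y i₂ = 1
  set E := (Finset.univ.erase i₂).erase i₁ with hE
  have hsplit_y : ∑ i, y i = y i₂ + y i₁ + ∑ i ∈ E, y i := by
    have := sum_split2 (fun _ => (1:ℝ)) y i₁ i₂ hne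
    simpa using this
  have hZ : ∃ m : ℤ, ∑ i ∈ E, y i = (m : ℝ) := by
    refine Finset.sum_induction y (fun r => ∃ m : ℤ, r = (m : ℝ)) ?_ ⟨0, by simp⟩ ?_
    · rintro a b ⟨ma, rfl⟩ ⟨mb, rfl⟩; exact ⟨ma + mb, by push_cast; ring⟩
    · intro i hi
      rcases Finset.mem_erase.mp hi with ⟨hi1, hi'⟩
      rcases Finset.mem_erase.mp hi' with ⟨hi2, _⟩
      rcases hint i hi1 hi2 with h | h
      · exact ⟨0, by simp [h]⟩
      · exact ⟨1, by simp [h]⟩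
  obtain ⟨m, hm⟩ := hZ
  have hsum1 : y i₁ + y i₂ = 1 := by
    have h1 : y i₁ + y i₂ = ((k - m : ℤ) : ℝ) := by
      push_cast
      rw [hsplit_y] at hyk
      linarith [hm ▸ hyk]
    have h0 : (0 : ℝ) < ((k - m : ℤ) : ℝ) := by rw [← h1]; linarith [hfrac₁.1, hfrac₂.1]
    have h2 : ((k - m : ℤ) : ℝ) < 2 := by rw [← h1]; linarith [hfrac₁.2, hfrac₂.2]
    have : (0 : ℤ) < k - m := by exact_mod_cast h0
    have : k - m < 2 := by exact_mod_cast h2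
    have : k - m = 1 := by omega
    rw [h1, this]; norm_num
  -- values of y₁, x₁
  have hy₁2 : y₁ i₂ = 0 := Function.update_self _ _ _
  have hy₁1 : y₁ i₁ = 1 := by
    show Function.update (Function.update y i₁ 1) i₂ 0 i₁ = 1
    rw [Function.update_of_ne hne, Function.update_self]
  have hy₁o : ∀ i, i ≠ i₁ → i ≠ i₂ → y₁ i = y i := by
    intro i h1 h2
    show Function.update (Function.update y i₁ 1) i₂ 0 i = y i
    rw [Function.update_of_ne h2, Function.update_of_ne h1]
  have hx₁2 : x₁ i₂ = 0 := Function.update_self _ _ _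
  have hx₁1 : x₁ i₁ = x i₁ + x i₂ := by
    show Function.update (Function.update x i₁ (x i₁ + x i₂)) i₂ 0 i₁ = _
    rw [Function.update_of_ne hne, Function.update_self]
  have hx₁o : ∀ i, i ≠ i₁ → i ≠ i₂ → x₁ i = x i := by
    intro i h1 h2
    show Function.update (Function.update x i₁ (x i₁ + x i₂)) i₂ 0 i = x i
    rw [Function.update_of_ne h2, Function.update_of_ne h1]
  refine ⟨?_, ?_, ?_, ?_, ?_⟩
  · intro i
    by_cases h2 : i = i₂
    · subst h2; left; exact hy₁2
    by_cases h1 : i = i₁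
    · subst h1; right; exact hy₁1
    · rw [hy₁o i h1 h2]; exact hint i h1 h2
  · have := sum_mul_update2 (fun _ => (1:ℝ)) y i₁ i₂ hne 1 0
    simp only [one_mul] at this hsplit_y ⊢
    show ∑ i, Function.update (Function.update y i₁ 1) i₂ 0 i = (k : ℝ)
    rw [this, ← hyk, hsplit_y]
    linarith [hsum1]
  · intro i
    by_cases h2 : i = i₂
    · subst h2; rw [hx₁2, hy₁2]; constructor <;> simp
    by_cases h1 : i = i₁
    · rw [h1, hx₁1, hy₁1]
      constructor
      · linarith [(hxy i₁).1, (hxy i₂).1]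
      · have h2' : x i₂ ≤ s i₁ * y i₂ := by
          calc x i₂ ≤ s i₂ * y i₂ := (hxy i₂).2
          _ ≤ s i₁ * y i₂ := mul_le_mul_of_nonneg_right hss (le_of_lt hfrac₂.1)
        have := (hxy i₁).2
        have : x i₁ + x i₂ ≤ s i₁ * (y i₁ + y i₂) := by rw [mul_add]; linarith
        rw [hsum1] at this; linarith
    · rw [hx₁o i h1 h2, hy₁o i h1 h2]; exact hxy i
  · show ∑ i, x₁ i = d
    have h1 := sum_mul_update2 (fun _ => (1:ℝ)) x i₁ i₂ hne (x i₁ + x i₂) 0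
    have h2 := sum_split2 (fun _ => (1:ℝ)) x i₁ i₂ hne
    simp only [one_mul] at h1 h2
    show ∑ i, Function.update (Function.update x i₁ (x i₁ + x i₂)) i₂ 0 i = d
    rw [h1, ← hxd, h2]; ring
  · have hcx := sum_mul_update2 c x i₁ i₂ hne (x i₁ + x i₂) 0
    have hcx' := sum_split2 c x i₁ i₂ hne
    have hfy := sum_mul_update2 f y i₁ i₂ hne 1 0
    have hfy' := sum_split2 f y i₁ i₂ hne
    show (∑ i, c i * Function.update (Function.update x i₁ (x i₁ + x i₂)) i₂ 0 i)
        + (∑ i, f i * Function.update (Function.update y i₁ 1) i₂ 0 i) ≤ _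
    rw [hcx, hfy, hcx', hfy']
    have hx2s : x i₂ ≤ s i₁ := by
      calc x i₂ ≤ s i₂ * y i₂ := (hxy i₂).2
      _ ≤ s i₂ * 1 := mul_le_mul_of_nonneg_left (le_of_lt hfrac₂.2)
            (le_trans zero_le_one (hs i₂))
      _ ≤ s i₁ := by linarith
    have h1 : c i₁ * x i₂ ≤ c i₁ * s i₁ := mul_le_mul_of_nonneg_left hx2s (hc i₁)
    have h2 : 0 ≤ c i₂ * x i₂ := mul_nonneg (hc i₂) (hxy i₂).1
    have h3 : 0 ≤ f i₂ * y i₂ := mul_nonneg (hf i₂) (le_of_lt hfrac₂.1)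
    have h4 : 0 ≤ f i₁ * y i₁ := mul_nonneg (hf i₁) (le_of_lt hfrac₁.1)
    nlinarith [mul_le_mul_of_nonneg_left (le_of_lt hfrac₁.2) (hf i₁)]
end

section
/- Suppose nonnegative reals satisfy OPT(I₀) ≥ OPT(I₁) + k·f, COST(x',y') ≤ β·OPT(I₁), OPT(I₂) ≤ OPT(I₀) + COST(x',y'), and COST(x*,y*) ≤ COST(x',y') + OPT(I₂) + δ·k·f, where β ≥ 1, δ ≥ 1, f ≥ 0, k ≥ 1. Then COST(x*,y*) ≤ (1 + 2β)(OPT(I₀) − k·f) + (δ + 1)·k·f, and consequently COST(x*,y*) ≤ max{2β + 1, δ + 1}·OPT(I₀). -/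
/-- Cost-chaining inequality from Theorem 6's proof: a (β,δ)-approximation for
k-median yields a max{2β+1, δ+1}-approximation for CFL with uniform opening cost. -/
theorem stmt_15 (OPT0 OPT1 OPT2 COST' COSTstar β δ k f : ℝ)
    (hOPT0 : 0 ≤ OPT0) (hOPT1 : 0 ≤ OPT1) (hOPT2 : 0 ≤ OPT2)
    (hC' : 0 ≤ COST') (hCs : 0 ≤ COSTstar)
    (hβ : 1 ≤ β) (hδ : 1 ≤ δ) (hk : 1 ≤ k) (hf : 0 ≤ f)
    (h1 : OPT1 + k * f ≤ OPT0)
    (h2 : COST' ≤ β * OPT1)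
    (h3 : OPT2 ≤ OPT0 + COST')
    (h4 : COSTstar ≤ COST' + OPT2 + δ * k * f) :
    COSTstar ≤ (1 + 2 * β) * (OPT0 - k * f) + (δ + 1) * (k * f) ∧
      COSTstar ≤ max (2 * β + 1) (δ + 1) * OPT0 := by
  have hkf : 0 ≤ k * f := by positivity
  have p1 : COSTstar ≤ (1 + 2 * β) * (OPT0 - k * f) + (δ + 1) * (k * f) := by
    nlinarith [mul_le_mul_of_nonneg_left h1 (by linarith : (0:ℝ) ≤ 2 * β)]
  refine ⟨p1, ?_⟩
  have ha : 2 * β + 1 ≤ max (2 * β + 1) (δ + 1) := le_max_left _ _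
  have hb : δ + 1 ≤ max (2 * β + 1) (δ + 1) := le_max_right _ _
  have h5 : 0 ≤ OPT0 - k * f := by linarith
  nlinarith [mul_le_mul_of_nonneg_right ha h5, mul_le_mul_of_nonneg_right hb hkf]
end

section
/- If the scaled optimum satisfies Scaled_cost(x,y) ≤ ∑_{i∈F₁*} ⌊C_i/W⌋ + x*_{t⁰} c_{t⁰}/W + f_{t⁰}/W, and Cost(x,y) ≤ W·Scaled_cost(x,y) + kW, and W = ε·C⁰/k with C⁰ ≤ OPT, where OPT = ∑_{i∈F₁*} C_i + x*_{t⁰} c_{t⁰} + f_{t⁰}, then Cost(x,y) ≤ (1 + ε)·OPT. -/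
/-- Accuracy analysis of the FPTAS: if the scaled optimum is at most the scaled
cost of an optimal solution, then the returned cost is within (1+ε) of OPT. -/
theorem stmt_18 {ι : Type*} (F₁s : Finset ι) (C : ι → ℝ) (xt ct ft ε C0 W : ℝ)
    (k : ℕ) (Scaled Cost : ℝ)
    (hC : ∀ i ∈ F₁s, 0 ≤ C i) (hx : 0 ≤ xt) (hc : 0 ≤ ct) (hf : 0 ≤ ft)
    (hε : 0 < ε) (hk : 1 ≤ k)
    (hC0pos : 0 < C0)
    (hC0 : C0 ≤ (∑ i ∈ F₁s, C i) + xt * ct + ft)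
    (hW : W = ε * C0 / k)
    (hScaled : Scaled ≤ (∑ i ∈ F₁s, (⌊C i / W⌋ : ℝ)) + xt * (ct / W) + ft / W)
    (hCost : Cost ≤ W * Scaled + k * W) :
    Cost ≤ (1 + ε) * ((∑ i ∈ F₁s, C i) + xt * ct + ft) := by
  have hkpos : (0:ℝ) < k := by exact_mod_cast Nat.lt_of_lt_of_le Nat.zero_lt_one hk
  have hWpos : 0 < W := by
    rw [hW]; positivity
  have hfloor : (∑ i ∈ F₁s, (⌊C i / W⌋ : ℝ)) ≤ ∑ i ∈ F₁s, C i / W := by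
    apply Finset.sum_le_sum
    intro i _
    exact Int.floor_le _
  have h1 : W * Scaled ≤ (∑ i ∈ F₁s, C i) + xt * ct + ft := by
    have : Scaled ≤ (∑ i ∈ F₁s, C i / W) + xt * (ct / W) + ft / W := by
      linarith
    calc W * Scaled ≤ W * ((∑ i ∈ F₁s, C i / W) + xt * (ct / W) + ft / W) :=
          mul_le_mul_of_nonneg_left this hWpos.le
      _ = (∑ i ∈ F₁s, C i) + xt * ct + ft := by
          rw [mul_add, mul_add, Finset.mul_sum]
          have hs : ∀ i ∈ F₁s, W * (C i / W) = C i := fun i _ => by field_simp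
          rw [Finset.sum_congr rfl hs]
          field_simp
  have hkW : (k : ℝ) * W = ε * C0 := by
    rw [hW]; field_simp
  have h2 : ε * C0 ≤ ε * ((∑ i ∈ F₁s, C i) + xt * ct + ft) :=
    mul_le_mul_of_nonneg_left hC0 hε.le
  nlinarith [h1, h2, hCost, hkW]
end
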